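/- arXiv:0802.1234 — 6 statements merged into one kernel-verified Lean document; each statement's English description precedes it below -/
import Mathlib

section
/- If f : ℝ → ℝ is convex on a convex set K ⊆ ℝ, then its perspective g(x,t) = t·f(x/t), defined on {(x,t) : t > 0, x/t ∈ K}, is jointly convex: for 0 ≤ c ≤ 1 and (x₁,t₁),(x₂,t₂) in the domain, g(c·x₁+(1-c)·x₂, c·t₁+(1-c)·t₂) ≤ c·g(x₁,t₁) + (1-c)·g(x₂,t₂). -/
/-- The perspective `g (x, t) = t * f (x / t)` of a convex function `f` on a convex set
`K ⊆ ℝ` is jointly convex on `{(x, t) | t > 0 ∧ x / t ∈ K}`. -/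
theorem perspective_jointly_convex (K : Set ℝ) (hK : Convex ℝ K) (f : ℝ → ℝ)
    (hf : ConvexOn ℝ K f) (g : ℝ × ℝ → ℝ)
    (hg : ∀ x t : ℝ, 0 < t → x / t ∈ K → g (x, t) = t * f (x / t))
    (c : ℝ) (hc0 : 0 ≤ c) (hc1 : c ≤ 1)
    (x₁ t₁ x₂ t₂ : ℝ) (ht₁ : 0 < t₁) (ht₂ : 0 < t₂)
    (hx₁ : x₁ / t₁ ∈ K) (hx₂ : x₂ / t₂ ∈ K) :
    g (c * x₁ + (1 - c) * x₂, c * t₁ + (1 - c) * t₂) ≤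
      c * g (x₁, t₁) + (1 - c) * g (x₂, t₂) := by
  set t : ℝ := c * t₁ + (1 - c) * t₂ with ht_def
  have ht : 0 < t := by
    rw [ht_def]
    rcases eq_or_lt_of_le hc0 with h | h
    · rw [← h]; linarith
    · nlinarith [mul_pos h ht₁, mul_nonneg (by linarith : (0:ℝ) ≤ 1 - c) ht₂.le]
  set a : ℝ := c * t₁ / t with ha_def
  set b : ℝ := (1 - c) * t₂ / t with hb_def
  have ha : 0 ≤ a := div_nonneg (mul_nonneg hc0 ht₁.le) ht.le
  have hb : 0 ≤ b := by
    apply div_nonneg _ ht.le; nlinarith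
  have hab : a + b = 1 := by
    rw [ha_def, hb_def]
    field_simp
    rw [ht_def]
  have hcomb : (c * x₁ + (1 - c) * x₂) / t = a * (x₁ / t₁) + b * (x₂ / t₂) := by
    rw [ha_def, hb_def]
    field_simp
  have hmem : (c * x₁ + (1 - c) * x₂) / t ∈ K := by
    rw [hcomb]; exact hK hx₁ hx₂ ha hb hab
  rw [hg _ _ ht hmem, hg _ _ ht₁ hx₁, hg _ _ ht₂ hx₂, hcomb]
  have := hf.2 hx₁ hx₂ ha hb hab
  have h1 : t * f (a * (x₁ / t₁) + b * (x₂ / t₂)) ≤ t * (a * f (x₁ / t₁) + b * f (x₂ / t₂)) :=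
    mul_le_mul_of_nonneg_left this ht.le
  calc t * f (a * (x₁ / t₁) + b * (x₂ / t₂)) ≤ t * (a * f (x₁ / t₁) + b * f (x₂ / t₂)) := h1
    _ = c * (t₁ * f (x₁ / t₁)) + (1 - c) * (t₂ * f (x₂ / t₂)) := by
        rw [ha_def, hb_def]; field_simp
end

section
/- (Hansen–Pedersen–Jensen, affine version) If f : [a,b] → ℝ is matrix convex, T₁, T₂ are n×n self-adjoint matrices with spectra in [a,b], and A, B are n×n matrices with A*A + B*B = I, then f(A*T₁A + B*T₂B) ≤ A*f(T₁)A + B*f(T₂)B in the Loewner order. -/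
open Matrix ComplexOrder

/-- `f` is matrix convex on `I`: for every `n` and all Hermitian `n × n` matrices with
spectra in `I`, `f (c • S + (1 - c) • T) ≤ c • f S + (1 - c) • f T` in the Loewner order,
where `f` is applied via the continuous functional calculus. -/
def MatrixConvexOn (I : Set ℝ) (f : ℝ → ℝ) : Prop :=
  ∀ (m : ℕ) (S T : Matrix (Fin m) (Fin m) ℂ), S.IsHermitian → T.IsHermitian →
    spectrum ℝ S ⊆ I → spectrum ℝ T ⊆ I → ∀ c : ℝ, 0 ≤ c → c ≤ 1 →
    (c • cfc f S + (1 - c) • cfc f T - cfc f (c • S + (1 - c) • T)).PosSemidef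

section HPJHelpers

variable {ι κ : Type*} [Fintype ι] [DecidableEq ι] [Fintype κ] [DecidableEq κ]

/-- Master lemma: if two (continuous) linear maps agree on all powers of two Hermitian
matrices with spectra in `[a, b]`, then they agree on the continuous functional calculus
applied to these matrices, for any `f` continuous on `[a, b]`.  This is proved by
Weierstrass approximation. -/
lemma hpj_cfc_linear_comm {W : Type*} [AddCommGroup W] [Module ℝ W] [TopologicalSpace W]
    [IsTopologicalAddGroup W] [ContinuousSMul ℝ W] [T2Space W]
    {a b : ℝ} (hab : a ≤ b) {f : ℝ → ℝ} (hf : ContinuousOn f (Set.Icc a b))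
    (M : Matrix ι ι ℂ) (X : Matrix κ κ ℂ) (hM : M.IsHermitian) (hX : X.IsHermitian)
    (hsM : spectrum ℝ M ⊆ Set.Icc a b) (hsX : spectrum ℝ X ⊆ Set.Icc a b)
    (L₁ : Matrix ι ι ℂ →ₗ[ℝ] W) (L₂ : Matrix κ κ ℂ →ₗ[ℝ] W)
    (hpow : ∀ k : ℕ, L₁ (M ^ k) = L₂ (X ^ k)) :
    L₁ (cfc f M) = L₂ (cfc f X) := by
  have hM' : IsSelfAdjoint M := hM
  have hX' : IsSelfAdjoint X := hX
  let e₁ : C(spectrum ℝ M, Set.Icc a b) :=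
    ⟨fun x => ⟨(x : ℝ), hsM x.2⟩, Continuous.subtype_mk continuous_subtype_val _⟩
  let e₂ : C(spectrum ℝ X, Set.Icc a b) :=
    ⟨fun x => ⟨(x : ℝ), hsX x.2⟩, Continuous.subtype_mk continuous_subtype_val _⟩
  have key₁ : ∀ g : C(Set.Icc a b, ℝ),
      cfcHom hM' (g.comp e₁) = cfc (fun x => g (Set.projIcc a b hab x)) M := by
    intro g
    rw [cfc_apply (fun x => g (Set.projIcc a b hab x)) M hM'
      ((g.continuous.comp continuous_projIcc).continuousOn)]
    congr 1
    ext x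
    simp only [ContinuousMap.comp_apply, ContinuousMap.coe_mk, Set.restrict_apply]
    congr 1
    exact (Set.projIcc_of_mem hab (hsM x.2)).symm
  have key₂ : ∀ g : C(Set.Icc a b, ℝ),
      cfcHom hX' (g.comp e₂) = cfc (fun x => g (Set.projIcc a b hab x)) X := by
    intro g
    rw [cfc_apply (fun x => g (Set.projIcc a b hab x)) X hX'
      ((g.continuous.comp continuous_projIcc).continuousOn)]
    congr 1
    ext x
    simp only [ContinuousMap.comp_apply, ContinuousMap.coe_mk, Set.restrict_apply]
    congr 1
    exact (Set.projIcc_of_mem hab (hsX x.2)).symm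
  let Φ₁ : C(Set.Icc a b, ℝ) → W := fun g => L₁ (cfcHom hM' (g.comp e₁))
  let Φ₂ : C(Set.Icc a b, ℝ) → W := fun g => L₂ (cfcHom hX' (g.comp e₂))
  have hcont₁ : Continuous Φ₁ :=
    (LinearMap.continuous_of_finiteDimensional L₁).comp
      ((cfcHom_isClosedEmbedding hM').continuous.comp (ContinuousMap.continuous_precomp e₁))
  have hcont₂ : Continuous Φ₂ :=
    (LinearMap.continuous_of_finiteDimensional L₂).comp
      ((cfcHom_isClosedEmbedding hX').continuous.comp (ContinuousMap.continuous_precomp e₂))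
  have hdense : Dense (polynomialFunctions (Set.Icc a b) : Set C(Set.Icc a b, ℝ)) := by
    rw [dense_iff_closure_eq, ← Subalgebra.topologicalClosure_coe,
      polynomialFunctions_closure_eq_top a b]
    rfl
  have heqon : Set.EqOn Φ₁ Φ₂ (polynomialFunctions (Set.Icc a b) : Set C(Set.Icc a b, ℝ)) := by
    intro g hg
    rw [polynomialFunctions_coe] at hg
    obtain ⟨p, rfl⟩ := hg
    show L₁ (cfcHom hM' _) = L₂ (cfcHom hX' _)
    rw [key₁, key₂]
    have c₁ : cfc (fun x => (Polynomial.toContinuousMapOnAlgHom (Set.Icc a b) p)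
        (Set.projIcc a b hab x)) M = cfc (fun x => p.eval x) M := by
      apply cfc_congr
      intro x hx
      simp [Set.projIcc_of_mem hab (hsM hx)]
    have c₂ : cfc (fun x => (Polynomial.toContinuousMapOnAlgHom (Set.Icc a b) p)
        (Set.projIcc a b hab x)) X = cfc (fun x => p.eval x) X := by
      apply cfc_congr
      intro x hx
      simp [Set.projIcc_of_mem hab (hsX hx)]
    rw [c₁, c₂, cfc_polynomial p M hM', cfc_polynomial p X hX',
      Polynomial.aeval_eq_sum_range, Polynomial.aeval_eq_sum_range, map_sum, map_sum]
    exact Finset.sum_congr rfl fun k _ => by rw [_root_.map_smul, _root_.map_smul, hpow k]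
  have hΦ : Φ₁ = Φ₂ := Continuous.ext_on hdense hcont₁ hcont₂ heqon
  let g₀ : C(Set.Icc a b, ℝ) := ⟨(Set.Icc a b).restrict f, hf.restrict⟩
  have h₀ := congrFun hΦ g₀
  show L₁ (cfc f M) = L₂ (cfc f X)
  have hg₁ : cfc (fun x => g₀ (Set.projIcc a b hab x)) M = cfc f M := by
    apply cfc_congr
    intro x hx
    simp [g₀, Set.projIcc_of_mem hab (hsM hx)]
    rfl
  have hg₂ : cfc (fun x => g₀ (Set.projIcc a b hab x)) X = cfc f X := by
    apply cfc_congr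
    intro x hx
    simp [g₀, Set.projIcc_of_mem hab (hsX hx)]
    rfl
  simpa only [Φ₁, Φ₂, key₁ g₀, key₂ g₀, hg₁, hg₂] using h₀

omit [Fintype ι] in
lemma hpj_smul_one_herm (r : ℝ) : ((r • 1 : Matrix ι ι ℂ)).IsHermitian := by
  rw [Matrix.IsHermitian, conjTranspose_smul, star_trivial, conjTranspose_one]

lemma hpj_smul_one_eq (r : ℝ) :
    (r • 1 : Matrix ι ι ℂ) = algebraMap ℝ (Matrix ι ι ℂ) r :=
  (Algebra.algebraMap_eq_smul_one r).symm

open Pointwise in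
/-- For a Hermitian matrix, having spectrum in `[a, b]` is equivalent to the Loewner order
inequalities `a • 1 ≤ M ≤ b • 1`, phrased via positive semidefiniteness. -/
lemma hpj_spectrum_subset_iff {M : Matrix ι ι ℂ} (hM : M.IsHermitian) {a b : ℝ} :
    spectrum ℝ M ⊆ Set.Icc a b ↔
      (M - a • 1).PosSemidef ∧ ((b • 1 : Matrix ι ι ℂ) - M).PosSemidef := by
  have hha : (M - a • 1).IsHermitian := hM.sub (hpj_smul_one_herm a)
  have hhb : ((b • 1 : Matrix ι ι ℂ) - M).IsHermitian := (hpj_smul_one_herm b).sub hM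
  constructor
  · intro h
    constructor
    · apply hha.posSemidef_iff_eigenvalues_nonneg.mpr
      intro i
      have hmem := hha.eigenvalues_mem_spectrum_real i
      have hset : spectrum ℝ (M - a • 1) = spectrum ℝ M - ({a} : Set ℝ) := by
        rw [hpj_smul_one_eq, ← spectrum.sub_singleton_eq]
      rw [hset] at hmem
      obtain ⟨y, hy, z, hz, hyz⟩ := Set.mem_sub.mp hmem
      rw [Set.mem_singleton_iff] at hz
      subst hz
      rw [← hyz]
      have := h hy
      simp only [Pi.zero_apply]; linarith [this.1]
    · apply hhb.posSemidef_iff_eigenvalues_nonneg.mpr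
      intro i
      have hmem := hhb.eigenvalues_mem_spectrum_real i
      have hset : spectrum ℝ ((b • 1 : Matrix ι ι ℂ) - M) = ({b} : Set ℝ) - spectrum ℝ M := by
        rw [hpj_smul_one_eq, ← spectrum.singleton_sub_eq]
      rw [hset] at hmem
      obtain ⟨y, hy, z, hz, hyz⟩ := Set.mem_sub.mp hmem
      rw [Set.mem_singleton_iff] at hy
      subst hy
      rw [← hyz]
      have := h hz
      simp only [Pi.zero_apply]; linarith [this.2]
  · rintro ⟨h₁, h₂⟩ x hx
    constructor
    · have hmem : x - a ∈ spectrum ℝ (M - a • 1) := by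
        rw [hpj_smul_one_eq, ← spectrum.sub_singleton_eq]
        exact Set.sub_mem_sub hx rfl
      rw [hha.spectrum_real_eq_range_eigenvalues] at hmem
      obtain ⟨i, hi⟩ := hmem
      have := h₁.eigenvalues_nonneg i
      rw [hi] at this
      linarith
    · have hmem : b - x ∈ spectrum ℝ ((b • 1 : Matrix ι ι ℂ) - M) := by
        rw [hpj_smul_one_eq, ← spectrum.singleton_sub_eq]
        exact Set.sub_mem_sub rfl hx
      rw [hhb.spectrum_real_eq_range_eigenvalues] at hmem
      obtain ⟨i, hi⟩ := hmem
      have := h₂.eigenvalues_nonneg i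
      rw [hi] at this
      linarith

lemma hpj_posSemidef_fromBlocks {m₁ m₂ : Type*} [Fintype m₁] [Fintype m₂]
    {X : Matrix m₁ m₁ ℂ} {Y : Matrix m₂ m₂ ℂ} (hX : X.PosSemidef) (hY : Y.PosSemidef) :
    (fromBlocks X 0 0 Y).PosSemidef := by
  rw [posSemidef_iff_dotProduct_mulVec]
  constructor
  · simp [Matrix.IsHermitian, fromBlocks_conjTranspose, hX.1.eq, hY.1.eq]
  · intro x
    have hx : star x = Sum.elim (star (x ∘ Sum.inl)) (star (x ∘ Sum.inr)) := by
      ext (i | i) <;> rfl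
    rw [fromBlocks_mulVec, hx]
    simp only [zero_mulVec, add_zero, zero_add]
    rw [sumElim_dotProduct_sumElim]
    exact add_nonneg (hX.dotProduct_mulVec_nonneg _) (hY.dotProduct_mulVec_nonneg _)

lemma hpj_fromBlocks_sub {m₁ m₂ : Type*}
    (A A' : Matrix m₁ m₁ ℂ) (B B' : Matrix m₁ m₂ ℂ) (C C' : Matrix m₂ m₁ ℂ)
    (D D' : Matrix m₂ m₂ ℂ) :
    fromBlocks A B C D - fromBlocks A' B' C' D'
      = fromBlocks (A - A') (B - B') (C - C') (D - D') := by
  ext (i | i) (j | j) <;> simp [fromBlocks]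

lemma hpj_fromBlocks_pow {m₁ m₂ : Type*} [Fintype m₁] [Fintype m₂] [DecidableEq m₁]
    [DecidableEq m₂] (X : Matrix m₁ m₁ ℂ) (Y : Matrix m₂ m₂ ℂ) (k : ℕ) :
    (fromBlocks X 0 0 Y) ^ k = fromBlocks (X ^ k) 0 0 (Y ^ k) := by
  induction k with
  | zero => simp [fromBlocks_one]
  | succ k ih =>
    rw [pow_succ, pow_succ, pow_succ, ih, fromBlocks_multiply]
    simp

end HPJHelpers

set_option maxHeartbeats 1600000 in
/-- Hansen–Pedersen–Jensen inequality, affine version: if `f` is matrix convex on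
`[a, b]`, `T₁, T₂` are Hermitian with spectra in `[a, b]` and `Aᴴ A + Bᴴ B = 1`, then
`f (Aᴴ T₁ A + Bᴴ T₂ B) ≤ Aᴴ f(T₁) A + Bᴴ f(T₂) B` in the Loewner order. -/
theorem hpj_affine (a b : ℝ) (f : ℝ → ℝ) (hf : ContinuousOn f (Set.Icc a b))
    (hconv : MatrixConvexOn (Set.Icc a b) f) (n : ℕ)
    (T₁ T₂ A B : Matrix (Fin n) (Fin n) ℂ)
    (hT₁ : T₁.IsHermitian) (hT₂ : T₂.IsHermitian)
    (hsp₁ : spectrum ℝ T₁ ⊆ Set.Icc a b) (hsp₂ : spectrum ℝ T₂ ⊆ Set.Icc a b)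
    (hAB : Aᴴ * A + Bᴴ * B = 1) :
    (Aᴴ * cfc f T₁ * A + Bᴴ * cfc f T₂ * B
      - cfc f (Aᴴ * T₁ * A + Bᴴ * T₂ * B)).PosSemidef := by
  classical
  rcases Nat.eq_zero_or_pos n with hn | hn
  · subst hn
    constructor
    · ext i j
      exact i.elim0
    · intro x
      simp [Finsupp.sum, Finset.eq_empty_of_isEmpty x.support]
  -- `n > 0`, so the spectrum of `T₁` is nonempty and `a ≤ b`.
  have hab : a ≤ b := by
    have h1 : hT₁.eigenvalues ⟨0, hn⟩ ∈ spectrum ℝ T₁ :=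
      hT₁.eigenvalues_mem_spectrum_real _
    have h2 := hsp₁ h1
    exact le_trans h2.1 h2.2
  -- the big `2n × 2n` matrices
  set V : Matrix (Fin n ⊕ Fin n) (Fin n) ℂ := fromRows A B with hVdef
  set S : Matrix (Fin n ⊕ Fin n) (Fin n ⊕ Fin n) ℂ := fromBlocks T₁ 0 0 T₂ with hSdef
  set P : Matrix (Fin n ⊕ Fin n) (Fin n ⊕ Fin n) ℂ := V * Vᴴ with hPdef
  set U : Matrix (Fin n ⊕ Fin n) (Fin n ⊕ Fin n) ℂ := 1 - P - P with hUdef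
  set X : Matrix (Fin n) (Fin n) ℂ := Aᴴ * T₁ * A + Bᴴ * T₂ * B with hXdef
  set Q : Matrix (Fin n ⊕ Fin n) (Fin n ⊕ Fin n) ℂ := (1 - P) * S * (1 - P) with hQdef
  clear_value Q
  clear_value V S P U X
  have hV : Vᴴ * V = 1 := by
    rw [hVdef, conjTranspose_fromRows_eq_fromCols_conjTranspose, fromCols_mul_fromRows,
      hAB]
  have hP2 : P * P = P := by
    rw [hPdef, Matrix.mul_assoc, ← Matrix.mul_assoc Vᴴ, hV, Matrix.one_mul]
  have hPherm : P.IsHermitian := by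
    rw [hPdef, Matrix.IsHermitian, conjTranspose_mul, conjTranspose_conjTranspose]
  have hPV : P * V = V := by rw [hPdef, Matrix.mul_assoc, hV, Matrix.mul_one]
  have hVP : Vᴴ * P = Vᴴ := by rw [hPdef, ← Matrix.mul_assoc, hV, Matrix.one_mul]
  have hU2 : U * U = 1 := by
    rw [hUdef]
    simp only [Matrix.sub_mul, Matrix.mul_sub, Matrix.one_mul, Matrix.mul_one, hP2]
    abel
  have h1P : (1 - P).IsHermitian := Matrix.isHermitian_one.sub hPherm
  have hUherm : U.IsHermitian := by rw [hUdef]; exact h1P.sub hPherm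
  have hUV : U * V = -V := by
    rw [hUdef, Matrix.sub_mul, Matrix.sub_mul, Matrix.one_mul, hPV]
    abel
  have hVU : Vᴴ * U = -Vᴴ := by
    rw [hUdef, Matrix.mul_sub, Matrix.mul_sub, Matrix.mul_one, hVP]
    abel
  -- generic compression computation
  have hpj_compress : ∀ G₁ G₂ : Matrix (Fin n) (Fin n) ℂ,
      Vᴴ * fromBlocks G₁ 0 0 G₂ * V = Aᴴ * G₁ * A + Bᴴ * G₂ * B := by
    intro G₁ G₂
    rw [hVdef, Matrix.mul_assoc, fromBlocks_mul_fromRows,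
      conjTranspose_fromRows_eq_fromCols_conjTranspose, fromCols_mul_fromRows]
    simp only [Matrix.zero_mul, add_zero, zero_add]
    rw [← Matrix.mul_assoc, ← Matrix.mul_assoc]
  have hVSV : Vᴴ * S * V = X := by rw [hSdef, hpj_compress, hXdef]
  -- order facts for T₁, T₂
  obtain ⟨h₁a, h₁b⟩ := (hpj_spectrum_subset_iff hT₁).mp hsp₁
  obtain ⟨h₂a, h₂b⟩ := (hpj_spectrum_subset_iff hT₂).mp hsp₂
  -- facts about S
  have hSherm : S.IsHermitian := by
    rw [hSdef, Matrix.IsHermitian, fromBlocks_conjTranspose, conjTranspose_zero, hT₁.eq,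
      hT₂.eq]
  have hblockr : ∀ r : ℝ, S - r • 1 = fromBlocks (T₁ - r • 1) 0 0 (T₂ - r • 1) := by
    intro r
    rw [hSdef, ← fromBlocks_one (l := Fin n) (m := Fin n) (α := ℂ), fromBlocks_smul,
      hpj_fromBlocks_sub]
    simp
  have hblockl : ∀ r : ℝ, (r • 1 : Matrix (Fin n ⊕ Fin n) (Fin n ⊕ Fin n) ℂ) - S
      = fromBlocks (r • 1 - T₁) 0 0 (r • 1 - T₂) := by
    intro r
    rw [hSdef, ← fromBlocks_one (l := Fin n) (m := Fin n) (α := ℂ), fromBlocks_smul,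
      hpj_fromBlocks_sub]
    simp
  have hSa : (S - a • 1).PosSemidef := by
    rw [hblockr a]; exact hpj_posSemidef_fromBlocks h₁a h₂a
  have hSb : ((b • 1 : Matrix (Fin n ⊕ Fin n) (Fin n ⊕ Fin n) ℂ) - S).PosSemidef := by
    rw [hblockl b]; exact hpj_posSemidef_fromBlocks h₁b h₂b
  have hspS : spectrum ℝ S ⊆ Set.Icc a b := (hpj_spectrum_subset_iff hSherm).mpr ⟨hSa, hSb⟩
  -- facts about U * S * U
  have hWherm : (U * S * U).IsHermitian := by
    have := isHermitian_conjTranspose_mul_mul U hSherm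
    rwa [hUherm.eq] at this
  have hconjsmul : ∀ r : ℝ, U * (r • 1 : Matrix (Fin n ⊕ Fin n) (Fin n ⊕ Fin n) ℂ) * U
      = r • 1 := by
    intro r
    rw [Matrix.mul_smul, Matrix.smul_mul, Matrix.mul_one, hU2]
  have hWa : (U * S * U - a • 1).PosSemidef := by
    have h : U * S * U - a • (1 : Matrix (Fin n ⊕ Fin n) (Fin n ⊕ Fin n) ℂ)
        = Uᴴ * (S - a • 1) * U := by
      rw [hUherm.eq, Matrix.mul_sub, Matrix.sub_mul, hconjsmul]
    rw [h]; exact hSa.conjTranspose_mul_mul_same U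
  have hWb : ((b • 1 : Matrix (Fin n ⊕ Fin n) (Fin n ⊕ Fin n) ℂ) - U * S * U).PosSemidef := by
    have h : (b • 1 : Matrix (Fin n ⊕ Fin n) (Fin n ⊕ Fin n) ℂ) - U * S * U
        = Uᴴ * ((b • 1 : Matrix (Fin n ⊕ Fin n) (Fin n ⊕ Fin n) ℂ) - S) * U := by
      rw [hUherm.eq, Matrix.mul_sub, Matrix.sub_mul, hconjsmul]
    rw [h]; exact hSb.conjTranspose_mul_mul_same U
  have hspW : spectrum ℝ (U * S * U) ⊆ Set.Icc a b :=
    (hpj_spectrum_subset_iff hWherm).mpr ⟨hWa, hWb⟩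
  -- facts about X
  have hXherm : X.IsHermitian := by
    rw [hXdef]
    exact (isHermitian_conjTranspose_mul_mul A hT₁).add (isHermitian_conjTranspose_mul_mul B hT₂)
  have hXa : (X - a • 1).PosSemidef := by
    have h : X - a • (1 : Matrix (Fin n) (Fin n) ℂ)
        = Aᴴ * (T₁ - a • 1) * A + Bᴴ * (T₂ - a • 1) * B := by
      rw [Matrix.mul_sub, Matrix.sub_mul, Matrix.mul_sub, Matrix.sub_mul, Matrix.mul_smul, Matrix.smul_mul, Matrix.mul_one,
        Matrix.mul_smul, Matrix.smul_mul, Matrix.mul_one, ← add_sub_add_comm, ← smul_add, hAB, hXdef]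
    rw [h]
    exact (h₁a.conjTranspose_mul_mul_same A).add (h₂a.conjTranspose_mul_mul_same B)
  have hXb : ((b • 1 : Matrix (Fin n) (Fin n) ℂ) - X).PosSemidef := by
    have h : (b • 1 : Matrix (Fin n) (Fin n) ℂ) - X
        = Aᴴ * ((b • 1 : Matrix (Fin n) (Fin n) ℂ) - T₁) * A
          + Bᴴ * ((b • 1 : Matrix (Fin n) (Fin n) ℂ) - T₂) * B := by
      rw [Matrix.mul_sub, Matrix.sub_mul, Matrix.mul_sub, Matrix.sub_mul, Matrix.mul_smul, Matrix.smul_mul, Matrix.mul_one,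
        Matrix.mul_smul, Matrix.smul_mul, Matrix.mul_one, sub_add_sub_comm, ← smul_add, hAB, hXdef]
    rw [h]
    exact (h₁b.conjTranspose_mul_mul_same A).add (h₂b.conjTranspose_mul_mul_same B)
  have hspX : spectrum ℝ X ⊆ Set.Icc a b := (hpj_spectrum_subset_iff hXherm).mpr ⟨hXa, hXb⟩
  -- the midpoint matrix R and its decomposition
  set R : Matrix (Fin n ⊕ Fin n) (Fin n ⊕ Fin n) ℂ
    := (1/2 : ℝ) • S + (1/2 : ℝ) • (U * S * U) with hRdef
  clear_value R
  have hPSP : V * X * Vᴴ = P * S * P := by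
    rw [← hVSV, hPdef]
    simp only [Matrix.mul_assoc]
  have hRdecomp : R = V * X * Vᴴ + Q := by
    have hhalf2 : (2 : ℝ) * (1/2) = 1 := by norm_num
    have h2 : (2 : ℝ) • R = (2 : ℝ) • (V * X * Vᴴ + Q) := by
      rw [hRdef, smul_add, smul_smul, smul_smul, hhalf2, one_smul, one_smul,
        hPSP, hQdef, hUdef, two_smul]
      simp only [Matrix.sub_mul, Matrix.mul_sub, Matrix.one_mul, Matrix.mul_one]
      abel
    exact smul_right_injective (Matrix (Fin n ⊕ Fin n) (Fin n ⊕ Fin n) ℂ)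
      (two_ne_zero (α := ℝ)) h2
  have hQherm : Q.IsHermitian := by
    have := isHermitian_conjTranspose_mul_mul (1 - P) hSherm
    rwa [h1P.eq, ← hQdef] at this
  have hRherm : R.IsHermitian := by
    rw [hRdecomp]
    exact (isHermitian_mul_mul_conjTranspose V hXherm).add hQherm
  have haux : ∀ r : ℝ, V * (r • 1 : Matrix (Fin n) (Fin n) ℂ) * Vᴴ
      + (1 - P) * (r • 1 : Matrix (Fin n ⊕ Fin n) (Fin n ⊕ Fin n) ℂ) * (1 - P)
      = (r • 1 : Matrix (Fin n ⊕ Fin n) (Fin n ⊕ Fin n) ℂ) := by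
    intro r
    rw [Matrix.mul_smul, Matrix.smul_mul, Matrix.mul_one, Matrix.mul_smul, Matrix.smul_mul, Matrix.mul_one,
      ← smul_add]
    congr 1
    rw [← hPdef]
    simp only [Matrix.sub_mul, Matrix.mul_sub, Matrix.one_mul, Matrix.mul_one, hP2]
    abel
  have hRa : (R - a • 1).PosSemidef := by
    have h : R - a • (1 : Matrix (Fin n ⊕ Fin n) (Fin n ⊕ Fin n) ℂ)
        = V * (X - a • 1) * Vᴴ + (1 - P) * (S - a • 1) * (1 - P) := by
      have expand : V * (X - a • 1) * Vᴴ + (1 - P) * (S - a • 1) * (1 - P)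
          = (V * X * Vᴴ + (1 - P) * S * (1 - P))
            - (V * (a • 1 : Matrix (Fin n) (Fin n) ℂ) * Vᴴ
              + (1 - P) * (a • 1 : Matrix (Fin n ⊕ Fin n) (Fin n ⊕ Fin n) ℂ) * (1 - P)) := by
        simp only [Matrix.mul_sub, Matrix.sub_mul]
        abel
      rw [expand, haux a, ← hQdef, ← hRdecomp]
    rw [h]
    have hq := hSa.conjTranspose_mul_mul_same (1 - P)
    rw [h1P.eq] at hq
    exact (hXa.mul_mul_conjTranspose_same V).add hq
  have hRb : ((b • 1 : Matrix (Fin n ⊕ Fin n) (Fin n ⊕ Fin n) ℂ) - R).PosSemidef := by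
    have h : (b • 1 : Matrix (Fin n ⊕ Fin n) (Fin n ⊕ Fin n) ℂ) - R
        = V * ((b • 1 : Matrix (Fin n) (Fin n) ℂ) - X) * Vᴴ
          + (1 - P) * ((b • 1 : Matrix (Fin n ⊕ Fin n) (Fin n ⊕ Fin n) ℂ) - S) * (1 - P) := by
      have expand : V * ((b • 1 : Matrix (Fin n) (Fin n) ℂ) - X) * Vᴴ
          + (1 - P) * ((b • 1 : Matrix (Fin n ⊕ Fin n) (Fin n ⊕ Fin n) ℂ) - S) * (1 - P)
          = (V * (b • 1 : Matrix (Fin n) (Fin n) ℂ) * Vᴴ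
              + (1 - P) * (b • 1 : Matrix (Fin n ⊕ Fin n) (Fin n ⊕ Fin n) ℂ) * (1 - P))
            - (V * X * Vᴴ + (1 - P) * S * (1 - P)) := by
        simp only [Matrix.mul_sub, Matrix.sub_mul]
        abel
      rw [expand, haux b, ← hQdef, ← hRdecomp]
    rw [h]
    have hq := hSb.conjTranspose_mul_mul_same (1 - P)
    rw [h1P.eq] at hq
    exact (hXb.mul_mul_conjTranspose_same V).add hq
  have hspR : spectrum ℝ R ⊆ Set.Icc a b := (hpj_spectrum_subset_iff hRherm).mpr ⟨hRa, hRb⟩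
  -- reindexing to `Fin (n + n)`
  set e : (Fin n ⊕ Fin n) ≃ Fin (n + n) := finSumFinEquiv with hedef
  clear_value e
  have reindex_herm : ∀ {M : Matrix (Fin n ⊕ Fin n) (Fin n ⊕ Fin n) ℂ}, M.IsHermitian →
      (reindex e e M).IsHermitian := by
    intro M hM
    rw [Matrix.IsHermitian, reindex_apply, conjTranspose_submatrix, hM.eq]
  have reindex_spec : ∀ M : Matrix (Fin n ⊕ Fin n) (Fin n ⊕ Fin n) ℂ,
      spectrum ℝ (reindex e e M) = spectrum ℝ M := by
    intro M
    have := AlgEquiv.spectrum_eq (reindexAlgEquiv ℝ ℂ e) M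
    rwa [reindexAlgEquiv_apply] at this
  have reindex_cfc : ∀ (M : Matrix (Fin n ⊕ Fin n) (Fin n ⊕ Fin n) ℂ), M.IsHermitian →
      spectrum ℝ M ⊆ Set.Icc a b → cfc f (reindex e e M) = reindex e e (cfc f M) := by
    intro M hM hsp
    refine (hpj_cfc_linear_comm hab hf M (reindex e e M) hM (reindex_herm hM) hsp
      (by rw [reindex_spec]; exact hsp)
      ((reindexLinearEquiv ℝ ℂ e e).toLinearMap) (LinearMap.id) fun k => ?_).symm
    have := map_pow (reindexAlgEquiv ℝ ℂ e) M k
    simpa [reindexAlgEquiv_apply] using this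
  -- cfc of the block diagonal matrix
  have hSk : ∀ k : ℕ, S ^ k = fromBlocks (T₁ ^ k) 0 0 (T₂ ^ k) := by
    intro k; rw [hSdef, hpj_fromBlocks_pow]
  have cfc_S_blocks : cfc f S = fromBlocks (cfc f T₁) 0 0 (cfc f T₂) := by
    let L11 : Matrix (Fin n ⊕ Fin n) (Fin n ⊕ Fin n) ℂ →ₗ[ℝ] Matrix (Fin n) (Fin n) ℂ :=
      { toFun := toBlocks₁₁, map_add' := fun _ _ => rfl, map_smul' := fun _ _ => rfl }
    let L12 : Matrix (Fin n ⊕ Fin n) (Fin n ⊕ Fin n) ℂ →ₗ[ℝ] Matrix (Fin n) (Fin n) ℂ :=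
      { toFun := toBlocks₁₂, map_add' := fun _ _ => rfl, map_smul' := fun _ _ => rfl }
    let L21 : Matrix (Fin n ⊕ Fin n) (Fin n ⊕ Fin n) ℂ →ₗ[ℝ] Matrix (Fin n) (Fin n) ℂ :=
      { toFun := toBlocks₂₁, map_add' := fun _ _ => rfl, map_smul' := fun _ _ => rfl }
    let L22 : Matrix (Fin n ⊕ Fin n) (Fin n ⊕ Fin n) ℂ →ₗ[ℝ] Matrix (Fin n) (Fin n) ℂ :=
      { toFun := toBlocks₂₂, map_add' := fun _ _ => rfl, map_smul' := fun _ _ => rfl }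
    have h11 := hpj_cfc_linear_comm hab hf S T₁ hSherm hT₁ hspS hsp₁ L11 LinearMap.id
      (fun k => by rw [hSk k]; show toBlocks₁₁ _ = _; simp [toBlocks_fromBlocks₁₁])
    have h12 := hpj_cfc_linear_comm hab hf S T₁ hSherm hT₁ hspS hsp₁ L12 0
      (fun k => by rw [hSk k]; show toBlocks₁₂ _ = _; simp [toBlocks_fromBlocks₁₂])
    have h21 := hpj_cfc_linear_comm hab hf S T₁ hSherm hT₁ hspS hsp₁ L21 0
      (fun k => by rw [hSk k]; show toBlocks₂₁ _ = _; simp [toBlocks_fromBlocks₂₁])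
    have h22 := hpj_cfc_linear_comm hab hf S T₂ hSherm hT₂ hspS hsp₂ L22 LinearMap.id
      (fun k => by rw [hSk k]; show toBlocks₂₂ _ = _; simp [toBlocks_fromBlocks₂₂])
    simp only [L11, L12, L21, L22, LinearMap.coe_mk, AddHom.coe_mk, LinearMap.id_coe, id_eq,
      LinearMap.zero_apply] at h11 h12 h21 h22
    change toBlocks₁₁ (cfc f S) = cfc f T₁ at h11
    change toBlocks₁₂ (cfc f S) = 0 at h12
    change toBlocks₂₁ (cfc f S) = 0 at h21
    change toBlocks₂₂ (cfc f S) = cfc f T₂ at h22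
    rw [← fromBlocks_toBlocks (cfc f S), h11, h12, h21, h22]
  -- cfc commutes with conjugation by the hermitian unitary U
  have hconj_pow : ∀ k : ℕ, (U * S * U) ^ k = U * S ^ k * U := by
    intro k
    induction k with
    | zero => rw [pow_zero, pow_zero, Matrix.mul_one, hU2]
    | succ k ih =>
      rw [pow_succ, ih, pow_succ]
      calc U * S ^ k * U * (U * S * U) = U * S ^ k * (U * U) * S * U := by
            simp only [Matrix.mul_assoc]
        _ = U * (S ^ k * S) * U := by rw [hU2, Matrix.mul_one]; simp only [Matrix.mul_assoc]
  have cfc_conj : cfc f (U * S * U) = U * cfc f S * U := by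
    let LC : Matrix (Fin n ⊕ Fin n) (Fin n ⊕ Fin n) ℂ →ₗ[ℝ]
        Matrix (Fin n ⊕ Fin n) (Fin n ⊕ Fin n) ℂ :=
      { toFun := fun M' => U * M' * U,
        map_add' := fun M N => by simp only [Matrix.mul_add, Matrix.add_mul],
        map_smul' := fun c M => by simp [Matrix.mul_smul, Matrix.smul_mul] }
    have h := hpj_cfc_linear_comm hab hf S (U * S * U) hSherm hWherm hspS hspW LC
      LinearMap.id (fun k => by
        simp only [LC, LinearMap.coe_mk, AddHom.coe_mk, LinearMap.id_coe, id_eq]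
        exact (hconj_pow k).symm)
    simpa only [LC, LinearMap.coe_mk, AddHom.coe_mk, LinearMap.id_coe, id_eq] using h.symm
  -- compression identities
  have hQV : Q * V = 0 := by
    have h0 : (1 - P) * V = 0 := by rw [Matrix.sub_mul, Matrix.one_mul, hPV, sub_self]
    rw [hQdef, Matrix.mul_assoc, h0, Matrix.mul_zero]
  have hVQ : Vᴴ * Q = 0 := by
    have h0 : Vᴴ * (1 - P) = 0 := by rw [Matrix.mul_sub, Matrix.mul_one, hVP, sub_self]
    rw [hQdef, ← Matrix.mul_assoc, ← Matrix.mul_assoc, h0, Matrix.zero_mul, Matrix.zero_mul]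
  have hmulV : ∀ G H : Matrix (Fin n) (Fin n) ℂ,
      (V * G * Vᴴ) * (V * H * Vᴴ) = V * (G * H) * Vᴴ := by
    intro G H
    calc (V * G * Vᴴ) * (V * H * Vᴴ) = V * G * (Vᴴ * V) * H * Vᴴ := by
          simp only [Matrix.mul_assoc]
      _ = V * (G * H) * Vᴴ := by rw [hV, Matrix.mul_one]; simp only [Matrix.mul_assoc]
  have hq1 : ∀ G : Matrix (Fin n) (Fin n) ℂ, (V * G * Vᴴ) * Q = 0 := by
    intro G
    calc (V * G * Vᴴ) * Q = V * G * (Vᴴ * Q) := by simp only [Matrix.mul_assoc]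
      _ = 0 := by rw [hVQ, Matrix.mul_zero]
  have hq2 : ∀ G : Matrix (Fin n) (Fin n) ℂ, Q * (V * G * Vᴴ) = 0 := by
    intro G
    calc Q * (V * G * Vᴴ) = Q * V * (G * Vᴴ) := by simp only [Matrix.mul_assoc]
      _ = 0 := by rw [hQV, Matrix.zero_mul]
  have hRpow : ∀ k : ℕ, R ^ (k + 1) = V * X ^ (k + 1) * Vᴴ + Q ^ (k + 1) := by
    intro k
    induction k with
    | zero => simpa [pow_one] using hRdecomp
    | succ k ih =>
      rw [pow_succ R, ih, hRdecomp, Matrix.add_mul, Matrix.mul_add, Matrix.mul_add, hmulV, hq1]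
      have hqv : Q ^ (k + 1) * (V * X * Vᴴ) = 0 := by
        rw [pow_succ, Matrix.mul_assoc, hq2, Matrix.mul_zero]
      rw [hqv, add_zero, zero_add, ← pow_succ, ← pow_succ]
  have cfc_compress : Vᴴ * cfc f R * V = cfc f X := by
    let LV : Matrix (Fin n ⊕ Fin n) (Fin n ⊕ Fin n) ℂ →ₗ[ℝ] Matrix (Fin n) (Fin n) ℂ :=
      { toFun := fun M' => Vᴴ * M' * V,
        map_add' := fun M N => by simp only [Matrix.mul_add, Matrix.add_mul],
        map_smul' := fun c M => by simp [Matrix.mul_smul, Matrix.smul_mul] }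
    have h := hpj_cfc_linear_comm hab hf R X hRherm hXherm hspR hspX LV LinearMap.id
      (fun k => by
        simp only [LV, LinearMap.coe_mk, AddHom.coe_mk, LinearMap.id_coe, id_eq]
        cases k with
        | zero => rw [pow_zero, pow_zero, Matrix.mul_one, hV]
        | succ k =>
          rw [hRpow k, Matrix.mul_add, Matrix.add_mul]
          have h1 : Vᴴ * (V * X ^ (k + 1) * Vᴴ) * V = X ^ (k + 1) := by
            calc Vᴴ * (V * X ^ (k + 1) * Vᴴ) * V
                = (Vᴴ * V) * X ^ (k + 1) * (Vᴴ * V) := by simp only [Matrix.mul_assoc]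
              _ = X ^ (k + 1) := by rw [hV, Matrix.one_mul, Matrix.mul_one]
          have h2 : Vᴴ * Q ^ (k + 1) * V = 0 := by
            rw [pow_succ', ← Matrix.mul_assoc, hVQ, Matrix.zero_mul, Matrix.zero_mul]
          rw [h1, h2, add_zero])
    simpa only [LV, LinearMap.coe_mk, AddHom.coe_mk, LinearMap.id_coe, id_eq] using h
  -- apply matrix convexity at dimension `n + n`
  have hc := hconv (n + n) (reindex e e S) (reindex e e (U * S * U))
    (reindex_herm hSherm) (reindex_herm hWherm)
    (by rw [reindex_spec]; exact hspS) (by rw [reindex_spec]; exact hspW)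
    (1/2) (by norm_num) (by norm_num)
  have h12 : (1 : ℝ) - 1/2 = 1/2 := by norm_num
  rw [h12] at hc
  have hlin : (1/2 : ℝ) • reindex e e S + (1/2 : ℝ) • reindex e e (U * S * U)
      = reindex e e R := by
    rw [hRdef]
    simp [reindex_apply, submatrix_add, submatrix_smul]
  rw [hlin, reindex_cfc S hSherm hspS, reindex_cfc (U * S * U) hWherm hspW,
    reindex_cfc R hRherm hspR] at hc
  have hZ : (1/2 : ℝ) • reindex e e (cfc f S) + (1/2 : ℝ) • reindex e e (cfc f (U * S * U))
      - reindex e e (cfc f R)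
      = reindex e e ((1/2 : ℝ) • cfc f S + (1/2 : ℝ) • cfc f (U * S * U) - cfc f R) := by
    simp [reindex_apply, submatrix_add, submatrix_smul, submatrix_sub]
  rw [hZ] at hc
  have hc2 : ((1/2 : ℝ) • cfc f S + (1/2 : ℝ) • cfc f (U * S * U) - cfc f R).PosSemidef := by
    have h := hc.submatrix ⇑e
    rw [reindex_apply, submatrix_submatrix, Equiv.symm_comp_self, submatrix_id_id] at h
    exact h
  have final := hc2.conjTranspose_mul_mul_same V
  -- compute the compression of the convexity inequality
  have hVFV : Vᴴ * cfc f S * V = Aᴴ * cfc f T₁ * A + Bᴴ * cfc f T₂ * B := by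
    rw [cfc_S_blocks, hpj_compress]
  have hVWV : Vᴴ * (U * cfc f S * U) * V = Aᴴ * cfc f T₁ * A + Bᴴ * cfc f T₂ * B := by
    have h : Vᴴ * (U * cfc f S * U) * V = (Vᴴ * U) * cfc f S * (U * V) := by
      simp only [Matrix.mul_assoc]
    rw [h, hVU, hUV, Matrix.neg_mul, Matrix.neg_mul, Matrix.mul_neg, neg_neg, hVFV]
  have expand : ∀ E₁ E₂ E₃ : Matrix (Fin n ⊕ Fin n) (Fin n ⊕ Fin n) ℂ,
      Vᴴ * ((1/2 : ℝ) • E₁ + (1/2 : ℝ) • E₂ - E₃) * V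
        = (1/2 : ℝ) • (Vᴴ * E₁ * V) + (1/2 : ℝ) • (Vᴴ * E₂ * V) - Vᴴ * E₃ * V := by
    intro E₁ E₂ E₃
    simp [Matrix.mul_add, Matrix.add_mul, Matrix.mul_sub, Matrix.sub_mul, Matrix.mul_smul, Matrix.smul_mul]
  have hhalf : (1/2 : ℝ) + 1/2 = 1 := by norm_num
  have hcomp : Vᴴ * ((1/2 : ℝ) • cfc f S + (1/2 : ℝ) • cfc f (U * S * U) - cfc f R) * V
      = Aᴴ * cfc f T₁ * A + Bᴴ * cfc f T₂ * B - cfc f X := by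
    rw [cfc_conj, expand, hVFV, hVWV, cfc_compress, ← add_smul, hhalf, one_smul]
  rw [hcomp] at final
  exact final
end

section
/- (Hansen–Pedersen–Jensen, subhomogeneous version) If f : I → ℝ is matrix convex on an interval I containing 0 with f(0) ≤ 0, T₁, T₂ are self-adjoint matrices with spectra in I, and A, B satisfy A*A + B*B ≤ I, then f(A*T₁A + B*T₂B) ≤ A*f(T₁)A + B*f(T₂)B. -/
open Matrix ComplexOrder

namespace HPJ

variable {k : Type*} {l : Type*} [Fintype k] [DecidableEq k] [Fintype l] [DecidableEq l]

lemma contOn (f : ℝ → ℝ) (A : Matrix k k ℂ) : ContinuousOn f (spectrum ℝ A) :=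
  Set.Finite.continuousOn A.finite_real_spectrum f

lemma isUnit_fromBlocks_iff {M : Matrix k k ℂ} {N : Matrix l l ℂ} :
    IsUnit (fromBlocks M 0 0 N) ↔ IsUnit M ∧ IsUnit N := by
  rw [Matrix.isUnit_iff_isUnit_det, Matrix.isUnit_iff_isUnit_det (A := M),
    Matrix.isUnit_iff_isUnit_det (A := N), det_fromBlocks_zero₂₁,
    isUnit_iff_ne_zero, isUnit_iff_ne_zero, isUnit_iff_ne_zero, mul_ne_zero_iff]

lemma smul_one_fromBlocks (x : ℝ) :
    (x • 1 : Matrix (k ⊕ l) (k ⊕ l) ℂ) =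
      fromBlocks (x • 1 : Matrix k k ℂ) 0 0 (x • 1 : Matrix l l ℂ) := by
  rw [← fromBlocks_one, fromBlocks_smul]
  simp

lemma fromBlocks_sub (a a' : Matrix k k ℂ) (b b' : Matrix k l ℂ) (c c' : Matrix l k ℂ)
    (d d' : Matrix l l ℂ) :
    fromBlocks a b c d - fromBlocks a' b' c' d' =
      fromBlocks (a - a') (b - b') (c - c') (d - d') := by
  ext (i | i) (j | j) <;> simp [fromBlocks]

lemma spectrum_fromBlocks (S : Matrix k k ℂ) (T : Matrix l l ℂ) :
    spectrum ℝ (fromBlocks S 0 0 T) = spectrum ℝ S ∪ spectrum ℝ T := by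
  ext x
  have h1 : algebraMap ℝ (Matrix (k ⊕ l) (k ⊕ l) ℂ) x - fromBlocks S 0 0 T
      = fromBlocks (algebraMap ℝ (Matrix k k ℂ) x - S) 0 0
          (algebraMap ℝ (Matrix l l ℂ) x - T) := by
    simp only [Algebra.algebraMap_eq_smul_one]
    rw [smul_one_fromBlocks, fromBlocks_sub, sub_zero, sub_zero]
  simp only [spectrum.mem_iff, Set.mem_union, h1, isUnit_fromBlocks_iff]
  tauto

lemma isHermitian_fromBlocks {S : Matrix k k ℂ} {T : Matrix l l ℂ}
    (hS : S.IsHermitian) (hT : T.IsHermitian) : (fromBlocks S 0 0 T).IsHermitian := by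
  unfold Matrix.IsHermitian at *
  rw [fromBlocks_conjTranspose, hS, hT, conjTranspose_zero, conjTranspose_zero]

lemma isHermitian_rsmul {M : Matrix k k ℂ} (hM : M.IsHermitian) (c : ℝ) :
    (c • M).IsHermitian := by
  unfold Matrix.IsHermitian at *
  rw [conjTranspose_smul, star_trivial, hM]

lemma posSemidef_rsmul {M : Matrix k k ℂ} (hM : M.PosSemidef) {c : ℝ} (hc : 0 ≤ c) :
    (c • M).PosSemidef := by
  rw [posSemidef_iff_dotProduct_mulVec]
  refine ⟨isHermitian_rsmul hM.1 c, fun x => ?_⟩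
  rw [smul_mulVec, dotProduct_smul]
  have h := (posSemidef_iff_dotProduct_mulVec.mp hM).2 x
  rw [Complex.real_smul]
  exact mul_nonneg (by exact_mod_cast hc) h

/-- Conjugation by a coisometry as a star algebra homomorphism. -/
noncomputable def conjSAH (U : Matrix k k ℂ) (h : U * Uᴴ = 1) :
    Matrix k k ℂ →⋆ₐ[ℂ] Matrix k k ℂ where
  toFun M := U * M * Uᴴ
  map_one' := by show U * 1 * Uᴴ = 1; rw [Matrix.mul_one, h]
  map_mul' M N := by
    have h' : Uᴴ * U = 1 := mul_eq_one_comm.mp h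
    calc U * (M * N) * Uᴴ = U * M * (Uᴴ * U) * N * Uᴴ := by
          rw [h', Matrix.mul_one]; noncomm_ring
      _ = U * M * Uᴴ * (U * N * Uᴴ) := by noncomm_ring
  map_zero' := by simp
  map_add' M N := by
    show U * (M + N) * Uᴴ = U * M * Uᴴ + U * N * Uᴴ
    rw [Matrix.mul_add, Matrix.add_mul]
  commutes' c := by
    simp only [Algebra.algebraMap_eq_smul_one]
    rw [Matrix.mul_smul, Matrix.mul_one, Matrix.smul_mul, h]
  map_star' M := by
    simp only [star_eq_conjTranspose, conjTranspose_mul, conjTranspose_conjTranspose]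
    noncomm_ring

lemma conjSAH_continuous (U : Matrix k k ℂ) (h : U * Uᴴ = 1) :
    Continuous (conjSAH U h) :=
  (continuous_mul_right Uᴴ).comp (continuous_mul_left U)

lemma isSelfAdjoint_conj {U M : Matrix k k ℂ} (hM : M.IsHermitian) :
    IsSelfAdjoint (U * M * Uᴴ) := by
  show star _ = _
  simp only [star_eq_conjTranspose, conjTranspose_mul, conjTranspose_conjTranspose, hM.eq]
  noncomm_ring

lemma spectrum_conj (U M : Matrix k k ℂ) (hU : U * Uᴴ = 1) :
    spectrum ℝ (U * M * Uᴴ) = spectrum ℝ M := by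
  have h' : Uᴴ * U = 1 := mul_eq_one_comm.mp hU
  let u : (Matrix k k ℂ)ˣ := ⟨U, Uᴴ, hU, h'⟩
  exact spectrum.units_conjugate (u := u)

lemma cfc_conj (f : ℝ → ℝ) (U M : Matrix k k ℂ) (hU : U * Uᴴ = 1) (hM : M.IsHermitian) :
    cfc f (U * M * Uᴴ) = U * cfc f M * Uᴴ :=
  (StarAlgHom.map_cfc (conjSAH U hU) f M (contOn f M) (conjSAH_continuous U hU) hM
    (isSelfAdjoint_conj hM)).symm

/-- Reindexing as a star algebra homomorphism. -/
def reindexSAH (e : k ≃ l) : Matrix k k ℂ →⋆ₐ[ℂ] Matrix l l ℂ :=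
  { (reindexAlgEquiv ℂ ℂ e).toAlgHom with
    map_star' := fun M => by
      simp [star_eq_conjTranspose, conjTranspose_submatrix] }

lemma reindexSAH_continuous (e : k ≃ l) : Continuous (reindexSAH e) := by
  show Continuous fun M : Matrix k k ℂ => (M.submatrix ⇑e.symm ⇑e.symm : Matrix l l ℂ)
  apply continuous_matrix
  intro i j
  exact (continuous_apply (e.symm j)).comp (continuous_apply (e.symm i))

lemma spectrum_reindex (e : k ≃ l) (M : Matrix k k ℂ) :
    spectrum ℝ (reindex e e M) = spectrum ℝ M :=
  AlgEquiv.spectrum_eq ((reindexAlgEquiv ℂ ℂ e).restrictScalars ℝ) M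

lemma cfc_reindex (f : ℝ → ℝ) (e : k ≃ l) (M : Matrix k k ℂ) (hM : M.IsHermitian) :
    cfc f (reindex e e M) = reindex e e (cfc f M) :=
  (StarAlgHom.map_cfc (reindexSAH e) f M (contOn f M) (reindexSAH_continuous e) hM
    (by show IsSelfAdjoint (reindex e e M)
        exact hM.submatrix _)).symm

lemma convexOn_any {I : Set ℝ} {f : ℝ → ℝ} (hconv : MatrixConvexOn I f)
    (S T : Matrix k k ℂ) (hS : S.IsHermitian) (hT : T.IsHermitian)
    (hsS : spectrum ℝ S ⊆ I) (hsT : spectrum ℝ T ⊆ I) (c : ℝ) (hc0 : 0 ≤ c) (hc1 : c ≤ 1) :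
    (c • cfc f S + (1 - c) • cfc f T - cfc f (c • S + (1 - c) • T)).PosSemidef := by
  let e : k ≃ Fin (Fintype.card k) := Fintype.equivFin k
  have hS' : (reindex e e S).IsHermitian := hS.submatrix _
  have hT' : (reindex e e T).IsHermitian := hT.submatrix _
  have hcomb : (c • S + (1 - c) • T).IsHermitian :=
    (isHermitian_rsmul hS c).add (isHermitian_rsmul hT (1 - c))
  have h := hconv (Fintype.card k) (reindex e e S) (reindex e e T) hS' hT'
    (by rw [spectrum_reindex]; exact hsS) (by rw [spectrum_reindex]; exact hsT) c hc0 hc1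
  have hlin : c • reindex e e S + (1 - c) • reindex e e T
      = reindex e e (c • S + (1 - c) • T) := by
    simp [reindex_apply, submatrix_add, submatrix_smul]
  rw [hlin, cfc_reindex f e _ hcomb, cfc_reindex f e S hS, cfc_reindex f e T hT] at h
  have hexpr : c • reindex e e (cfc f S) + (1 - c) • reindex e e (cfc f T)
      - reindex e e (cfc f (c • S + (1 - c) • T))
      = reindex e e (c • cfc f S + (1 - c) • cfc f T - cfc f (c • S + (1 - c) • T)) := by
    simp [reindex_apply, submatrix_add, submatrix_smul, submatrix_sub]
  rw [hexpr, reindex_apply] at h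
  exact (posSemidef_submatrix_equiv e.symm).mp h

/-- The block-diagonal functional calculus star algebra homomorphism. -/
noncomputable def blockHom {S : Matrix k k ℂ} {T : Matrix l l ℂ}
    (hS : IsSelfAdjoint S) (hT : IsSelfAdjoint T)
    (h1 : spectrum ℝ S ⊆ spectrum ℝ (fromBlocks S 0 0 T))
    (h2 : spectrum ℝ T ⊆ spectrum ℝ (fromBlocks S 0 0 T)) :
    C(spectrum ℝ (fromBlocks S 0 0 T), ℝ) →⋆ₐ[ℝ] Matrix (k ⊕ l) (k ⊕ l) ℂ where
  toFun g := fromBlocks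
    (cfcHom hS (g.comp ⟨Set.inclusion h1, continuous_id.subtype_map h1⟩)) 0 0
    (cfcHom hT (g.comp ⟨Set.inclusion h2, continuous_id.subtype_map h2⟩))
  map_one' := by
    show fromBlocks _ _ _ _ = 1
    rw [show ((1 : C(spectrum ℝ (fromBlocks S 0 0 T), ℝ)).comp
        ⟨Set.inclusion h1, continuous_id.subtype_map h1⟩) = 1 from rfl,
      show ((1 : C(spectrum ℝ (fromBlocks S 0 0 T), ℝ)).comp
        ⟨Set.inclusion h2, continuous_id.subtype_map h2⟩) = 1 from rfl,
      _root_.map_one, _root_.map_one, fromBlocks_one]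
  map_mul' g h := by
    show fromBlocks _ _ _ _ = fromBlocks _ _ _ _ * fromBlocks _ _ _ _
    rw [fromBlocks_multiply]
    simp [ContinuousMap.mul_comp, _root_.map_mul]
  map_zero' := by
    show fromBlocks _ _ _ _ = 0
    simp [ContinuousMap.zero_comp]
  map_add' g h := by
    show fromBlocks _ _ _ _ = fromBlocks _ _ _ _ + fromBlocks _ _ _ _
    rw [fromBlocks_add]
    simp [ContinuousMap.add_comp, _root_.map_add]
  commutes' r := by
    show fromBlocks _ _ _ _ = _
    have c1 : ((algebraMap ℝ C(spectrum ℝ (fromBlocks S 0 0 T), ℝ) r).comp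
        ⟨Set.inclusion h1, continuous_id.subtype_map h1⟩) = algebraMap ℝ _ r := rfl
    have c2 : ((algebraMap ℝ C(spectrum ℝ (fromBlocks S 0 0 T), ℝ) r).comp
        ⟨Set.inclusion h2, continuous_id.subtype_map h2⟩) = algebraMap ℝ _ r := rfl
    rw [c1, c2, AlgHomClass.commutes, AlgHomClass.commutes]
    rw [Algebra.algebraMap_eq_smul_one, Algebra.algebraMap_eq_smul_one,
      Algebra.algebraMap_eq_smul_one, smul_one_fromBlocks]
  map_star' g := by
    show fromBlocks _ _ _ _ = star (fromBlocks _ _ _ _)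
    rw [star_eq_conjTranspose, fromBlocks_conjTranspose]
    have s1 : ((star g).comp ⟨Set.inclusion h1, continuous_id.subtype_map h1⟩)
        = star (g.comp ⟨Set.inclusion h1, continuous_id.subtype_map h1⟩) := rfl
    have s2 : ((star g).comp ⟨Set.inclusion h2, continuous_id.subtype_map h2⟩)
        = star (g.comp ⟨Set.inclusion h2, continuous_id.subtype_map h2⟩) := rfl
    rw [s1, s2, map_star, map_star]
    simp [star_eq_conjTranspose]

lemma cfc_fromBlocks (f : ℝ → ℝ) (S : Matrix k k ℂ) (T : Matrix l l ℂ)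
    (hS : S.IsHermitian) (hT : T.IsHermitian) :
    cfc f (fromBlocks S 0 0 T) = fromBlocks (cfc f S) 0 0 (cfc f T) := by
  have h1 : spectrum ℝ S ⊆ spectrum ℝ (fromBlocks S 0 0 T) := by
    rw [spectrum_fromBlocks]; exact Set.subset_union_left
  have h2 : spectrum ℝ T ⊆ spectrum ℝ (fromBlocks S 0 0 T) := by
    rw [spectrum_fromBlocks]; exact Set.subset_union_right
  have hD' : IsSelfAdjoint (fromBlocks S 0 0 T) := isHermitian_fromBlocks hS hT
  have hS' : IsSelfAdjoint S := hS
  have hT' : IsSelfAdjoint T := hT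
  have hcont : Continuous (blockHom hS' hT' h1 h2) := by
    show Continuous fun g : C(spectrum ℝ (fromBlocks S 0 0 T), ℝ) => fromBlocks
      (cfcHom hS' (g.comp ⟨Set.inclusion h1, continuous_id.subtype_map h1⟩)) 0 0
      (cfcHom hT' (g.comp ⟨Set.inclusion h2, continuous_id.subtype_map h2⟩))
    have hc1 : Continuous fun g : C(spectrum ℝ (fromBlocks S 0 0 T), ℝ) =>
        cfcHom hS' (g.comp ⟨Set.inclusion h1, continuous_id.subtype_map h1⟩) :=
      (cfcHom_continuous hS').comp (ContinuousMap.continuous_precomp _)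
    have hc2 : Continuous fun g : C(spectrum ℝ (fromBlocks S 0 0 T), ℝ) =>
        cfcHom hT' (g.comp ⟨Set.inclusion h2, continuous_id.subtype_map h2⟩) :=
      (cfcHom_continuous hT').comp (ContinuousMap.continuous_precomp _)
    apply continuous_matrix
    rintro (i | i) (j | j)
    · exact ((continuous_apply j).comp (continuous_apply i)).comp hc1
    · exact continuous_const
    · exact continuous_const
    · exact ((continuous_apply j).comp (continuous_apply i)).comp hc2
  have hid : blockHom hS' hT' h1 h2
      (ContinuousMap.restrict (spectrum ℝ (fromBlocks S 0 0 T)) (ContinuousMap.id ℝ))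
      = fromBlocks S 0 0 T := by
    show fromBlocks _ _ _ _ = _
    have e1 : ((ContinuousMap.restrict (spectrum ℝ (fromBlocks S 0 0 T))
        (ContinuousMap.id ℝ)).comp ⟨Set.inclusion h1, continuous_id.subtype_map h1⟩)
        = ContinuousMap.restrict (spectrum ℝ S) (ContinuousMap.id ℝ) := rfl
    have e2 : ((ContinuousMap.restrict (spectrum ℝ (fromBlocks S 0 0 T))
        (ContinuousMap.id ℝ)).comp ⟨Set.inclusion h2, continuous_id.subtype_map h2⟩)
        = ContinuousMap.restrict (spectrum ℝ T) (ContinuousMap.id ℝ) := rfl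
    rw [e1, e2, cfcHom_id hS', cfcHom_id hT']
  have key := cfcHom_eq_of_continuous_of_map_id hD' (blockHom hS' hT' h1 h2) hcont hid
  rw [cfc_apply f _ hD' (contOn f _), key]
  rw [cfc_apply f S hS' (contOn f S), cfc_apply f T hT' (contOn f T)]
  show fromBlocks _ _ _ _ = fromBlocks _ _ _ _
  congr 1

lemma mem_spectrum_sub_smul (S : Matrix k k ℂ) (a x : ℝ) :
    x ∈ spectrum ℝ (S - a • 1) ↔ x + a ∈ spectrum ℝ S := by
  rw [spectrum.mem_iff, spectrum.mem_iff]
  have : algebraMap ℝ (Matrix k k ℂ) x - (S - a • 1)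
      = algebraMap ℝ (Matrix k k ℂ) (x + a) - S := by
    rw [Algebra.algebraMap_eq_smul_one, Algebra.algebraMap_eq_smul_one, add_smul]
    abel
  rw [this]

lemma posSemidef_sub_smul_one {S : Matrix k k ℂ} (hS : S.IsHermitian) {a : ℝ}
    (h : ∀ x ∈ spectrum ℝ S, a ≤ x) : (S - a • 1).PosSemidef := by
  have h1 : (S - a • 1).IsHermitian := hS.sub (isHermitian_rsmul isHermitian_one a)
  apply h1.posSemidef_iff_eigenvalues_nonneg.mpr
  intro i
  show (0 : ℝ) ≤ h1.eigenvalues i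
  have hmem := h1.eigenvalues_mem_spectrum_real i
  rw [mem_spectrum_sub_smul] at hmem
  linarith [h _ hmem]

lemma le_of_posSemidef_sub {S : Matrix k k ℂ} {a : ℝ} (h : (S - a • 1).PosSemidef) :
    ∀ x ∈ spectrum ℝ S, a ≤ x := by
  intro x hx
  have hx' : x - a ∈ spectrum ℝ (S - a • 1) := by
    rw [mem_spectrum_sub_smul, sub_add_cancel]; exact hx
  rw [h.1.spectrum_real_eq_range_eigenvalues] at hx'
  obtain ⟨i, hi⟩ := hx'
  have := h.eigenvalues_nonneg i
  rw [hi] at this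
  linarith

lemma posSemidef_smul_one_sub {S : Matrix k k ℂ} (hS : S.IsHermitian) {b : ℝ}
    (h : ∀ x ∈ spectrum ℝ S, x ≤ b) : (b • 1 - S).PosSemidef := by
  have h' : ∀ x ∈ spectrum ℝ (-S), -b ≤ x := by
    intro x hx
    rw [← spectrum.neg_eq, Set.mem_neg] at hx
    have := h _ hx
    linarith
  have := posSemidef_sub_smul_one hS.neg h'
  have e : (-S - (-b) • 1) = b • 1 - S := by
    rw [neg_smul]; abel
  rwa [e] at this

lemma le_of_posSemidef_sub' {S : Matrix k k ℂ} {b : ℝ} (h : (b • 1 - S).PosSemidef) :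
    ∀ x ∈ spectrum ℝ S, x ≤ b := by
  have e : (b • 1 - S) = -S - (-b) • 1 := by rw [neg_smul]; abel
  rw [e] at h
  intro x hx
  have hx' : -x ∈ spectrum ℝ (-S) := by rw [← spectrum.neg_eq]; exact Set.neg_mem_neg.mpr hx
  have := le_of_posSemidef_sub h _ hx'
  linarith

lemma spectrum_zero_subset : spectrum ℝ (0 : Matrix k k ℂ) ⊆ {0} := by
  intro x hx
  simp only [Set.mem_singleton_iff]
  by_contra hx0
  rw [spectrum.mem_iff, sub_zero] at hx
  exact hx (IsUnit.map (algebraMap ℝ (Matrix k k ℂ)) (isUnit_iff_ne_zero.mpr hx0))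

lemma cfc_zero_eq (f : ℝ → ℝ) : cfc f (0 : Matrix k k ℂ) = (f 0) • 1 := by
  have h1 : cfc f (0 : Matrix k k ℂ) = cfc (fun _ : ℝ => f 0) (0 : Matrix k k ℂ) := by
    apply cfc_congr
    intro x hx
    have := spectrum_zero_subset hx
    simp only [Set.mem_singleton_iff] at this
    rw [this]
  rw [h1, cfc_const (f 0) (0 : Matrix k k ℂ), Algebra.algebraMap_eq_smul_one]

open scoped MatrixOrder in
lemma psd_sqrt {M : Matrix k k ℂ} (h : M.PosSemidef) :
    ∃ C : Matrix k k ℂ, C.PosSemidef ∧ C * C = M :=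
  ⟨CFC.sqrt M, (CFC.sqrt_nonneg M).posSemidef, CFC.sqrt_mul_sqrt_self M h.nonneg⟩

end HPJ

open HPJ

set_option maxHeartbeats 2000000 in
/-- Hansen–Pedersen–Jensen inequality, subhomogeneous version: if `f` is matrix convex
on an interval `I` containing `0` with `f 0 ≤ 0`, and `Aᴴ A + Bᴴ B ≤ 1`, then
`f (Aᴴ T₁ A + Bᴴ T₂ B) ≤ Aᴴ f(T₁) A + Bᴴ f(T₂) B` in the Loewner order. -/
theorem hpj_subhomogeneous (I : Set ℝ) (hI : I.OrdConnected) (h0 : (0 : ℝ) ∈ I)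
    (f : ℝ → ℝ) (hf : ContinuousOn f I) (hf0 : f 0 ≤ 0)
    (hconv : MatrixConvexOn I f) (n : ℕ)
    (T₁ T₂ A B : Matrix (Fin n) (Fin n) ℂ)
    (hT₁ : T₁.IsHermitian) (hT₂ : T₂.IsHermitian)
    (hsp₁ : spectrum ℝ T₁ ⊆ I) (hsp₂ : spectrum ℝ T₂ ⊆ I)
    (hAB : (1 - (Aᴴ * A + Bᴴ * B)).PosSemidef) :
    (Aᴴ * cfc f T₁ * A + Bᴴ * cfc f T₂ * B
      - cfc f (Aᴴ * T₁ * A + Bᴴ * T₂ * B)).PosSemidef := by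
  classical
  rcases Nat.eq_zero_or_pos n with hn | hn
  · subst hn
    refine ⟨Subsingleton.elim _ _, fun x => ?_⟩
    have hx : x = 0 := Subsingleton.elim _ _
    simp [hx]
  haveI : Nonempty (Fin n) := Fin.pos_iff_nonempty.mp hn
  set F₁ := cfc f T₁ with hF₁def
  set F₂ := cfc f T₂ with hF₂def
  -- the defect operator
  obtain ⟨C, hCps', hC2'⟩ := HPJ.psd_sqrt hAB
  have hCps : C.PosSemidef := hCps'
  have hCh : Cᴴ = C := hCps.1.eq
  have hC2 : C * C = 1 - (Aᴴ * A + Bᴴ * B) := hC2'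
  have hCCps : (C * C).PosSemidef := by
    have := posSemidef_conjTranspose_mul_self C
    rwa [hCh] at this
  -- the isometry V
  set V : Matrix ((Fin n ⊕ Fin n) ⊕ Fin n) (Fin n) ℂ := fromRows (fromRows A B) C with hVdef
  have hVct : Vᴴ = fromCols (fromCols Aᴴ Bᴴ) Cᴴ := by
    rw [hVdef, conjTranspose_fromRows_eq_fromCols_conjTranspose,
      conjTranspose_fromRows_eq_fromCols_conjTranspose]
  have hVV : Vᴴ * V = 1 := by
    rw [hVct, hVdef, fromCols_mul_fromRows, fromCols_mul_fromRows, hCh, hC2]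
    abel
  -- the big Hermitian matrix X
  set T' : Matrix (Fin n ⊕ Fin n) (Fin n ⊕ Fin n) ℂ := fromBlocks T₁ 0 0 T₂ with hT'def
  set X : Matrix ((Fin n ⊕ Fin n) ⊕ Fin n) ((Fin n ⊕ Fin n) ⊕ Fin n) ℂ
    := fromBlocks T' 0 0 0 with hXdef
  have hT'h : T'.IsHermitian := isHermitian_fromBlocks hT₁ hT₂
  have hXh : X.IsHermitian := isHermitian_fromBlocks hT'h isHermitian_zero
  have hσXI : spectrum ℝ X ⊆ I := by
    rw [hXdef, spectrum_fromBlocks, hT'def, spectrum_fromBlocks]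
    exact Set.union_subset (Set.union_subset hsp₁ hsp₂)
      (spectrum_zero_subset.trans (Set.singleton_subset_iff.mpr h0))
  -- the self-adjoint unitary U
  set G1 : Matrix ((Fin n ⊕ Fin n) ⊕ Fin n) ((Fin n ⊕ Fin n) ⊕ Fin n) ℂ
    := 1 - V * Vᴴ with hG1def
  set U : Matrix (Fin n ⊕ ((Fin n ⊕ Fin n) ⊕ Fin n)) (Fin n ⊕ ((Fin n ⊕ Fin n) ⊕ Fin n)) ℂ
    := fromBlocks 0 Vᴴ V G1 with hUdef
  have hG1h : G1ᴴ = G1 := by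
    rw [hG1def, conjTranspose_sub, conjTranspose_one, conjTranspose_mul,
      conjTranspose_conjTranspose]
  have hUh : Uᴴ = U := by
    rw [hUdef, fromBlocks_conjTranspose, conjTranspose_zero, conjTranspose_conjTranspose, hG1h]
  have hG1V : G1 * V = 0 := by
    rw [hG1def, Matrix.sub_mul, Matrix.one_mul, Matrix.mul_assoc, hVV, Matrix.mul_one, sub_self]
  have hVG1 : Vᴴ * G1 = 0 := by
    rw [hG1def, Matrix.mul_sub, Matrix.mul_one, ← Matrix.mul_assoc, hVV, Matrix.one_mul, sub_self]
  have hG1G1 : G1 * G1 = G1 := by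
    nth_rewrite 2 [hG1def]
    rw [Matrix.mul_sub, Matrix.mul_one, ← Matrix.mul_assoc, hG1V, Matrix.zero_mul, sub_zero]
  have hUU : U * U = 1 := by
    rw [hUdef, fromBlocks_multiply]
    rw [hVV, hVG1, hG1V, hG1G1]
    have hBR : V * Vᴴ + G1 = 1 := by rw [hG1def]; abel
    simp only [Matrix.zero_mul, Matrix.mul_zero, add_zero, zero_add, hBR]
    rw [fromBlocks_one]
  have hUUt : U * Uᴴ = 1 := by rw [hUh]; exact hUU
  -- the dilated matrix
  set Xh : Matrix (Fin n ⊕ ((Fin n ⊕ Fin n) ⊕ Fin n)) (Fin n ⊕ ((Fin n ⊕ Fin n) ⊕ Fin n)) ℂ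
    := fromBlocks 0 0 0 X with hXhdef
  have hXhh : Xh.IsHermitian := isHermitian_fromBlocks isHermitian_zero hXh
  have hσXh : spectrum ℝ Xh ⊆ I := by
    rw [hXhdef, spectrum_fromBlocks]
    exact Set.union_subset (spectrum_zero_subset.trans (Set.singleton_subset_iff.mpr h0)) hσXI
  -- conjugation computation
  have hUcalc : ∀ (z : Matrix (Fin n) (Fin n) ℂ)
      (Y : Matrix ((Fin n ⊕ Fin n) ⊕ Fin n) ((Fin n ⊕ Fin n) ⊕ Fin n) ℂ),
      U * fromBlocks z 0 0 Y * U
        = fromBlocks (Vᴴ * Y * V) (Vᴴ * Y * G1) (G1 * Y * V) (V * z * Vᴴ + G1 * Y * G1) := by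
    intro z Y
    rw [hUdef, fromBlocks_multiply, fromBlocks_multiply]
    simp only [Matrix.zero_mul, Matrix.mul_zero, zero_add, add_zero, Matrix.mul_assoc]
  set M₁ := U * Xh * U with hM₁def
  have hM₁blocks : M₁ = fromBlocks (Vᴴ * X * V) (Vᴴ * X * G1) (G1 * X * V) (G1 * X * G1) := by
    rw [hM₁def, hXhdef, hUcalc]
    rw [Matrix.mul_zero, Matrix.zero_mul, zero_add]
  have hM₁h : M₁.IsHermitian := by
    unfold Matrix.IsHermitian
    rw [hM₁def]
    rw [conjTranspose_mul, conjTranspose_mul, hUh, hXhh.eq, Matrix.mul_assoc]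
  have hXhU : U * Xh * U = U * Xh * Uᴴ := by rw [hUh]
  have hσM₁ : spectrum ℝ M₁ = spectrum ℝ Xh := by
    rw [hM₁def, hXhU]; exact spectrum_conj U Xh hUUt
  -- the sign unitary W
  set W : Matrix (Fin n ⊕ ((Fin n ⊕ Fin n) ⊕ Fin n)) (Fin n ⊕ ((Fin n ⊕ Fin n) ⊕ Fin n)) ℂ
    := fromBlocks (-1) 0 0 1 with hWdef
  have hWh : Wᴴ = W := by
    rw [hWdef, fromBlocks_conjTranspose, conjTranspose_zero, conjTranspose_zero,
      conjTranspose_neg, conjTranspose_one, conjTranspose_one]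
  have hWWt : W * Wᴴ = 1 := by
    rw [hWh, hWdef, fromBlocks_multiply]
    simp only [Matrix.zero_mul, Matrix.mul_zero, add_zero, zero_add, Matrix.one_mul,
      neg_mul_neg, Matrix.mul_one]
    rw [fromBlocks_one]
  have hWcalc : ∀ (a : Matrix (Fin n) (Fin n) ℂ)
      (b : Matrix (Fin n) ((Fin n ⊕ Fin n) ⊕ Fin n) ℂ)
      (c : Matrix ((Fin n ⊕ Fin n) ⊕ Fin n) (Fin n) ℂ)
      (d : Matrix ((Fin n ⊕ Fin n) ⊕ Fin n) ((Fin n ⊕ Fin n) ⊕ Fin n) ℂ),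
      W * fromBlocks a b c d * W = fromBlocks a (-b) (-c) d := by
    intro a b c d
    rw [hWdef, fromBlocks_multiply, fromBlocks_multiply]
    simp only [Matrix.zero_mul, Matrix.mul_zero, zero_add, add_zero, Matrix.neg_mul,
      Matrix.mul_neg, Matrix.one_mul, Matrix.mul_one, neg_neg]
  set M₂ := W * M₁ * W with hM₂def
  have hM₂blocks : M₂ = fromBlocks (Vᴴ * X * V) (-(Vᴴ * X * G1)) (-(G1 * X * V))
      (G1 * X * G1) := by
    rw [hM₂def, hM₁blocks, hWcalc]
  have hM₂W : W * M₁ * W = W * M₁ * Wᴴ := by rw [hWh]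
  have hM₂h : M₂.IsHermitian := by
    have h := isSelfAdjoint_conj (U := W) hM₁h
    rw [hWh] at h
    exact h
  have hσM₂ : spectrum ℝ M₂ = spectrum ℝ M₁ := by
    rw [hM₂def, hM₂W]; exact spectrum_conj W M₁ hWWt
  have hσM₁I : spectrum ℝ M₁ ⊆ I := by rw [hσM₁]; exact hσXh
  have hσM₂I : spectrum ℝ M₂ ⊆ I := by rw [hσM₂]; exact hσM₁I
  -- spectral bounds
  set ev := hXhh.eigenvalues with hev
  set s : Finset ℝ := Finset.univ.image ev with hsdef
  have hsne : s.Nonempty := Finset.image_nonempty.mpr Finset.univ_nonempty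
  set a := s.min' hsne with hadef
  set b := s.max' hsne with hbdef
  have haσ : a ∈ spectrum ℝ Xh := by
    obtain ⟨i, -, hi⟩ := Finset.mem_image.mp (s.min'_mem hsne)
    rw [hadef, ← hi]
    exact hXhh.eigenvalues_mem_spectrum_real i
  have hbσ : b ∈ spectrum ℝ Xh := by
    obtain ⟨i, -, hi⟩ := Finset.mem_image.mp (s.max'_mem hsne)
    rw [hbdef, ← hi]
    exact hXhh.eigenvalues_mem_spectrum_real i
  have haI : a ∈ I := hσXh haσ
  have hbI : b ∈ I := hσXh hbσ
  have hbnd : ∀ x ∈ spectrum ℝ Xh, a ≤ x ∧ x ≤ b := by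
    intro x hx
    rw [hXhh.spectrum_real_eq_range_eigenvalues] at hx
    obtain ⟨i, rfl⟩ := hx
    exact ⟨s.min'_le _ (Finset.mem_image_of_mem ev (Finset.mem_univ i)),
      s.le_max' _ (Finset.mem_image_of_mem ev (Finset.mem_univ i))⟩
  have hXha : (Xh - a • 1).PosSemidef :=
    posSemidef_sub_smul_one hXhh (fun x hx => (hbnd x hx).1)
  have hXhb : (b • 1 - Xh).PosSemidef :=
    posSemidef_smul_one_sub hXhh (fun x hx => (hbnd x hx).2)
  have hconjsub : ∀ (c : ℝ) (Z G : Matrix (Fin n ⊕ ((Fin n ⊕ Fin n) ⊕ Fin n))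
      (Fin n ⊕ ((Fin n ⊕ Fin n) ⊕ Fin n)) ℂ), G * Gᴴ = 1 →
      G * (Z - c • 1) * Gᴴ = G * Z * Gᴴ - c • 1 := by
    intro c Z G hG
    rw [Matrix.mul_sub, Matrix.sub_mul, Matrix.mul_smul, Matrix.mul_one, Matrix.smul_mul, hG]
  have hconjsub' : ∀ (c : ℝ) (Z G : Matrix (Fin n ⊕ ((Fin n ⊕ Fin n) ⊕ Fin n))
      (Fin n ⊕ ((Fin n ⊕ Fin n) ⊕ Fin n)) ℂ), G * Gᴴ = 1 →
      G * (c • 1 - Z) * Gᴴ = c • 1 - G * Z * Gᴴ := by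
    intro c Z G hG
    rw [Matrix.mul_sub, Matrix.sub_mul, Matrix.mul_smul, Matrix.mul_one, Matrix.smul_mul, hG]
  have hM₁a : (M₁ - a • 1).PosSemidef := by
    have := hXha.mul_mul_conjTranspose_same U
    rwa [hconjsub a Xh U hUUt, ← hXhU, ← hM₁def] at this
  have hM₁b : (b • 1 - M₁).PosSemidef := by
    have := hXhb.mul_mul_conjTranspose_same U
    rwa [hconjsub' b Xh U hUUt, ← hXhU, ← hM₁def] at this
  have hM₂a : (M₂ - a • 1).PosSemidef := by
    have := hM₁a.mul_mul_conjTranspose_same W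
    rwa [hconjsub a M₁ W hWWt, ← hM₂W, ← hM₂def] at this
  have hM₂b : (b • 1 - M₂).PosSemidef := by
    have := hM₁b.mul_mul_conjTranspose_same W
    rwa [hconjsub' b M₁ W hWWt, ← hM₂W, ← hM₂def] at this
  -- the averaged matrix
  set P : Matrix (Fin n) (Fin n) ℂ := Aᴴ * T₁ * A + Bᴴ * T₂ * B with hPdef
  set Q := G1 * X * G1 with hQdef
  have hVXV : Vᴴ * X * V = P := by
    rw [hVct, hXdef, hT'def, hVdef, hPdef]
    rw [Matrix.mul_assoc, fromBlocks_mul_fromRows, fromBlocks_mul_fromRows]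
    simp only [Matrix.zero_mul, Matrix.mul_zero, add_zero, zero_add, fromRows_zero]
    rw [fromCols_mul_fromRows, fromCols_mul_fromRows]
    rw [Matrix.mul_zero, add_zero, ← Matrix.mul_assoc, ← Matrix.mul_assoc]
  have hMeq : (1 / 2 : ℝ) • M₁ + (1 / 2 : ℝ) • M₂ = fromBlocks P 0 0 Q := by
    rw [hM₁blocks, hM₂blocks, fromBlocks_smul, fromBlocks_smul, fromBlocks_add]
    have e11 : (1/2 : ℝ) • (Vᴴ * X * V) + (1/2 : ℝ) • (Vᴴ * X * V) = Vᴴ * X * V := by module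
    have e12 : (1/2 : ℝ) • (Vᴴ * X * G1) + (1/2 : ℝ) • (-(Vᴴ * X * G1))
        = (0 : Matrix (Fin n) ((Fin n ⊕ Fin n) ⊕ Fin n) ℂ) := by module
    have e21 : (1/2 : ℝ) • (G1 * X * V) + (1/2 : ℝ) • (-(G1 * X * V))
        = (0 : Matrix ((Fin n ⊕ Fin n) ⊕ Fin n) (Fin n) ℂ) := by module
    have e22 : (1/2 : ℝ) • Q + (1/2 : ℝ) • Q = Q := by module
    rw [e11, e12, e21, e22, hVXV]
  have hPh : P.IsHermitian := by
    rw [hPdef]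
    exact (isHermitian_conjTranspose_mul_mul A hT₁).add (isHermitian_conjTranspose_mul_mul B hT₂)
  have hQh : Q.IsHermitian := by
    have := isHermitian_conjTranspose_mul_mul G1 hXh
    rwa [hG1h, ← hQdef] at this
  -- spectrum of the averaged matrix
  have hMa : (fromBlocks P 0 0 Q - a • (1 : Matrix (Fin n ⊕ ((Fin n ⊕ Fin n) ⊕ Fin n))
      (Fin n ⊕ ((Fin n ⊕ Fin n) ⊕ Fin n)) ℂ)).PosSemidef := by
    have heq : fromBlocks P 0 0 Q - a • (1 : Matrix (Fin n ⊕ ((Fin n ⊕ Fin n) ⊕ Fin n))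
        (Fin n ⊕ ((Fin n ⊕ Fin n) ⊕ Fin n)) ℂ)
        = (1 / 2 : ℝ) • (M₁ - a • 1) + (1 / 2 : ℝ) • (M₂ - a • 1) := by
      rw [← hMeq]; module
    rw [heq]
    exact (posSemidef_rsmul hM₁a (by norm_num)).add (posSemidef_rsmul hM₂a (by norm_num))
  have hMb : (b • (1 : Matrix (Fin n ⊕ ((Fin n ⊕ Fin n) ⊕ Fin n))
      (Fin n ⊕ ((Fin n ⊕ Fin n) ⊕ Fin n)) ℂ) - fromBlocks P 0 0 Q).PosSemidef := by
    have heq : b • (1 : Matrix (Fin n ⊕ ((Fin n ⊕ Fin n) ⊕ Fin n))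
        (Fin n ⊕ ((Fin n ⊕ Fin n) ⊕ Fin n)) ℂ) - fromBlocks P 0 0 Q
        = (1 / 2 : ℝ) • (b • 1 - M₁) + (1 / 2 : ℝ) • (b • 1 - M₂) := by
      rw [← hMeq]; module
    rw [heq]
    exact (posSemidef_rsmul hM₁b (by norm_num)).add (posSemidef_rsmul hM₂b (by norm_num))
  have hσM : spectrum ℝ (fromBlocks P 0 0 Q) ⊆ I := by
    intro x hx
    exact hI.out haI hbI ⟨le_of_posSemidef_sub hMa x hx, le_of_posSemidef_sub' hMb x hx⟩
  have hσP : spectrum ℝ P ⊆ I := by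
    refine Set.Subset.trans ?_ hσM
    rw [spectrum_fromBlocks]
    exact Set.subset_union_left
  -- functional calculus computations
  have hcfcT' : cfc f T' = fromBlocks F₁ 0 0 F₂ := by
    rw [hT'def]; exact cfc_fromBlocks f T₁ T₂ hT₁ hT₂
  have hcfcX : cfc f X = fromBlocks (fromBlocks F₁ 0 0 F₂) 0 0 ((f 0) • 1) := by
    rw [hXdef, cfc_fromBlocks f T' 0 hT'h isHermitian_zero, hcfcT', cfc_zero_eq]
  have hcfcXh : cfc f Xh
      = fromBlocks ((f 0) • 1) 0 0 (fromBlocks (fromBlocks F₁ 0 0 F₂) 0 0 ((f 0) • 1)) := by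
    rw [hXhdef, cfc_fromBlocks f 0 X isHermitian_zero hXh, hcfcX, cfc_zero_eq]
  set FX : Matrix ((Fin n ⊕ Fin n) ⊕ Fin n) ((Fin n ⊕ Fin n) ⊕ Fin n) ℂ
    := fromBlocks (fromBlocks F₁ 0 0 F₂) 0 0 ((f 0) • 1) with hFXdef
  have hcfcM₁ : cfc f M₁ = fromBlocks (Vᴴ * FX * V) (Vᴴ * FX * G1) (G1 * FX * V)
      (V * ((f 0) • (1 : Matrix (Fin n) (Fin n) ℂ)) * Vᴴ + G1 * FX * G1) := by
    rw [hM₁def, hXhU, cfc_conj f U Xh hUUt hXhh, hcfcXh, hUh, hUcalc]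
  have hcfcM₂ : cfc f M₂ = fromBlocks (Vᴴ * FX * V) (-(Vᴴ * FX * G1)) (-(G1 * FX * V))
      (V * ((f 0) • (1 : Matrix (Fin n) (Fin n) ℂ)) * Vᴴ + G1 * FX * G1) := by
    rw [hM₂def, hM₂W, cfc_conj f W M₁ hWWt hM₁h, hcfcM₁, hWh, hWcalc]
  have hcfcM : cfc f (fromBlocks P 0 0 Q) = fromBlocks (cfc f P) 0 0 (cfc f Q) :=
    cfc_fromBlocks f P Q hPh hQh
  -- apply convexity
  have hGpsd := convexOn_any hconv M₁ M₂ hM₁h hM₂h hσM₁I hσM₂I (1/2) (by norm_num) (by norm_num)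
  rw [show (1 : ℝ) - 1/2 = 1/2 by norm_num, hMeq] at hGpsd
  have hsub := hGpsd.submatrix Sum.inl
  -- compute the top-left corner
  have hVFX : Vᴴ * FX * V = Aᴴ * F₁ * A + Bᴴ * F₂ * B + (f 0) • (C * C) := by
    rw [hVct, hFXdef, hVdef]
    rw [Matrix.mul_assoc, fromBlocks_mul_fromRows, fromBlocks_mul_fromRows]
    simp only [Matrix.zero_mul, Matrix.mul_zero, add_zero, zero_add]
    rw [fromCols_mul_fromRows, fromCols_mul_fromRows]
    rw [hCh, Matrix.smul_mul, Matrix.one_mul, mul_smul_comm,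
      ← Matrix.mul_assoc, ← Matrix.mul_assoc]
  have hTLeq : ((1/2 : ℝ) • cfc f M₁ + (1/2 : ℝ) • cfc f M₂
      - cfc f (fromBlocks P 0 0 Q)).submatrix Sum.inl Sum.inl
      = (1/2 : ℝ) • (Vᴴ * FX * V) + (1/2 : ℝ) • (Vᴴ * FX * V) - cfc f P := by
    rw [hcfcM₁, hcfcM₂, hcfcM]
    ext i j
    simp [Matrix.submatrix_apply, Matrix.fromBlocks_apply₁₁, Matrix.add_apply,
      Matrix.sub_apply, Matrix.smul_apply]
  rw [hTLeq] at hsub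
  have hfinal : Aᴴ * F₁ * A + Bᴴ * F₂ * B - cfc f P
      = ((1/2 : ℝ) • (Vᴴ * FX * V) + (1/2 : ℝ) • (Vᴴ * FX * V) - cfc f P)
        + (-(f 0)) • (C * C) := by
    rw [hVFX]; module
  rw [hfinal]
  exact hsub.add (posSemidef_rsmul hCCps (by linarith))
end

section
/- (Lieb–Ruskai) The quantum relative entropy S(ρ‖σ) = Trace(ρ log ρ - ρ log σ) is jointly convex on pairs of strictly positive definite n×n density matrices: for 0 ≤ c ≤ 1, S(cρ₁+(1-c)ρ₂ ‖ cσ₁+(1-c)σ₂) ≤ c·S(ρ₁‖σ₁) + (1-c)·S(ρ₂‖σ₂). -/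
open Matrix ComplexOrder MeasureTheory Set Filter

section LiebRuskaiAux
variable {n : ℕ} {ρ σ : Matrix (Fin n) (Fin n) ℂ}

lemma scalar_deriv {a b : ℝ} (ha : 0 < a) (hb : 0 < b) {l : ℝ} (hl : 0 ≤ l) :
    HasDerivAt (fun t => a * Real.log (t * a + b) - a * Real.log (1 + t))
      (a ^ 2 / (l * a + b) - a / (1 + l)) l := by
  have h1 : (0:ℝ) < l * a + b := by nlinarith
  have h2 : (0:ℝ) < 1 + l := by linarith
  have d1 : HasDerivAt (fun t : ℝ => t * a + b) a l := by
    simpa using ((hasDerivAt_id l).mul_const a).add_const b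
  have d2 : HasDerivAt (fun t : ℝ => 1 + t) 1 l := by
    simpa using (hasDerivAt_id l).const_add 1
  have e1 : HasDerivAt (fun t => Real.log (t * a + b)) (a / (l * a + b)) l := by
    have := (Real.hasDerivAt_log (ne_of_gt h1)).comp l d1
    simpa [div_eq_inv_mul, Function.comp_def] using this
  have e2 : HasDerivAt (fun t => Real.log (1 + t)) (1 / (1 + l)) l := by
    have := (Real.hasDerivAt_log (ne_of_gt h2)).comp l d2
    simpa [div_eq_inv_mul, Function.comp_def] using this
  have := (e1.const_mul a).sub (e2.const_mul a)
  rw [show a ^ 2 / (l * a + b) - a / (1 + l) = a * (a / (l * a + b)) - a * (1 / (1 + l)) by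
    rw [pow_two, mul_div_assoc, mul_one_div]]
  exact this

lemma scalar_tendsto {a b : ℝ} (ha : 0 < a) (hb : 0 < b) :
    Tendsto (fun t => a * Real.log (t * a + b) - a * Real.log (1 + t)) atTop
      (nhds (a * Real.log a)) := by
  have h : Tendsto (fun t : ℝ => (t * a + b) / (1 + t)) atTop (nhds a) := by
    have h1 : Tendsto (fun t : ℝ => (a + b * t⁻¹) / (t⁻¹ + 1)) atTop (nhds a) := by
      have hinv : Tendsto (fun t : ℝ => t⁻¹) atTop (nhds 0) := tendsto_inv_atTop_zero
      have hnum : Tendsto (fun t : ℝ => a + b * t⁻¹) atTop (nhds a) := by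
        simpa using (tendsto_const_nhds.add (tendsto_const_nhds.mul hinv))
      have hden : Tendsto (fun t : ℝ => t⁻¹ + 1) atTop (nhds 1) := by
        simpa using hinv.add tendsto_const_nhds
      have := hnum.div hden one_ne_zero
      rw [div_one] at this
      exact this
    refine h1.congr' ?_
    filter_upwards [eventually_gt_atTop (0:ℝ)] with t ht
    have h2 : (0:ℝ) < 1 + t := by linarith
    field_simp
  have hlog : Tendsto (fun t : ℝ => Real.log ((t * a + b) / (1 + t))) atTop
      (nhds (Real.log a)) := ((Real.continuousAt_log (ne_of_gt ha)).tendsto).comp h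
  have := hlog.const_mul a
  refine this.congr' ?_
  filter_upwards [eventually_gt_atTop (0:ℝ)] with t ht
  have h1 : (0:ℝ) < t * a + b := by nlinarith
  have h2 : (0:ℝ) < 1 + t := by linarith
  rw [Real.log_div (ne_of_gt h1) (ne_of_gt h2), mul_sub]

lemma scalar_integral {a b : ℝ} (ha : 0 < a) (hb : 0 < b) :
    IntegrableOn (fun l => a ^ 2 / (l * a + b) - a / (1 + l)) (Ioi (0:ℝ)) ∧
    ∫ l in Ioi (0:ℝ), (a ^ 2 / (l * a + b) - a / (1 + l)) = a * Real.log a - a * Real.log b := by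
  have hderiv : ∀ l ∈ Ici (0:ℝ), HasDerivAt (fun t => a * Real.log (t * a + b) - a * Real.log (1 + t))
      (a ^ 2 / (l * a + b) - a / (1 + l)) l := fun l hl => scalar_deriv ha hb hl
  have htend := scalar_tendsto ha hb
  have hg0 : a * Real.log (0 * a + b) - a * Real.log (1 + 0) = a * Real.log b := by
    norm_num
  rcases le_or_gt b a with hba | hab
  · have hpos : ∀ l ∈ Ioi (0:ℝ), 0 ≤ a ^ 2 / (l * a + b) - a / (1 + l) := by
      intro l hl
      have hl0 : (0:ℝ) < l := hl
      have h1 : (0:ℝ) < l * a + b := by nlinarith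
      have h2 : (0:ℝ) < 1 + l := by linarith
      rw [sub_nonneg, div_le_div_iff₀ h2 h1]
      nlinarith
    refine ⟨integrableOn_Ioi_deriv_of_nonneg' hderiv hpos htend, ?_⟩
    rw [integral_Ioi_of_hasDerivAt_of_nonneg' hderiv hpos htend, hg0]
  · have hneg : ∀ l ∈ Ioi (0:ℝ), a ^ 2 / (l * a + b) - a / (1 + l) ≤ 0 := by
      intro l hl
      have hl0 : (0:ℝ) < l := hl
      have h1 : (0:ℝ) < l * a + b := by nlinarith
      have h2 : (0:ℝ) < 1 + l := by linarith
      rw [sub_nonpos, div_le_div_iff₀ h1 h2]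
      nlinarith
    refine ⟨integrableOn_Ioi_deriv_of_nonpos' hderiv hneg htend, ?_⟩
    rw [integral_Ioi_of_hasDerivAt_of_nonpos' hderiv hneg htend, hg0]

noncomputable def Gm (hρ : ρ.IsHermitian) (hσ : σ.IsHermitian) : Matrix (Fin n) (Fin n) ℂ :=
  (hρ.eigenvectorUnitary : Matrix (Fin n) (Fin n) ℂ)ᴴ * (hσ.eigenvectorUnitary : Matrix (Fin n) (Fin n) ℂ)

noncomputable def Fq (hρ : ρ.IsHermitian) (hσ : σ.IsHermitian) (l : ℝ) : ℝ :=
  ∑ i, ∑ j, (hρ.eigenvalues i)^2 * Complex.normSq (Gm hρ hσ i j) / (l * hρ.eigenvalues i + hσ.eigenvalues j)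

noncomputable def Zm (hρ : ρ.IsHermitian) (hσ : σ.IsHermitian) (l : ℝ) : Matrix (Fin n) (Fin n) ℂ :=
  (hρ.eigenvectorUnitary : Matrix (Fin n) (Fin n) ℂ) *
    (Matrix.of fun i j => ((hρ.eigenvalues i : ℂ) * Gm hρ hσ i j) /
      ((l * hρ.eigenvalues i + hσ.eigenvalues j : ℝ) : ℂ)) *
    (hσ.eigenvectorUnitary : Matrix (Fin n) (Fin n) ℂ)ᴴ

lemma star_coe_unitary (hρ : ρ.IsHermitian) :
    (hρ.eigenvectorUnitary : Matrix (Fin n) (Fin n) ℂ)ᴴ * (hρ.eigenvectorUnitary : Matrix (Fin n) (Fin n) ℂ) = 1 := by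
  rw [← Matrix.star_eq_conjTranspose]
  exact Unitary.coe_star_mul_self hρ.eigenvectorUnitary

lemma coe_unitary_star (hρ : ρ.IsHermitian) :
    (hρ.eigenvectorUnitary : Matrix (Fin n) (Fin n) ℂ) * (hρ.eigenvectorUnitary : Matrix (Fin n) (Fin n) ℂ)ᴴ = 1 := by
  rw [← Matrix.star_eq_conjTranspose]
  exact Unitary.coe_mul_star_self hρ.eigenvectorUnitary

lemma solveZ (hρ : ρ.PosDef) (hσ : σ.PosDef) {l : ℝ} (hl : 0 ≤ l) :
    (l : ℂ) • (ρ * Zm hρ.1 hσ.1 l) + Zm hρ.1 hσ.1 l * σ = ρ := by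
  set U : Matrix (Fin n) (Fin n) ℂ := (hρ.1.eigenvectorUnitary : Matrix (Fin n) (Fin n) ℂ) with hU
  set V : Matrix (Fin n) (Fin n) ℂ := (hσ.1.eigenvectorUnitary : Matrix (Fin n) (Fin n) ℂ) with hV
  set a : Fin n → ℝ := hρ.1.eigenvalues with ha
  set b : Fin n → ℝ := hσ.1.eigenvalues with hb
  set W : Matrix (Fin n) (Fin n) ℂ :=
    Matrix.of fun i j => ((a i : ℂ) * Gm hρ.1 hσ.1 i j) / ((l * a i + b j : ℝ) : ℂ) with hW
  have hρs : ρ = U * Matrix.diagonal (RCLike.ofReal ∘ a) * Uᴴ := by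
    rw [hU, ha, ← Matrix.star_eq_conjTranspose]; exact hρ.1.spectral_theorem
  have hσs : σ = V * Matrix.diagonal (RCLike.ofReal ∘ b) * Vᴴ := by
    rw [hV, hb, ← Matrix.star_eq_conjTranspose]; exact hσ.1.spectral_theorem
  have hZ : Zm hρ.1 hσ.1 l = U * W * Vᴴ := rfl
  have h1 : ρ * Zm hρ.1 hσ.1 l = U * (Matrix.diagonal (RCLike.ofReal ∘ a) * W) * Vᴴ := by
    rw [hZ]; conv_lhs => rw [hρs]
    simp only [← Matrix.mul_assoc]
    rw [Matrix.mul_assoc (U * Matrix.diagonal (RCLike.ofReal ∘ a)) Uᴴ U, star_coe_unitary hρ.1,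
      Matrix.mul_one]
  have h2 : Zm hρ.1 hσ.1 l * σ = U * (W * Matrix.diagonal (RCLike.ofReal ∘ b)) * Vᴴ := by
    rw [hZ]; conv_lhs => rw [hσs]
    simp only [← Matrix.mul_assoc]
    rw [Matrix.mul_assoc (U * W) Vᴴ V, star_coe_unitary hσ.1, Matrix.mul_one]
  rw [h1, h2, ← Matrix.smul_mul, ← Matrix.mul_smul, ← Matrix.add_mul, ← Matrix.mul_add]
  have h3 : (l : ℂ) • (Matrix.diagonal (RCLike.ofReal ∘ a) * W) + W * Matrix.diagonal (RCLike.ofReal ∘ b)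
      = Matrix.diagonal (RCLike.ofReal ∘ a) * Gm hρ.1 hσ.1 := by
    ext i j
    have hc : (0 : ℝ) < l * a i + b j := by
      have := hρ.eigenvalues_pos i
      have := hσ.eigenvalues_pos j
      have : 0 ≤ l * a i := mul_nonneg hl (le_of_lt (hρ.eigenvalues_pos i))
      linarith [hσ.eigenvalues_pos j]
    have hcne : ((l * a i + b j : ℝ) : ℂ) ≠ 0 := by
      exact_mod_cast Complex.ofReal_ne_zero.mpr (ne_of_gt hc)
    simp only [Matrix.add_apply, Matrix.smul_apply, Matrix.diagonal_mul, Matrix.mul_diagonal,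
      hW, Matrix.of_apply, Function.comp_apply, RCLike.ofReal_alg, Complex.real_smul]
    push_cast at hcne ⊢
    have hd : ((a i : ℂ) * l + b j) * ((a i : ℂ) * l + b j)⁻¹ = 1 :=
      mul_inv_cancel₀ (by rwa [mul_comm] at hcne)
    linear_combination (↑(a i) * Gm hρ.1 hσ.1 i j) * hd
  rw [h3]
  calc U * (Matrix.diagonal (RCLike.ofReal ∘ a) * Gm hρ.1 hσ.1) * Vᴴ
      = (U * Matrix.diagonal (RCLike.ofReal ∘ a) * Uᴴ) * (V * Vᴴ) := by
        simp only [Gm, ← hU, ← hV, ← Matrix.mul_assoc]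
    _ = ρ := by rw [coe_unitary_star hσ.1, Matrix.mul_one, ← hρs]

lemma rcCoe : (RCLike.ofReal : ℝ → ℂ) = Complex.ofReal := rfl

lemma traceZ (hρ : ρ.IsHermitian) (hσ : σ.IsHermitian) (l : ℝ) :
    Matrix.trace (ρ * Zm hρ hσ l) = (Fq hρ hσ l : ℂ) := by
  set U : Matrix (Fin n) (Fin n) ℂ := (hρ.eigenvectorUnitary : Matrix (Fin n) (Fin n) ℂ) with hU
  set V : Matrix (Fin n) (Fin n) ℂ := (hσ.eigenvectorUnitary : Matrix (Fin n) (Fin n) ℂ) with hV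
  set a : Fin n → ℝ := hρ.eigenvalues with ha
  set b : Fin n → ℝ := hσ.eigenvalues with hb
  set W : Matrix (Fin n) (Fin n) ℂ :=
    Matrix.of fun i j => ((a i : ℂ) * Gm hρ hσ i j) / ((l * a i + b j : ℝ) : ℂ) with hW
  have hρs : ρ = U * Matrix.diagonal (RCLike.ofReal ∘ a) * Uᴴ := by
    rw [hU, ha, ← Matrix.star_eq_conjTranspose]; exact hρ.spectral_theorem
  have h1 : ρ * Zm hρ hσ l = U * (Matrix.diagonal (RCLike.ofReal ∘ a) * W) * Vᴴ := by
    show ρ * (U * W * Vᴴ) = _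
    conv_lhs => rw [hρs]
    simp only [← Matrix.mul_assoc]
    rw [Matrix.mul_assoc (U * Matrix.diagonal (RCLike.ofReal ∘ a)) Uᴴ U, star_coe_unitary hρ,
      Matrix.mul_one]
  have h2 : Vᴴ * U = (Gm hρ hσ)ᴴ := by
    rw [Gm, Matrix.conjTranspose_mul, Matrix.conjTranspose_conjTranspose]
  have h4 : Matrix.trace (ρ * Zm hρ hσ l)
      = Matrix.trace (Matrix.diagonal (RCLike.ofReal ∘ a) * W * (Gm hρ hσ)ᴴ) := by
    rw [h1, Matrix.trace_mul_cycle, h2, Matrix.trace_mul_comm, Matrix.mul_assoc]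
  rw [h4, Matrix.trace, Fq, Complex.ofReal_sum]
  refine Finset.sum_congr rfl fun i _ => ?_
  rw [Complex.ofReal_sum, Matrix.diag_apply, Matrix.mul_apply]
  refine Finset.sum_congr rfl fun j _ => ?_
  rw [Matrix.diagonal_mul, Matrix.conjTranspose_apply, hW]
  simp only [Matrix.of_apply, Function.comp_apply, rcCoe]
  have hm : star (Gm hρ hσ i j) * Gm hρ hσ i j = (Complex.normSq (Gm hρ hσ i j) : ℂ) := by
    rw [mul_comm]; exact Complex.mul_conj _
  rcases eq_or_ne (l * a i + b j) 0 with hc | hc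
  · have hc' : l * hρ.eigenvalues i + hσ.eigenvalues j = 0 := hc
    simp [hc', ha, hb]
  · rw [show (↑(a i) * (↑(a i) * Gm hρ hσ i j / ↑(l * a i + b j)) * star (Gm hρ hσ i j) : ℂ)
        = (↑(a i) * ↑(a i) * (star (Gm hρ hσ i j) * Gm hρ hσ i j)) / ↑(l * a i + b j) by ring]
    rw [hm]
    push_cast
    ring

lemma retrace_CtC_nonneg (B : Matrix (Fin n) (Fin n) ℂ) : 0 ≤ (Matrix.trace (Bᴴ * B)).re := by
  have h : Matrix.trace (Bᴴ * B) = ∑ j, ∑ i, star (B i j) * B i j := by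
    simp [Matrix.trace, Matrix.diag, Matrix.mul_apply, Matrix.conjTranspose_apply]
  rw [h]
  rw [Complex.re_sum]
  refine Finset.sum_nonneg fun j _ => ?_
  rw [Complex.re_sum]
  refine Finset.sum_nonneg fun i _ => ?_
  have : star (B i j) * B i j = (Complex.normSq (B i j) : ℂ) := by
    rw [mul_comm]; exact Complex.mul_conj _
  rw [this, Complex.ofReal_re]
  exact Complex.normSq_nonneg _

lemma retrace_psd_nonneg {M : Matrix (Fin n) (Fin n) ℂ} (hM : M.PosSemidef) :
    0 ≤ (Matrix.trace M).re := by
  exact (Complex.le_def.mp hM.trace_nonneg).1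

lemma quad_nonneg {P Q : Matrix (Fin n) (Fin n) ℂ} (hP : P.PosSemidef) (hQ : Q.PosSemidef)
    {l : ℝ} (hl : 0 ≤ l) (X : Matrix (Fin n) (Fin n) ℂ) :
    0 ≤ (Matrix.trace (Xᴴ * ((l : ℂ) • (P * X) + X * Q))).re := by
  rw [Matrix.mul_add, Matrix.trace_add, Complex.add_re, Matrix.mul_smul, Matrix.trace_smul]
  have h1 : 0 ≤ (Matrix.trace (Xᴴ * (P * X))).re := by
    rw [← Matrix.mul_assoc]
    exact retrace_psd_nonneg (hP.conjTranspose_mul_mul_same X)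
  have h2 : 0 ≤ (Matrix.trace (Xᴴ * (X * Q))).re := by
    rw [Matrix.trace_mul_comm]
    exact retrace_psd_nonneg (hQ.mul_mul_conjTranspose_same X)
  rw [smul_eq_mul, Complex.re_ofReal_mul]
  exact add_nonneg (mul_nonneg hl h1) h2

lemma lowerB (hρ : ρ.PosDef) (hσ : σ.PosDef) {l : ℝ} (hl : 0 ≤ l) (Y : Matrix (Fin n) (Fin n) ℂ) :
    2 * (Matrix.trace (ρ * Y)).re
      - (Matrix.trace (Yᴴ * ((l : ℂ) • (ρ * Y) + Y * σ))).re ≤ Fq hρ.1 hσ.1 l := by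
  set Z := Zm hρ.1 hσ.1 l with hZdef
  have hsolve : (l : ℂ) • (ρ * Z) + Z * σ = ρ := solveZ hρ hσ hl
  have htr : Matrix.trace (ρ * Z) = (Fq hρ.1 hσ.1 l : ℂ) := traceZ hρ.1 hσ.1 l
  have h0 := quad_nonneg hρ.posSemidef hσ.posSemidef hl (Z - Y)
  set TY := (l : ℂ) • (ρ * Y) + Y * σ with hTY
  have hTsub : (l : ℂ) • (ρ * (Z - Y)) + (Z - Y) * σ
      = ((l : ℂ) • (ρ * Z) + Z * σ) - TY := by
    rw [hTY, Matrix.mul_sub, Matrix.sub_mul, smul_sub]; abel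
  rw [hTsub, hsolve] at h0
  have hexp : (Z - Y)ᴴ * (ρ - TY) = Zᴴ * ρ - Zᴴ * TY - Yᴴ * ρ + Yᴴ * TY := by
    rw [Matrix.conjTranspose_sub, Matrix.sub_mul, Matrix.mul_sub, Matrix.mul_sub]; abel
  rw [hexp] at h0
  have e1 : (Matrix.trace (Zᴴ * ρ)).re = Fq hρ.1 hσ.1 l := by
    have h : Zᴴ * ρ = (ρ * Z)ᴴ := by rw [Matrix.conjTranspose_mul, hρ.1.eq]
    rw [h, Matrix.trace_conjTranspose, htr]
    simp
  have e2 : (Matrix.trace (Yᴴ * ρ)).re = (Matrix.trace (ρ * Y)).re := by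
    have h : Yᴴ * ρ = (ρ * Y)ᴴ := by rw [Matrix.conjTranspose_mul, hρ.1.eq]
    rw [h, Matrix.trace_conjTranspose]
    exact Complex.conj_re _
  have e3 : (Matrix.trace (Zᴴ * TY)).re = (Matrix.trace (ρ * Y)).re := by
    have hTYc : Matrix.trace (TYᴴ * Z) = Matrix.trace (Yᴴ * ρ) := by
      have hct : TYᴴ = (l : ℂ) • (Yᴴ * ρ) + σ * Yᴴ := by
        rw [hTY, Matrix.conjTranspose_add, Matrix.conjTranspose_smul, Matrix.conjTranspose_mul,
          Matrix.conjTranspose_mul, hρ.1.eq, hσ.1.eq, Complex.star_def, Complex.conj_ofReal]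
      rw [hct, Matrix.add_mul, Matrix.smul_mul, Matrix.trace_add, Matrix.trace_smul]
      conv_rhs => rw [← hsolve]
      rw [Matrix.mul_add, Matrix.mul_smul, Matrix.trace_add, Matrix.trace_smul]
      have c1 : Matrix.trace (Yᴴ * ρ * Z) = Matrix.trace (Yᴴ * (ρ * Z)) := by
        rw [Matrix.mul_assoc]
      have c2 : Matrix.trace (σ * Yᴴ * Z) = Matrix.trace (Yᴴ * (Z * σ)) := by
        rw [Matrix.mul_assoc, Matrix.trace_mul_comm, Matrix.mul_assoc]
      rw [c1, c2]
    have h : Zᴴ * TY = (TYᴴ * Z)ᴴ := by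
      rw [Matrix.conjTranspose_mul, Matrix.conjTranspose_conjTranspose]
    rw [h, Matrix.trace_conjTranspose, hTYc, Complex.star_def, Complex.conj_re, e2]
  simp only [Matrix.trace_add, Matrix.trace_sub, Complex.add_re, Complex.sub_re] at h0
  rw [e1, e2, e3] at h0
  linarith

lemma smul_posDef {A : Matrix (Fin n) (Fin n) ℂ} (hA : A.PosDef) {c : ℝ} (hc : 0 < c) :
    (c • A).PosDef := by
  constructor
  · show (c • A)ᴴ = c • A
    rw [Matrix.conjTranspose_smul, star_trivial, hA.1.eq]
  · exact (hA.smul hc).2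

lemma combo_posDef {A B : Matrix (Fin n) (Fin n) ℂ} (hA : A.PosDef) (hB : B.PosDef)
    {c : ℝ} (hc0 : 0 ≤ c) (hc1 : c ≤ 1) : (c • A + (1 - c) • B).PosDef := by
  rcases eq_or_lt_of_le hc0 with h0 | h0
  · simp only [← h0, zero_smul, zero_add, sub_zero, one_smul]
    exact hB
  rcases eq_or_lt_of_le hc1 with h1 | h1
  · simp only [h1, one_smul, sub_self, zero_smul, add_zero]
    exact hA
  · exact (smul_posDef hA h0).add (smul_posDef hB (by linarith))

lemma Fq_convex {ρ₁ ρ₂ σ₁ σ₂ : Matrix (Fin n) (Fin n) ℂ}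
    (hρ₁ : ρ₁.PosDef) (hρ₂ : ρ₂.PosDef) (hσ₁ : σ₁.PosDef) (hσ₂ : σ₂.PosDef)
    {c l : ℝ} (hc0 : 0 ≤ c) (hc1 : c ≤ 1) (hl : 0 ≤ l)
    (hρm : (c • ρ₁ + (1 - c) • ρ₂).PosDef) (hσm : (c • σ₁ + (1 - c) • σ₂).PosDef) :
    Fq hρm.1 hσm.1 l ≤ c * Fq hρ₁.1 hσ₁.1 l + (1 - c) * Fq hρ₂.1 hσ₂.1 l := by
  set Y := Zm hρm.1 hσm.1 l with hY
  have h1 := lowerB hρ₁ hσ₁ hl Y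
  have h2 := lowerB hρ₂ hσ₂ hl Y
  have lin1 : (Matrix.trace ((c • ρ₁ + (1 - c) • ρ₂) * Y)).re
      = c * (Matrix.trace (ρ₁ * Y)).re + (1 - c) * (Matrix.trace (ρ₂ * Y)).re := by
    rw [Matrix.add_mul, Matrix.smul_mul, Matrix.smul_mul, Matrix.trace_add, Matrix.trace_smul,
      Matrix.trace_smul, Complex.add_re, Complex.real_smul, Complex.real_smul,
      Complex.re_ofReal_mul, Complex.re_ofReal_mul]
  have lin2 : (Matrix.trace (Yᴴ * ((l : ℂ) • ((c • ρ₁ + (1 - c) • ρ₂) * Y)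
        + Y * (c • σ₁ + (1 - c) • σ₂)))).re
      = c * (Matrix.trace (Yᴴ * ((l : ℂ) • (ρ₁ * Y) + Y * σ₁))).re
        + (1 - c) * (Matrix.trace (Yᴴ * ((l : ℂ) • (ρ₂ * Y) + Y * σ₂))).re := by
    have hcomb : (l : ℂ) • ((c • ρ₁ + (1 - c) • ρ₂) * Y) + Y * (c • σ₁ + (1 - c) • σ₂)
        = c • ((l : ℂ) • (ρ₁ * Y) + Y * σ₁) + (1 - c) • ((l : ℂ) • (ρ₂ * Y) + Y * σ₂) := by
      rw [Matrix.add_mul, Matrix.smul_mul, Matrix.smul_mul, Matrix.mul_add, Matrix.mul_smul,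
        Matrix.mul_smul, smul_add, smul_add, smul_comm (l : ℂ) c, smul_comm (l : ℂ) (1 - c)]
      module
    rw [hcomb, Matrix.mul_add, Matrix.mul_smul, Matrix.mul_smul, Matrix.trace_add,
      Matrix.trace_smul, Matrix.trace_smul, Complex.add_re, Complex.real_smul, Complex.real_smul,
      Complex.re_ofReal_mul, Complex.re_ofReal_mul]
  have hsol : (l : ℂ) • ((c • ρ₁ + (1 - c) • ρ₂) * Y) + Y * (c • σ₁ + (1 - c) • σ₂)
      = c • ρ₁ + (1 - c) • ρ₂ := solveZ hρm hσm hl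
  have htr : (Matrix.trace ((c • ρ₁ + (1 - c) • ρ₂) * Y)).re = Fq hρm.1 hσm.1 l := by
    rw [hY, traceZ hρm.1 hσm.1 l, Complex.ofReal_re]
  have htr2 : (Matrix.trace (Yᴴ * ((l : ℂ) • ((c • ρ₁ + (1 - c) • ρ₂) * Y)
      + Y * (c • σ₁ + (1 - c) • σ₂)))).re = Fq hρm.1 hσm.1 l := by
    rw [hsol]
    have h : Yᴴ * (c • ρ₁ + (1 - c) • ρ₂) = ((c • ρ₁ + (1 - c) • ρ₂) * Y)ᴴ := by
      rw [Matrix.conjTranspose_mul, hρm.1.eq]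
    rw [h, Matrix.trace_conjTranspose, ← htr]
    exact Complex.conj_re _
  have key : Fq hρm.1 hσm.1 l
      = c * (2 * (Matrix.trace (ρ₁ * Y)).re
          - (Matrix.trace (Yᴴ * ((l : ℂ) • (ρ₁ * Y) + Y * σ₁))).re)
        + (1 - c) * (2 * (Matrix.trace (ρ₂ * Y)).re
          - (Matrix.trace (Yᴴ * ((l : ℂ) • (ρ₂ * Y) + Y * σ₂))).re) := by
    have : Fq hρm.1 hσm.1 l = 2 * (Matrix.trace ((c • ρ₁ + (1 - c) • ρ₂) * Y)).re
        - (Matrix.trace (Yᴴ * ((l : ℂ) • ((c • ρ₁ + (1 - c) • ρ₂) * Y)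
            + Y * (c • σ₁ + (1 - c) • σ₂)))).re := by
      rw [htr, htr2]; ring
    rw [this, lin1, lin2]; ring
  rw [key]
  exact add_le_add (mul_le_mul_of_nonneg_left h1 hc0)
    (mul_le_mul_of_nonneg_left h2 (by linarith))

lemma sum_eigs (hρ : ρ.IsHermitian) :
    Matrix.trace ρ = ((∑ i, hρ.eigenvalues i : ℝ) : ℂ) := by
  conv_lhs => rw [hρ.spectral_theorem]
  rw [Unitary.conjStarAlgAut_apply, Matrix.trace_mul_cycle, Matrix.star_eq_conjTranspose, star_coe_unitary hρ, Matrix.one_mul,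
    Matrix.trace_diagonal]
  push_cast
  rfl

lemma rowsum (hρ : ρ.IsHermitian) (hσ : σ.IsHermitian) (i : Fin n) :
    ∑ j, Complex.normSq (Gm hρ hσ i j) = 1 := by
  have hGU : Gm hρ hσ * (Gm hρ hσ)ᴴ = 1 := by
    rw [Gm, Matrix.conjTranspose_mul, Matrix.conjTranspose_conjTranspose, Matrix.mul_assoc,
      ← Matrix.mul_assoc (hσ.eigenvectorUnitary : Matrix (Fin n) (Fin n) ℂ),
      coe_unitary_star hσ, Matrix.one_mul, star_coe_unitary hρ]
  have h2 : ((Gm hρ hσ * (Gm hρ hσ)ᴴ) i i : ℂ) = 1 := by rw [hGU, Matrix.one_apply_eq]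
  rw [Matrix.mul_apply] at h2
  have h3 : ∀ j, Gm hρ hσ i j * (Gm hρ hσ)ᴴ j i = (Complex.normSq (Gm hρ hσ i j) : ℂ) := by
    intro j
    rw [Matrix.conjTranspose_apply]
    exact Complex.mul_conj _
  rw [Finset.sum_congr rfl (fun j _ => h3 j)] at h2
  exact_mod_cast h2


lemma cfc_spec (hσ : σ.IsHermitian) (f : ℝ → ℝ) :
    cfc f σ = (hσ.eigenvectorUnitary : Matrix (Fin n) (Fin n) ℂ) *
      Matrix.diagonal (RCLike.ofReal ∘ f ∘ hσ.eigenvalues) *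
      (hσ.eigenvectorUnitary : Matrix (Fin n) (Fin n) ℂ)ᴴ := by
  rw [hσ.cfc_eq, Matrix.IsHermitian.cfc, Unitary.conjStarAlgAut_apply, Matrix.star_eq_conjTranspose]

lemma trace_log_self (hρ : ρ.PosDef) :
    (Matrix.trace (ρ * cfc Real.log ρ)).re
      = ∑ i, hρ.1.eigenvalues i * Real.log (hρ.1.eigenvalues i) := by
  rw [cfc_spec hρ.1 Real.log]
  set U : Matrix (Fin n) (Fin n) ℂ := (hρ.1.eigenvectorUnitary : Matrix (Fin n) (Fin n) ℂ) with hU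
  set D := Matrix.diagonal (RCLike.ofReal ∘ hρ.1.eigenvalues : Fin n → ℂ) with hD
  set L := Matrix.diagonal (RCLike.ofReal ∘ Real.log ∘ hρ.1.eigenvalues : Fin n → ℂ) with hL
  have hρs : ρ = U * D * Uᴴ := by
    rw [hU, hD, ← Matrix.star_eq_conjTranspose]; exact hρ.1.spectral_theorem
  conv_lhs => rw [hρs]
  have h1 : U * D * Uᴴ * (U * L * Uᴴ) = U * (D * L) * Uᴴ := by
    simp only [Matrix.mul_assoc]
    rw [← Matrix.mul_assoc Uᴴ U, star_coe_unitary hρ.1, Matrix.one_mul]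
  rw [h1, Matrix.trace_mul_cycle, ← Matrix.mul_assoc, star_coe_unitary hρ.1, Matrix.one_mul]
  rw [hD, hL, Matrix.diagonal_mul_diagonal, Matrix.trace_diagonal]
  rw [Complex.re_sum]
  refine Finset.sum_congr rfl fun i _ => ?_
  simp only [Pi.mul_apply, Function.comp_apply, rcCoe, ← Complex.ofReal_mul, Complex.ofReal_re]

lemma trace_log_other (hρ : ρ.PosDef) (hσ : σ.PosDef) :
    (Matrix.trace (ρ * cfc Real.log σ)).re
      = ∑ i, ∑ j, Complex.normSq (Gm hρ.1 hσ.1 i j) *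
          (hρ.1.eigenvalues i * Real.log (hσ.1.eigenvalues j)) := by
  rw [cfc_spec hσ.1 Real.log]
  set U : Matrix (Fin n) (Fin n) ℂ := (hρ.1.eigenvectorUnitary : Matrix (Fin n) (Fin n) ℂ) with hU
  set V : Matrix (Fin n) (Fin n) ℂ := (hσ.1.eigenvectorUnitary : Matrix (Fin n) (Fin n) ℂ) with hV
  set D := Matrix.diagonal (RCLike.ofReal ∘ hρ.1.eigenvalues : Fin n → ℂ) with hD
  set L := Matrix.diagonal (RCLike.ofReal ∘ Real.log ∘ hσ.1.eigenvalues : Fin n → ℂ) with hL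
  have hρs : ρ = U * D * Uᴴ := by
    rw [hU, hD, ← Matrix.star_eq_conjTranspose]; exact hρ.1.spectral_theorem
  conv_lhs => rw [hρs]
  have h1 : Matrix.trace (U * D * Uᴴ * (V * L * Vᴴ))
      = Matrix.trace (D * Gm hρ.1 hσ.1 * L * (Gm hρ.1 hσ.1)ᴴ) := by
    have e : U * D * Uᴴ * (V * L * Vᴴ) = U * (D * Uᴴ * (V * L * Vᴴ)) := by
      simp only [Matrix.mul_assoc]
    rw [e, Matrix.trace_mul_comm]
    have e2 : D * Uᴴ * (V * L * Vᴴ) * U = D * Gm hρ.1 hσ.1 * L * (Gm hρ.1 hσ.1)ᴴ := by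
      rw [Gm, Matrix.conjTranspose_mul, Matrix.conjTranspose_conjTranspose, ← hU, ← hV]
      simp only [Matrix.mul_assoc]
    rw [e2]
  rw [h1, Matrix.trace]
  have hdiag : ∀ i, (D * Gm hρ.1 hσ.1 * L * (Gm hρ.1 hσ.1)ᴴ).diag i
      = ∑ j, ((hρ.1.eigenvalues i : ℂ) * Gm hρ.1 hσ.1 i j * (Real.log (hσ.1.eigenvalues j) : ℂ))
          * star (Gm hρ.1 hσ.1 i j) := by
    intro i
    rw [Matrix.diag_apply, Matrix.mul_apply]
    refine Finset.sum_congr rfl fun j _ => ?_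
    rw [Matrix.conjTranspose_apply, hL, Matrix.mul_diagonal, hD, Matrix.diagonal_mul]
    simp only [Function.comp_apply, rcCoe]
  rw [Finset.sum_congr rfl fun i _ => hdiag i, Complex.re_sum]
  refine Finset.sum_congr rfl fun i _ => ?_
  rw [Complex.re_sum]
  refine Finset.sum_congr rfl fun j _ => ?_
  have hm : star (Gm hρ.1 hσ.1 i j) * Gm hρ.1 hσ.1 i j
      = (Complex.normSq (Gm hρ.1 hσ.1 i j) : ℂ) := by
    rw [mul_comm]; exact Complex.mul_conj _
  rw [show ((hρ.1.eigenvalues i : ℂ) * Gm hρ.1 hσ.1 i j * (Real.log (hσ.1.eigenvalues j) : ℂ))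
        * star (Gm hρ.1 hσ.1 i j)
      = ((hρ.1.eigenvalues i : ℂ) * (Real.log (hσ.1.eigenvalues j) : ℂ))
        * (star (Gm hρ.1 hσ.1 i j) * Gm hρ.1 hσ.1 i j) by ring, hm]
  rw [← Complex.ofReal_mul, ← Complex.ofReal_mul, Complex.ofReal_re]
  ring

lemma repr_integral (hρ : ρ.PosDef) (hσ : σ.PosDef) (htρ : ρ.trace = 1) :
    IntegrableOn (fun l => Fq hρ.1 hσ.1 l - 1 / (1 + l)) (Ioi (0:ℝ)) ∧
    ∫ l in Ioi (0:ℝ), (Fq hρ.1 hσ.1 l - 1 / (1 + l))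
      = (Matrix.trace (ρ * cfc Real.log ρ - ρ * cfc Real.log σ)).re := by
  have ha : ∀ i, 0 < hρ.1.eigenvalues i := hρ.eigenvalues_pos
  have hb : ∀ j, 0 < hσ.1.eigenvalues j := hσ.eigenvalues_pos
  have hsum1 : ∑ i, hρ.1.eigenvalues i = 1 := by
    have := sum_eigs hρ.1
    rw [htρ] at this
    exact_mod_cast this.symm
  have hpt : ∀ l ∈ Ioi (0:ℝ), Fq hρ.1 hσ.1 l - 1 / (1 + l)
      = ∑ i, ∑ j, Complex.normSq (Gm hρ.1 hσ.1 i j) *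
          ((hρ.1.eigenvalues i) ^ 2 / (l * hρ.1.eigenvalues i + hσ.1.eigenvalues j)
            - (hρ.1.eigenvalues i) / (1 + l)) := by
    intro l hl
    have key : ∀ i j, Complex.normSq (Gm hρ.1 hσ.1 i j) *
          ((hρ.1.eigenvalues i) ^ 2 / (l * hρ.1.eigenvalues i + hσ.1.eigenvalues j)
            - (hρ.1.eigenvalues i) / (1 + l))
        = (hρ.1.eigenvalues i)^2 * Complex.normSq (Gm hρ.1 hσ.1 i j)
            / (l * hρ.1.eigenvalues i + hσ.1.eigenvalues j)
          - (hρ.1.eigenvalues i) / (1 + l) * Complex.normSq (Gm hρ.1 hσ.1 i j) := by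
      intro i j; ring
    simp only [key, Finset.sum_sub_distrib]
    rw [Fq]
    congr 1
    have : ∀ i, ∑ j, (hρ.1.eigenvalues i) / (1 + l) * Complex.normSq (Gm hρ.1 hσ.1 i j)
        = (hρ.1.eigenvalues i) / (1 + l) := by
      intro i
      rw [← Finset.mul_sum, rowsum hρ.1 hσ.1 i, mul_one]
    rw [Finset.sum_congr rfl fun i _ => this i, ← Finset.sum_div, hsum1]
  have hint2 : IntegrableOn (fun l => ∑ i, ∑ j, Complex.normSq (Gm hρ.1 hσ.1 i j) *
      ((hρ.1.eigenvalues i) ^ 2 / (l * hρ.1.eigenvalues i + hσ.1.eigenvalues j)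
        - (hρ.1.eigenvalues i) / (1 + l))) (Ioi (0:ℝ)) := by
    apply MeasureTheory.integrable_finset_sum
    intro i _
    apply MeasureTheory.integrable_finset_sum
    intro j _
    exact ((scalar_integral (ha i) (hb j)).1.const_mul _)
  have hint : IntegrableOn (fun l => Fq hρ.1 hσ.1 l - 1 / (1 + l)) (Ioi (0:ℝ)) :=
    hint2.congr_fun (fun l hl => (hpt l hl).symm) measurableSet_Ioi
  refine ⟨hint, ?_⟩
  rw [MeasureTheory.setIntegral_congr_fun measurableSet_Ioi hpt]
  rw [MeasureTheory.integral_finset_sum _ (fun i _ => by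
    apply MeasureTheory.integrable_finset_sum
    intro j _
    exact ((scalar_integral (ha i) (hb j)).1.const_mul _))]
  have hsteps : ∀ i, ∫ l in Ioi (0:ℝ), (∑ j, Complex.normSq (Gm hρ.1 hσ.1 i j) *
      ((hρ.1.eigenvalues i) ^ 2 / (l * hρ.1.eigenvalues i + hσ.1.eigenvalues j)
        - (hρ.1.eigenvalues i) / (1 + l)))
      = ∑ j, Complex.normSq (Gm hρ.1 hσ.1 i j) *
          (hρ.1.eigenvalues i * Real.log (hρ.1.eigenvalues i)
            - hρ.1.eigenvalues i * Real.log (hσ.1.eigenvalues j)) := by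
    intro i
    rw [MeasureTheory.integral_finset_sum _ (fun j _ =>
      ((scalar_integral (ha i) (hb j)).1.const_mul _))]
    refine Finset.sum_congr rfl fun j _ => ?_
    rw [MeasureTheory.integral_const_mul, (scalar_integral (ha i) (hb j)).2]
  rw [Finset.sum_congr rfl fun i _ => hsteps i]
  rw [Matrix.trace_sub, Complex.sub_re, trace_log_self hρ, trace_log_other hρ hσ]
  rw [← Finset.sum_sub_distrib]
  refine Finset.sum_congr rfl fun i _ => ?_
  simp only [mul_sub, Finset.sum_sub_distrib]
  congr 1
  rw [← Finset.sum_mul, rowsum hρ.1 hσ.1 i, one_mul]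

end LiebRuskaiAux

/-- Lieb–Ruskai: the quantum relative entropy
`S(ρ‖σ) = Tr (ρ log ρ - ρ log σ)` is jointly convex on pairs of positive definite
density matrices. -/
theorem quantum_relativeEntropy_jointly_convex (n : ℕ)
    (S : Matrix (Fin n) (Fin n) ℂ → Matrix (Fin n) (Fin n) ℂ → ℝ)
    (hS : ∀ ρ σ, S ρ σ =
      (Matrix.trace (ρ * cfc Real.log ρ - ρ * cfc Real.log σ)).re)
    (ρ₁ ρ₂ σ₁ σ₂ : Matrix (Fin n) (Fin n) ℂ)
    (hρ₁ : ρ₁.PosDef) (hρ₂ : ρ₂.PosDef) (hσ₁ : σ₁.PosDef) (hσ₂ : σ₂.PosDef)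
    (hρ₁t : ρ₁.trace = 1) (hρ₂t : ρ₂.trace = 1)
    (hσ₁t : σ₁.trace = 1) (hσ₂t : σ₂.trace = 1)
    (c : ℝ) (hc0 : 0 ≤ c) (hc1 : c ≤ 1) :
    S (c • ρ₁ + (1 - c) • ρ₂) (c • σ₁ + (1 - c) • σ₂) ≤
      c * S ρ₁ σ₁ + (1 - c) * S ρ₂ σ₂ := by
  have hρm : (c • ρ₁ + (1 - c) • ρ₂).PosDef := combo_posDef hρ₁ hρ₂ hc0 hc1
  have hσm : (c • σ₁ + (1 - c) • σ₂).PosDef := combo_posDef hσ₁ hσ₂ hc0 hc1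
  have htρm : (c • ρ₁ + (1 - c) • ρ₂).trace = 1 := by
    rw [Matrix.trace_add, Matrix.trace_smul, Matrix.trace_smul, hρ₁t, hρ₂t]
    rw [Complex.real_smul, Complex.real_smul]
    push_cast
    ring
  have r1 := repr_integral hρ₁ hσ₁ hρ₁t
  have r2 := repr_integral hρ₂ hσ₂ hρ₂t
  have rm := repr_integral hρm hσm htρm
  rw [hS, hS, hS, ← r1.2, ← r2.2, ← rm.2]
  have hmono : ∀ l ∈ Ioi (0:ℝ), Fq hρm.1 hσm.1 l - 1 / (1 + l)
      ≤ c * (Fq hρ₁.1 hσ₁.1 l - 1 / (1 + l)) + (1 - c) * (Fq hρ₂.1 hσ₂.1 l - 1 / (1 + l)) := by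
    intro l hl
    have hcv := Fq_convex hρ₁ hρ₂ hσ₁ hσ₂ hc0 hc1 (le_of_lt (mem_Ioi.mp hl)) hρm hσm
    have expand : c * (Fq hρ₁.1 hσ₁.1 l - 1 / (1 + l)) + (1 - c) * (Fq hρ₂.1 hσ₂.1 l - 1 / (1 + l))
        = c * Fq hρ₁.1 hσ₁.1 l + (1 - c) * Fq hρ₂.1 hσ₂.1 l - 1 / (1 + l) := by ring
    rw [expand]
    linarith [hcv]
  have hint1 := r1.1.const_mul c
  have hint2 := r2.1.const_mul (1 - c)
  have intc : IntegrableOn (fun l => c * (Fq hρ₁.1 hσ₁.1 l - 1 / (1 + l))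
      + (1 - c) * (Fq hρ₂.1 hσ₂.1 l - 1 / (1 + l))) (Ioi (0:ℝ)) := hint1.add hint2
  have hle := MeasureTheory.setIntegral_mono_on rm.1 intc measurableSet_Ioi hmono
  rw [MeasureTheory.integral_add hint1 hint2, MeasureTheory.integral_const_mul,
    MeasureTheory.integral_const_mul] at hle
  exact hle
end

section
/- The function f(x) = x log x (with f(0) = 0) on [0,∞) is operator convex: for n×n positive semidefinite matrices S, T and 0 ≤ c ≤ 1, f(cS+(1-c)T) ≤ c·f(S) + (1-c)·f(T) in the Loewner order. -/
open MeasureTheory Set Filter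

noncomputable def kfun (l t : ℝ) : ℝ := l * (l - 1) / ((1 + t) * (l + t))

noncomputable def Gfun (l t : ℝ) : ℝ := l * (Real.log (1 + t) - Real.log (l + t))

lemma Gfun_hasDeriv {l : ℝ} (hl : 0 < l) {t : ℝ} (ht : t ∈ Ici (0:ℝ)) :
    HasDerivAt (Gfun l) (kfun l t) t := by
  have h1 : (0:ℝ) < 1 + t := by simp at ht; linarith
  have h2 : (0:ℝ) < l + t := by simp at ht; linarith
  have d1 : HasDerivAt (fun t => Real.log (1 + t)) (1/(1+t)) t := by
    simpa using ((hasDerivAt_id t).const_add 1).log h1.ne'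
  have d2 : HasDerivAt (fun t => Real.log (l + t)) (1/(l+t)) t := by
    simpa using ((hasDerivAt_id t).const_add l).log h2.ne'
  have := ((d1.sub d2).const_mul l)
  refine this.congr_deriv ?_
  unfold kfun
  field_simp
  try ring

lemma Gfun_tendsto {l : ℝ} (hl : 0 < l) : Tendsto (Gfun l) atTop (nhds 0) := by
  have key : Tendsto (fun t => (1-l)/(l+t)) atTop (nhds 0) := by
    apply Tendsto.div_atTop tendsto_const_nhds
    exact tendsto_atTop_add_const_left _ _ tendsto_id
  have key2 : Tendsto (fun t => 1 + (1-l)/(l+t)) atTop (nhds 1) := by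
    simpa using key.const_add 1
  have key3 : Tendsto (fun t => Real.log (1 + (1-l)/(l+t))) atTop (nhds 0) := by
    have := (Real.continuousAt_log (x := 1) one_ne_zero).tendsto.comp key2
    simpa [Function.comp_def] using this
  have ev : ∀ᶠ t in atTop, Real.log (1 + (1-l)/(l+t)) = Real.log (1+t) - Real.log (l+t) := by
    filter_upwards [eventually_gt_atTop 0] with t ht
    have h1 : (0:ℝ) < 1 + t := by linarith
    have h2 : (0:ℝ) < l + t := by linarith
    rw [← Real.log_div h1.ne' h2.ne']
    congr 1
    field_simp
    ring
  have := key3.congr' ev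
  exact (by simpa using (this.const_mul l) :
    Tendsto (fun x => l * (Real.log (1 + x) - Real.log (l + x))) atTop (nhds 0))

lemma kfun_integral {l : ℝ} (hl : 0 ≤ l) :
    ∫ t in Ioi (0:ℝ), kfun l t = l * Real.log l ∧ IntegrableOn (kfun l) (Ioi (0:ℝ)) := by
  rcases eq_or_lt_of_le hl with rfl | hl
  · have : kfun 0 = fun _ => 0 := by funext t; simp [kfun]
    rw [this]; simp [IntegrableOn, integrable_zero]
  have hG0 : Gfun l 0 = - (l * Real.log l) := by simp [Gfun]
  have hval : (0:ℝ) - Gfun l 0 = l * Real.log l := by rw [hG0]; ring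
  have hderiv : ∀ x ∈ Ici (0:ℝ), HasDerivAt (Gfun l) (kfun l x) x := fun x hx => Gfun_hasDeriv hl hx
  rcases le_or_gt 1 l with h1 | h1
  · have hpos : ∀ x ∈ Ioi (0:ℝ), 0 ≤ kfun l x := by
      intro x hx; simp only [mem_Ioi] at hx
      apply div_nonneg (by nlinarith) (by nlinarith)
    exact ⟨hval ▸ integral_Ioi_of_hasDerivAt_of_nonneg' hderiv hpos (Gfun_tendsto hl),
      integrableOn_Ioi_deriv_of_nonneg' hderiv hpos (Gfun_tendsto hl)⟩
  · have hneg : ∀ x ∈ Ioi (0:ℝ), kfun l x ≤ 0 := by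
      intro x hx; simp only [mem_Ioi] at hx
      apply div_nonpos_of_nonpos_of_nonneg (by nlinarith) (by nlinarith)
    exact ⟨hval ▸ integral_Ioi_of_hasDerivAt_of_nonpos' hderiv hneg (Gfun_tendsto hl),
      integrableOn_Ioi_deriv_of_nonpos' hderiv hneg (Gfun_tendsto hl)⟩

open Matrix ComplexOrder

variable {n : ℕ} {A : Matrix (Fin n) (Fin n) ℂ}

lemma rclike_coe : ((RCLike.ofReal : ℝ → ℂ)) = Complex.ofReal := funext fun x => by norm_cast

noncomputable def wvec (hA : A.IsHermitian) (v : Fin n → ℂ) : Fin n → ℂ :=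
  star (hA.eigenvectorUnitary : Matrix (Fin n) (Fin n) ℂ) *ᵥ v

lemma quad_UDU (hA : A.IsHermitian) (d : Fin n → ℝ) (u v : Fin n → ℂ) :
    star u ⬝ᵥ (((hA.eigenvectorUnitary : Matrix (Fin n) (Fin n) ℂ) *
        diagonal ((RCLike.ofReal ∘ d : Fin n → ℂ)) *
        star (hA.eigenvectorUnitary : Matrix (Fin n) (Fin n) ℂ)) *ᵥ v)
      = ∑ i, (d i : ℂ) * (star (wvec hA u i) * wvec hA v i) := by
  set U : Matrix (Fin n) (Fin n) ℂ := (hA.eigenvectorUnitary : Matrix (Fin n) (Fin n) ℂ)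
  have hsw : star (wvec hA u) = star u ᵥ* U := by
    rw [wvec, star_mulVec]
    congr 1
    simp [star_eq_conjTranspose]
    rfl
  rw [← Matrix.mulVec_mulVec, ← Matrix.mulVec_mulVec, dotProduct_mulVec, ← hsw]
  simp only [dotProduct, mulVec_diagonal, Function.comp_apply, wvec, Pi.star_apply]
  simp only [rclike_coe]
  exact Finset.sum_congr rfl fun i _ => by ring

lemma dot_unitary (hA : A.IsHermitian) (u v : Fin n → ℂ) :
    star u ⬝ᵥ v = ∑ i, star (wvec hA u i) * wvec hA v i := by
  set U : Matrix (Fin n) (Fin n) ℂ := (hA.eigenvectorUnitary : Matrix (Fin n) (Fin n) ℂ) with hU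
  have h1 : U * star U = 1 := mem_unitaryGroup_iff.mp (hA.eigenvectorUnitary).2
  have hsw : star (wvec hA u) = star u ᵥ* U := by
    rw [wvec, star_mulVec]; congr 1; simp [star_eq_conjTranspose]; rfl
  calc star u ⬝ᵥ v = star u ⬝ᵥ ((U * star U) *ᵥ v) := by rw [h1, one_mulVec]
    _ = (star u ᵥ* U) ⬝ᵥ (star U *ᵥ v) := by rw [← Matrix.mulVec_mulVec, dotProduct_mulVec]
    _ = ∑ i, star (wvec hA u i) * wvec hA v i := by
        rw [← hsw]; simp [dotProduct, wvec]; rfl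

lemma quad_A (hA : A.IsHermitian) (u v : Fin n → ℂ) :
    star u ⬝ᵥ (A *ᵥ v) = ∑ i, (hA.eigenvalues i : ℂ) * (star (wvec hA u i) * wvec hA v i) := by
  conv_lhs => rw [hA.spectral_theorem]
  exact quad_UDU hA _ u v

lemma quad_cfc (hA : A.IsHermitian) (f : ℝ → ℝ) (v : Fin n → ℂ) :
    star v ⬝ᵥ (cfc f A *ᵥ v)
      = ((∑ i, f (hA.eigenvalues i) * Complex.normSq (wvec hA v i) : ℝ) : ℂ) := by
  rw [hA.cfc_eq, Matrix.IsHermitian.cfc, Unitary.conjStarAlgAut_apply]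
  rw [quad_UDU hA (f ∘ hA.eigenvalues) v v]
  push_cast
  refine Finset.sum_congr rfl fun i _ => ?_
  rw [show star (wvec hA v i) * wvec hA v i = (Complex.normSq (wvec hA v i) : ℂ) by
    rw [Complex.normSq_eq_conj_mul_self]; rfl]
  push_cast
  simp [Function.comp]

lemma star_mul_self_eq (z : ℂ) : star z * z = (Complex.normSq z : ℂ) := by
  rw [Complex.normSq_eq_conj_mul_self]; rfl

lemma scalar_quad_ineq {s : ℝ} (hs : 0 < s) (y w : ℂ) :
    2 * (star y * w).re - s * Complex.normSq y ≤ Complex.normSq w / s := by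
  have h0 : 0 ≤ Complex.normSq (w - (s : ℂ) * y) := Complex.normSq_nonneg _
  rw [Complex.normSq_sub, Complex.normSq_mul, Complex.normSq_ofReal, _root_.map_mul,
    Complex.conj_ofReal] at h0
  have e1 : (w * ((s : ℂ) * (starRingEnd ℂ) y)).re = s * (star y * w).re := by
    rw [mul_left_comm, Complex.re_ofReal_mul, Complex.star_def, mul_comm ((starRingEnd ℂ) y) w]
  rw [e1] at h0
  rw [le_div_iff₀ hs]
  nlinarith [h0]

lemma scalar_quad_eq {s : ℝ} (hs : 0 < s) (w : ℂ) :
    2 * (star (w * (s : ℂ)⁻¹) * w).re - s * Complex.normSq (w * (s : ℂ)⁻¹)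
      = Complex.normSq w / s := by
  have e1 : star (w * (s : ℂ)⁻¹) * w = ((Complex.normSq w / s : ℝ) : ℂ) := by
    rw [Complex.star_def, _root_.map_mul, map_inv₀, Complex.conj_ofReal]
    rw [mul_comm ((starRingEnd ℂ) w), mul_assoc, ← Complex.normSq_eq_conj_mul_self]
    push_cast
    ring
  rw [e1, Complex.ofReal_re, Complex.normSq_mul, Complex.normSq_inv, Complex.normSq_ofReal]
  field_simp
  ring

lemma expr_eq_sum (hA : A.IsHermitian) (u v : Fin n → ℂ) (t : ℝ) :
    2 * (star u ⬝ᵥ v).re - (star u ⬝ᵥ (A *ᵥ u)).re - t * (star u ⬝ᵥ u).re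
      = ∑ i, (2 * (star (wvec hA u i) * wvec hA v i).re
          - (hA.eigenvalues i + t) * Complex.normSq (wvec hA u i)) := by
  rw [dot_unitary hA u v, quad_A hA u u, dot_unitary hA u u, Complex.re_sum, Complex.re_sum,
    Complex.re_sum, Finset.mul_sum, Finset.mul_sum, ← Finset.sum_sub_distrib,
    ← Finset.sum_sub_distrib]
  refine Finset.sum_congr rfl fun i _ => ?_
  rw [star_mul_self_eq, show ((hA.eigenvalues i : ℂ) * (Complex.normSq (wvec hA u i) : ℂ)).re
      = hA.eigenvalues i * Complex.normSq (wvec hA u i) by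
    rw [Complex.re_ofReal_mul, Complex.ofReal_re], Complex.ofReal_re]
  ring

lemma sum_resolvent_le (hA : A.PosSemidef) (u v : Fin n → ℂ) {t : ℝ} (ht : 0 < t) :
    2 * (star u ⬝ᵥ v).re - (star u ⬝ᵥ (A *ᵥ u)).re - t * (star u ⬝ᵥ u).re
      ≤ ∑ i, Complex.normSq (wvec hA.1 v i) / (hA.1.eigenvalues i + t) := by
  rw [expr_eq_sum]
  refine Finset.sum_le_sum fun i _ => ?_
  exact scalar_quad_ineq (add_pos_of_nonneg_of_pos (hA.eigenvalues_nonneg i) ht) _ _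

lemma sum_resolvent_eq (hA : A.PosSemidef) (v : Fin n → ℂ) {t : ℝ} (ht : 0 < t)
    {u : Fin n → ℂ}
    (hu : u = (hA.1.eigenvectorUnitary : Matrix (Fin n) (Fin n) ℂ) *ᵥ
      (fun i => wvec hA.1 v i * ((hA.1.eigenvalues i + t : ℝ) : ℂ)⁻¹)) :
    2 * (star u ⬝ᵥ v).re - (star u ⬝ᵥ (A *ᵥ u)).re - t * (star u ⬝ᵥ u).re
      = ∑ i, Complex.normSq (wvec hA.1 v i) / (hA.1.eigenvalues i + t) := by
  have hw : wvec hA.1 u = fun i => wvec hA.1 v i * ((hA.1.eigenvalues i + t : ℝ) : ℂ)⁻¹ := by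
    rw [hu, wvec, Matrix.mulVec_mulVec,
      Matrix.mem_unitaryGroup_iff'.mp (hA.1.eigenvectorUnitary).2, one_mulVec]
  rw [expr_eq_sum]
  refine Finset.sum_congr rfl fun i _ => ?_
  rw [hw]
  exact scalar_quad_eq (add_pos_of_nonneg_of_pos (hA.eigenvalues_nonneg i) ht) _

lemma psd_combo {S T : Matrix (Fin n) (Fin n) ℂ} (hS : S.PosSemidef) (hT : T.PosSemidef)
    {c : ℝ} (hc0 : 0 ≤ c) (hc1 : c ≤ 1) : (c • S + (1 - c) • T).PosSemidef := by
  rw [posSemidef_iff_dotProduct_mulVec]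
  constructor
  · show _ = _
    rw [conjTranspose_add, conjTranspose_smul, conjTranspose_smul, star_trivial, star_trivial,
      hS.1.eq, hT.1.eq]
  · intro x
    have h1 := hS.dotProduct_mulVec_nonneg x
    have h2 := hT.dotProduct_mulVec_nonneg x
    rw [add_mulVec, smul_mulVec, smul_mulVec, dotProduct_add, dotProduct_smul,
      dotProduct_smul, Complex.real_smul, Complex.real_smul]
    have hcc : (0:ℂ) ≤ (c : ℂ) := Complex.zero_le_real.mpr hc0
    have hcc' : (0:ℂ) ≤ ((1 - c : ℝ) : ℂ) := Complex.zero_le_real.mpr (by linarith)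
    exact add_nonneg (mul_nonneg hcc h1) (mul_nonneg hcc' h2)

open MeasureTheory Set Filter in
lemma g_split {m : ℕ} (l a : Fin m → ℝ) (hl : ∀ i, 0 ≤ l i) {t : ℝ} (ht : 0 < t) :
    ∑ i, a i * kfun (l i) t
      = (∑ i, a i * l i) * (1 + t)⁻¹ - (∑ i, a i) + t * (∑ i, a i / (l i + t)) := by
  rw [Finset.sum_mul, Finset.mul_sum, ← Finset.sum_sub_distrib, ← Finset.sum_add_distrib]
  refine Finset.sum_congr rfl fun i _ => ?_
  have h1 : (0:ℝ) < 1 + t := by linarith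
  have h2 : (0:ℝ) < l i + t := add_pos_of_nonneg_of_pos (hl i) ht
  unfold kfun
  field_simp
  ring
open MeasureTheory Set Filter in
lemma key_real {n : ℕ} {S T : Matrix (Fin n) (Fin n) ℂ} (hS : S.PosSemidef) (hT : T.PosSemidef)
    {c : ℝ} (hc0 : 0 ≤ c) (hc1 : c ≤ 1) (hM : (c • S + (1 - c) • T).PosSemidef)
    (v : Fin n → ℂ) :
    ∑ i, (hM.1.eigenvalues i * Real.log (hM.1.eigenvalues i)) * Complex.normSq (wvec hM.1 v i)
      ≤ c * ∑ i, (hS.1.eigenvalues i * Real.log (hS.1.eigenvalues i)) * Complex.normSq (wvec hS.1 v i)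
        + (1 - c) * ∑ i, (hT.1.eigenvalues i * Real.log (hT.1.eigenvalues i)) * Complex.normSq (wvec hT.1 v i) := by
  set M := c • S + (1 - c) • T with hMdef
  -- abbreviations
  set lS : Fin n → ℝ := hS.1.eigenvalues
  set lT : Fin n → ℝ := hT.1.eigenvalues
  set lM : Fin n → ℝ := hM.1.eigenvalues
  set aS : Fin n → ℝ := fun i => Complex.normSq (wvec hS.1 v i) with haS
  set aT : Fin n → ℝ := fun i => Complex.normSq (wvec hT.1 v i) with haT
  set aM : Fin n → ℝ := fun i => Complex.normSq (wvec hM.1 v i) with haM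
  have hlS : ∀ i, 0 ≤ lS i := hS.eigenvalues_nonneg
  have hlT : ∀ i, 0 ≤ lT i := hT.eigenvalues_nonneg
  have hlM : ∀ i, 0 ≤ lM i := hM.eigenvalues_nonneg
  -- (R1) equal masses
  have hmass : ∀ {A : Matrix (Fin n) (Fin n) ℂ} (hA : A.PosSemidef),
      ((∑ i, Complex.normSq (wvec hA.1 v i) : ℝ) : ℂ) = star v ⬝ᵥ v := by
    intro A hA
    have e := quad_cfc hA.1 (fun _ => 1) v
    rw [cfc_const_one ℝ A hA.1.isSelfAdjoint, one_mulVec] at e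
    simpa using e.symm
  have hNS : ∑ i, aS i = ∑ i, aM i :=
    Complex.ofReal_inj.mp ((hmass hS).trans (hmass hM).symm)
  have hNT : ∑ i, aT i = ∑ i, aM i :=
    Complex.ofReal_inj.mp ((hmass hT).trans (hmass hM).symm)
  -- (R2) first moments
  have hquadA : ∀ {A : Matrix (Fin n) (Fin n) ℂ} (hA : A.PosSemidef),
      star v ⬝ᵥ (A *ᵥ v)
        = ((∑ i, hA.1.eigenvalues i * Complex.normSq (wvec hA.1 v i) : ℝ) : ℂ) := by
    intro A hA
    have e := quad_cfc hA.1 (fun x => x) v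
    rwa [cfc_id' ℝ A hA.1.isSelfAdjoint] at e
  have hsplitv : ∀ u : Fin n → ℂ, (star u ⬝ᵥ (M *ᵥ u)).re
      = c * (star u ⬝ᵥ (S *ᵥ u)).re + (1 - c) * (star u ⬝ᵥ (T *ᵥ u)).re := by
    intro u
    rw [hMdef, add_mulVec, smul_mulVec, smul_mulVec, dotProduct_add,
      dotProduct_smul, dotProduct_smul, Complex.real_smul, Complex.real_smul,
      Complex.add_re, Complex.re_ofReal_mul, Complex.re_ofReal_mul]
  have hP : c * ∑ i, lS i * aS i + (1 - c) * ∑ i, lT i * aT i = ∑ i, lM i * aM i := by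
    have e := hsplitv v
    rw [hquadA hS, hquadA hT, hquadA hM] at e
    simpa using e.symm
  -- (R3) resolvent inequality
  have hR : ∀ t : ℝ, 0 < t →
      ∑ i, aM i / (lM i + t) ≤ c * ∑ i, aS i / (lS i + t) + (1 - c) * ∑ i, aT i / (lT i + t) := by
    intro t ht
    set u : Fin n → ℂ := (hM.1.eigenvectorUnitary : Matrix (Fin n) (Fin n) ℂ) *ᵥ
      (fun i => wvec hM.1 v i * ((hM.1.eigenvalues i + t : ℝ) : ℂ)⁻¹) with hu
    have hMeq := sum_resolvent_eq hM v ht hu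
    have hSle := sum_resolvent_le hS u v ht
    have hTle := sum_resolvent_le hT u v ht
    have hsp := hsplitv u
    have h1 := mul_le_mul_of_nonneg_left hSle hc0
    have h2 := mul_le_mul_of_nonneg_left hTle (by linarith : (0:ℝ) ≤ 1 - c)
    rw [← hMeq]
    nlinarith [h1, h2, hsp]
  -- integral representations
  have hintA : ∀ (l a : Fin n → ℝ), (∀ i, 0 ≤ l i) →
      (∀ i, IntegrableOn (fun t => a i * kfun (l i) t) (Ioi (0:ℝ))) := by
    intro l a hl i
    exact ((kfun_integral (hl i)).2).const_mul _
  have hF : ∀ (l a : Fin n → ℝ), (∀ i, 0 ≤ l i) →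
      ∑ i, (l i * Real.log (l i)) * a i
        = ∫ t in Ioi (0:ℝ), ∑ i, a i * kfun (l i) t := by
    intro l a hl
    rw [integral_finset_sum _ (fun i _ => hintA l a hl i)]
    refine Finset.sum_congr rfl fun i _ => ?_
    rw [integral_const_mul, (kfun_integral (hl i)).1]
    ring
  have hgS := hintA lS aS hlS
  have hgT := hintA lT aT hlT
  have hgM := hintA lM aM hlM
  have hIS : IntegrableOn (fun t => ∑ i, aS i * kfun (lS i) t) (Ioi (0:ℝ)) :=
    integrable_finset_sum _ (fun i _ => hgS i)
  have hIT : IntegrableOn (fun t => ∑ i, aT i * kfun (lT i) t) (Ioi (0:ℝ)) :=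
    integrable_finset_sum _ (fun i _ => hgT i)
  have hIM : IntegrableOn (fun t => ∑ i, aM i * kfun (lM i) t) (Ioi (0:ℝ)) :=
    integrable_finset_sum _ (fun i _ => hgM i)
  rw [← sub_nonneg]
  have hrw : c * ∑ i, (lS i * Real.log (lS i)) * aS i
        + (1 - c) * ∑ i, (lT i * Real.log (lT i)) * aT i
        - ∑ i, (lM i * Real.log (lM i)) * aM i
      = ∫ t in Ioi (0:ℝ), (c * ∑ i, aS i * kfun (lS i) t
          + (1 - c) * ∑ i, aT i * kfun (lT i) t - ∑ i, aM i * kfun (lM i) t) := by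
    have hST : Integrable (fun t => c * (∑ i, aS i * kfun (lS i) t)
        + (1 - c) * (∑ i, aT i * kfun (lT i) t)) (volume.restrict (Ioi 0)) :=
      (hIS.const_mul c).add (hIT.const_mul (1-c))
    rw [hF lS aS hlS, hF lT aT hlT, hF lM aM hlM,
      integral_sub hST hIM,
      integral_add (hIS.const_mul c) (hIT.const_mul (1-c)),
      integral_const_mul, integral_const_mul]
  rw [hrw]
  apply setIntegral_nonneg measurableSet_Ioi
  intro t ht
  rw [mem_Ioi] at ht
  rw [g_split lS aS hlS ht, g_split lT aT hlT ht, g_split lM aM hlM ht]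
  have key : c * ((∑ i, aS i * lS i) * (1+t)⁻¹ - (∑ i, aS i) + t * (∑ i, aS i / (lS i + t)))
      + (1 - c) * ((∑ i, aT i * lT i) * (1+t)⁻¹ - (∑ i, aT i) + t * (∑ i, aT i / (lT i + t)))
      - ((∑ i, aM i * lM i) * (1+t)⁻¹ - (∑ i, aM i) + t * (∑ i, aM i / (lM i + t)))
      = t * ((c * ∑ i, aS i / (lS i + t) + (1 - c) * ∑ i, aT i / (lT i + t))
          - ∑ i, aM i / (lM i + t)) := by
    have hP' : c * ∑ i, aS i * lS i + (1 - c) * ∑ i, aT i * lT i = ∑ i, aM i * lM i := by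
      simpa [mul_comm] using hP
    linear_combination (1+t)⁻¹ * hP' - c * hNS - (1 - c) * hNT
  rw [key]
  exact mul_nonneg ht.le (sub_nonneg.mpr (hR t ht))

lemma herm_smul {n : ℕ} (r : ℝ) {B : Matrix (Fin n) (Fin n) ℂ} (hB : B.IsHermitian) :
    (r • B).IsHermitian := by
  show _ = _
  rw [conjTranspose_smul, star_trivial, hB.eq]

lemma herm_cfc {n : ℕ} (f : ℝ → ℝ) (A : Matrix (Fin n) (Fin n) ℂ) :
    (cfc f A).IsHermitian := by
  have h := cfc_predicate (R := ℝ) (p := _root_.IsSelfAdjoint) f A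
  rwa [_root_.IsSelfAdjoint, star_eq_conjTranspose] at h

/-- The function `f x = x * log x` (with `f 0 = 0`) is operator convex on `[0, ∞)`:
for positive semidefinite matrices `S`, `T` and `0 ≤ c ≤ 1`,
`f (c • S + (1 - c) • T) ≤ c • f S + (1 - c) • f T` in the Loewner order. -/
theorem xLogX_operator_convex (n : ℕ) (S T : Matrix (Fin n) (Fin n) ℂ)
    (hS : S.PosSemidef) (hT : T.PosSemidef) (c : ℝ) (hc0 : 0 ≤ c) (hc1 : c ≤ 1) :
    (c • cfc (fun x : ℝ => x * Real.log x) S + (1 - c) • cfc (fun x : ℝ => x * Real.log x) T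
      - cfc (fun x : ℝ => x * Real.log x) (c • S + (1 - c) • T)).PosSemidef := by
  have hM : (c • S + (1 - c) • T).PosSemidef := psd_combo hS hT hc0 hc1
  rw [posSemidef_iff_dotProduct_mulVec]
  constructor
  · exact ((herm_smul c (herm_cfc _ S)).add (herm_smul (1-c) (herm_cfc _ T))).sub
      (herm_cfc _ _)
  · intro x
    rw [sub_mulVec, add_mulVec, smul_mulVec, smul_mulVec, dotProduct_sub,
      dotProduct_add, dotProduct_smul, dotProduct_smul, Complex.real_smul, Complex.real_smul,
      quad_cfc hS.1 _ x, quad_cfc hT.1 _ x, quad_cfc hM.1 _ x, ← Complex.ofReal_mul,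
      ← Complex.ofReal_mul, ← Complex.ofReal_add, ← Complex.ofReal_sub]
    refine Complex.zero_le_real.mpr ?_
    have key := key_real hS hT hc0 hc1 hM x
    linarith [key]
end

section
/- For 0 < s < 1, the function f(t) = -tˢ is operator convex on [0,∞): for positive semidefinite n×n matrices S, T and 0 ≤ c ≤ 1, -(cS+(1-c)T)ˢ ≤ -c·Sˢ - (1-c)·Tˢ in the Loewner order (equivalently, t ↦ tˢ is operator concave). -/
open Matrix ComplexOrder

variable {n : ℕ}

namespace OpConcAux

/-- Any real function is continuous on the (finite) real spectrum of a matrix. -/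
lemma ctsOn (f : ℝ → ℝ) (A : Matrix (Fin n) (Fin n) ℂ) :
    ContinuousOn f (spectrum ℝ A) :=
  Matrix.finite_real_spectrum.continuousOn f

lemma spectrum_nonneg_of_psd {A : Matrix (Fin n) (Fin n) ℂ} (hA : A.PosSemidef) :
    ∀ x ∈ spectrum ℝ A, 0 ≤ x := by
  intro x hx
  rw [hA.1.spectrum_real_eq_range_eigenvalues] at hx
  obtain ⟨i, rfl⟩ := hx
  exact hA.eigenvalues_nonneg i

lemma spectrum_pos_of_posdef {A : Matrix (Fin n) (Fin n) ℂ} (hA : A.PosDef) :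
    ∀ x ∈ spectrum ℝ A, 0 < x := by
  intro x hx
  rw [hA.isHermitian.spectrum_real_eq_range_eigenvalues] at hx
  obtain ⟨i, rfl⟩ := hx
  exact hA.eigenvalues_pos i

/-- `cfc` of a function nonnegative on the spectrum is positive semidefinite. -/
lemma cfc_posSemidef {A : Matrix (Fin n) (Fin n) ℂ} (hA : A.IsHermitian)
    {f : ℝ → ℝ} (hf : ∀ x ∈ spectrum ℝ A, 0 ≤ f x) :
    (cfc f A).PosSemidef := by
  rw [hA.cfc_eq, Matrix.IsHermitian.cfc]
  rw [Unitary.conjStarAlgAut_apply, Matrix.star_eq_conjTranspose]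
  exact Matrix.PosSemidef.mul_mul_conjTranspose_same
    (Matrix.PosSemidef.diagonal (fun i => by
      simpa using Complex.zero_le_real.mpr
        (hf _ (hA.eigenvalues_mem_spectrum_real i)))) _

lemma posSemidef_smul {A : Matrix (Fin n) (Fin n) ℂ} (hA : A.PosSemidef) {r : ℝ}
    (hr : 0 ≤ r) : (r • A).PosSemidef := by
  refine PosSemidef.of_dotProduct_mulVec_nonneg ?_ ?_
  · show _ = _
    rw [Matrix.conjTranspose_smul, hA.1.eq]
    simp
  · intro x
    rw [Matrix.smul_mulVec, dotProduct_smul]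
    exact smul_nonneg (by exact_mod_cast hr) (hA.dotProduct_mulVec_nonneg x)


/-- scalar convexity of the inverse -/
lemma scalar_ineq {c z : ℝ} (hc0 : 0 ≤ c) (hc1 : c ≤ 1) (hz : 0 < z) :
    0 ≤ c + (1 - c) * z⁻¹ - (c + (1 - c) * z)⁻¹ := by
  have hzz : z * z⁻¹ = 1 := mul_inv_cancel₀ hz.ne'
  have hzi : 0 < z⁻¹ := inv_pos.2 hz
  have hw : 0 < c + (1 - c) * z := by nlinarith
  have hww : (c + (1 - c) * z) * (c + (1 - c) * z)⁻¹ = 1 := mul_inv_cancel₀ hw.ne'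
  have hwi : 0 < (c + (1 - c) * z)⁻¹ := inv_pos.2 hw
  have h2 : 0 ≤ z + z⁻¹ - 2 := by
    have : z + z⁻¹ - 2 = z⁻¹ * (z - 1) ^ 2 := by field_simp; ring
    rw [this]; positivity
  have h3 : (1 - c) ^ 2 * (z * z⁻¹) = (1 - c) ^ 2 := by rw [hzz]; ring
  have key : (1:ℝ) ≤ (c + (1 - c) * z) * (c + (1 - c) * z⁻¹) := by
    nlinarith [mul_nonneg (mul_nonneg hc0 (sub_nonneg.2 hc1)) h2, h3]
  nlinarith [mul_le_mul_of_nonneg_left key hwi.le, hww]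

lemma cfc_eq_one {A : Matrix (Fin n) (Fin n) ℂ} (hA : A.IsHermitian) {f : ℝ → ℝ}
    (h : ∀ x ∈ spectrum ℝ A, f x = 1) : cfc f A = 1 := by
  have : cfc f A = cfc (fun _ : ℝ => (1:ℝ)) A := cfc_congr h
  rw [this]
  exact cfc_const_one ℝ A hA

lemma cfc_mul3 {A : Matrix (Fin n) (Fin n) ℂ} (hA : A.IsHermitian) (f g h : ℝ → ℝ) :
    cfc f A * cfc g A * cfc h A = cfc (fun t => f t * g t * h t) A := by
  rw [← cfc_mul f g A (ctsOn f A) (ctsOn g A),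
    ← cfc_mul (fun x => f x * g x) h A ((ctsOn f A).mul (ctsOn g A)) (ctsOn h A)]

lemma inv_eq_cfc {A : Matrix (Fin n) (Fin n) ℂ} (hA : A.IsHermitian) {f g : ℝ → ℝ}
    (h : ∀ x ∈ spectrum ℝ A, g x * f x = 1) : (cfc f A)⁻¹ = cfc g A :=
  Matrix.inv_eq_left_inv (by
    rw [← cfc_mul g f A (ctsOn g A) (ctsOn f A)]
    exact cfc_eq_one hA h)

lemma smul_one_posDef {l : ℝ} (hl : 0 < l) :
    ((l • 1 : Matrix (Fin n) (Fin n) ℂ)).PosDef := by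
  refine PosDef.of_dotProduct_mulVec_pos ?_ ?_
  · show _ = _
    rw [Matrix.conjTranspose_smul, Matrix.conjTranspose_one]
    simp
  · intro v hv
    rw [Matrix.smul_mulVec, Matrix.one_mulVec, dotProduct_smul]
    rw [Complex.real_smul]
    exact mul_pos (by exact_mod_cast hl) (Matrix.dotProduct_star_self_pos_iff.2 hv)

lemma posDef_conj {B X Y : Matrix (Fin n) (Fin n) ℂ} (hB : B.PosDef) (hX : X.IsHermitian)
    (hYX : Y * X = 1) : (X * B * X).PosDef := by
  have hXBX : X * B * X = Xᴴ * B * X := by rw [hX.eq]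
  rw [hXBX]
  refine PosDef.of_dotProduct_mulVec_pos ?_ ?_
  · exact Matrix.isHermitian_conjTranspose_mul_mul X hB.1
  · intro v hv
    have hXv : X *ᵥ v ≠ 0 := by
      intro h
      apply hv
      have : Y *ᵥ (X *ᵥ v) = v := by rw [Matrix.mulVec_mulVec, hYX, Matrix.one_mulVec]
      rw [← this, h, Matrix.mulVec_zero]
    simpa only [Matrix.star_mulVec, Matrix.dotProduct_mulVec, Matrix.vecMul_vecMul]
      using hB.dotProduct_mulVec_pos hXv


section BC

variable {S T : Matrix (Fin n) (Fin n) ℂ} {c l : ℝ}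

/-- Operator concavity of `t ↦ t / (t + l)`. -/
lemma gl_gap_posSemidef (hS : S.PosSemidef) (hT : T.PosSemidef)
    (hc0 : 0 ≤ c) (hc1 : c ≤ 1) (hl : 0 < l) :
    (cfc (fun t : ℝ => t / (t + l)) (c • S + (1 - c) • T)
      - (c • cfc (fun t : ℝ => t / (t + l)) S
        + (1 - c) • cfc (fun t : ℝ => t / (t + l)) T)).PosSemidef := by
  have hc1' : 0 ≤ 1 - c := by linarith
  have hM : (c • S + (1 - c) • T).PosSemidef :=
    (posSemidef_smul hS hc0).add (posSemidef_smul hT hc1')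
  set M := c • S + (1 - c) • T with hMdef
  have hspS := spectrum_nonneg_of_psd hS
  -- the square root of `S + l•1` and its inverse
  have hsq : ∀ t : ℝ, 0 ≤ t → Real.sqrt (t + l) * Real.sqrt (t + l) = t + l := fun t ht =>
    Real.mul_self_sqrt (by linarith)
  have hy0 : ∀ t : ℝ, 0 ≤ t → Real.sqrt (t + l) ≠ 0 := fun t ht =>
    (Real.sqrt_pos.2 (by linarith)).ne'
  set X := cfc (fun t : ℝ => (Real.sqrt (t + l))⁻¹) S with hXdef
  set Y := cfc (fun t : ℝ => Real.sqrt (t + l)) S with hYdef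
  have hX : X.IsHermitian := cfc_predicate _ S
  have hXY : X * Y = 1 := by
    have h1 : cfc (fun t : ℝ => (Real.sqrt (t + l))⁻¹ * Real.sqrt (t + l)) S = X * Y :=
      cfc_mul _ _ S (ctsOn _ S) (ctsOn _ S)
    rw [← h1]
    exact cfc_eq_one hS.1 fun t ht => inv_mul_cancel₀ (hy0 t (hspS t ht))
  have hYX : Y * X = 1 := by
    have h1 : cfc (fun t : ℝ => Real.sqrt (t + l) * (Real.sqrt (t + l))⁻¹) S = Y * X :=
      cfc_mul _ _ S (ctsOn _ S) (ctsOn _ S)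
    rw [← h1]
    exact cfc_eq_one hS.1 fun t ht => mul_inv_cancel₀ (hy0 t (hspS t ht))
  have hYinv : Y⁻¹ = X := Matrix.inv_eq_left_inv hXY
  -- `A + l•1` as a cfc
  have addl : ∀ (A : Matrix (Fin n) (Fin n) ℂ), A.IsHermitian →
      A + l • 1 = cfc (fun t : ℝ => t + l) A := by
    intro A hA
    have h1 : cfc (fun t : ℝ => t + l) A = cfc (fun t : ℝ => t) A + algebraMap ℝ _ l :=
      cfc_add_const l (fun t : ℝ => t) A (ctsOn _ A) hA
    rw [h1, cfc_id' ℝ A hA.isSelfAdjoint, Algebra.algebraMap_eq_smul_one]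
  have hXSX : X * (S + l • 1) * X = 1 := by
    rw [addl S hS.1, hXdef, cfc_mul3 hS.1]
    refine cfc_eq_one hS.1 fun t ht => ?_
    have h0 : 0 ≤ t := hspS t ht
    have hyy := hsq t h0
    have hy' := hy0 t h0
    field_simp
    nlinarith [hyy]
  -- posdef matrices
  have hTl : (T + l • 1).PosDef := Matrix.PosDef.posSemidef_add hT (smul_one_posDef hl)
  set Z := X * (T + l • 1) * X with hZdef
  have hZ : Z.PosDef := posDef_conj hTl hX hYX
  have hspZ := spectrum_pos_of_posdef hZ
  set ZI := cfc (fun z : ℝ => z⁻¹) Z with hZIdef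
  have hw_pos : ∀ z ∈ spectrum ℝ Z, 0 < c + (1 - c) * z := by
    intro z hz
    have hz' := hspZ z hz
    rcases eq_or_lt_of_le hc1 with h | h
    · subst h; norm_num
    · nlinarith [mul_pos (show (0:ℝ) < 1 - c by linarith) hz']
  -- inverse identities
  have hZinv : Z⁻¹ = ZI := by
    refine Matrix.inv_eq_left_inv ?_
    have h1 : cfc (fun z : ℝ => z⁻¹ * z) Z = ZI * cfc (fun z : ℝ => z) Z :=
      cfc_mul _ _ Z (ctsOn _ Z) (ctsOn _ Z)
    rw [cfc_id' ℝ Z hZ.1.isSelfAdjoint] at h1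
    rw [← h1]
    exact cfc_eq_one hZ.1 fun z hz => inv_mul_cancel₀ (hspZ z hz).ne'
  have sandwich : ∀ (A : Matrix (Fin n) (Fin n) ℂ), Y * (X * A * X) * Y = A := by
    intro A
    calc Y * (X * A * X) * Y = (Y * X) * A * (X * Y) := by noncomm_ring
    _ = A := by rw [hYX, hXY, one_mul, mul_one]
  have hTlinv : (T + l • 1)⁻¹ = X * ZI * X := by
    rw [show T + l • 1 = Y * Z * Y from (sandwich (T + l • 1)).symm,
      Matrix.mul_inv_rev, Matrix.mul_inv_rev, hYinv, hZinv, ← mul_assoc]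
  -- the W matrix
  have hMl : M + l • 1 = c • (S + l • 1) + (1 - c) • (T + l • 1) := by
    rw [hMdef]; module
  have conj2 : ∀ (P Q : Matrix (Fin n) (Fin n) ℂ) (a b : ℝ),
      X * (a • P + b • Q) * X = a • (X * P * X) + b • (X * Q * X) := by
    intro P Q a b
    simp only [mul_add, add_mul, mul_smul_comm, smul_mul_assoc]
  have hcfcw : cfc (fun z : ℝ => c + (1 - c) * z) Z
      = c • (1 : Matrix (Fin n) (Fin n) ℂ) + (1 - c) • Z := by
    have h1 : cfc (fun z : ℝ => c + (1 - c) * z) Z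
        = algebraMap ℝ _ c + cfc (fun z : ℝ => (1 - c) * z) Z :=
      cfc_const_add c (fun z : ℝ => (1 - c) * z) Z (ctsOn _ Z) hZ.1
    have h2 : cfc (fun z : ℝ => (1 - c) * z) Z = (1 - c) • cfc (fun z : ℝ => z) Z :=
      cfc_const_mul (1 - c) (fun z : ℝ => z) Z (ctsOn _ Z)
    rw [h1, h2, cfc_id' ℝ Z hZ.1.isSelfAdjoint, Algebra.algebraMap_eq_smul_one]
  have hW : X * (M + l • 1) * X = cfc (fun z : ℝ => c + (1 - c) * z) Z := by
    rw [hMl, conj2, hXSX, hcfcw, ← hZdef]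
  have hwinv : (cfc (fun z : ℝ => c + (1 - c) * z) Z)⁻¹
      = cfc (fun z : ℝ => (c + (1 - c) * z)⁻¹) Z :=
    inv_eq_cfc hZ.1 fun z hz => inv_mul_cancel₀ (hw_pos z hz).ne'
  have hMlinv : (M + l • 1)⁻¹ = X * cfc (fun z : ℝ => (c + (1 - c) * z)⁻¹) Z * X := by
    rw [show M + l • 1 = Y * cfc (fun z : ℝ => c + (1 - c) * z) Z * Y by
        rw [← hW]; exact (sandwich (M + l • 1)).symm,
      Matrix.mul_inv_rev, Matrix.mul_inv_rev, hYinv, hwinv, ← mul_assoc]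
  -- cfc of t/(t+l)
  have glA : ∀ (A : Matrix (Fin n) (Fin n) ℂ), A.PosSemidef →
      cfc (fun t : ℝ => t / (t + l)) A = 1 - l • (A + l • 1)⁻¹ := by
    intro A hA
    have hinv : cfc (fun t : ℝ => (t + l)⁻¹) A = (A + l • 1)⁻¹ := by
      rw [addl A hA.1]
      exact (inv_eq_cfc hA.1 fun t ht => inv_mul_cancel₀
        (by have := spectrum_nonneg_of_psd hA t ht; positivity)).symm
    have h1 : cfc (fun t : ℝ => t / (t + l)) A
        = cfc (fun t : ℝ => 1 - l * (t + l)⁻¹) A := by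
      refine cfc_congr fun t ht => ?_
      have h0 : 0 ≤ t := spectrum_nonneg_of_psd hA t ht
      have : t + l ≠ 0 := by positivity
      field_simp
      ring
    have h2 : cfc (fun t : ℝ => 1 - l * (t + l)⁻¹) A
        = cfc (fun _ : ℝ => (1:ℝ)) A - cfc (fun t : ℝ => l * (t + l)⁻¹) A :=
      cfc_sub (fun _ : ℝ => (1:ℝ)) (fun t : ℝ => l * (t + l)⁻¹) A
        continuousOn_const (ctsOn _ A)
    have h3 : cfc (fun t : ℝ => l * (t + l)⁻¹) A = l • cfc (fun t : ℝ => (t + l)⁻¹) A :=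
      cfc_const_mul l (fun t : ℝ => (t + l)⁻¹) A (ctsOn _ A)
    have h4 : cfc (fun _ : ℝ => (1:ℝ)) A = 1 := cfc_eq_one hA.1 fun _ _ => rfl
    rw [h1, h2, h3, h4, hinv]
  -- the inner cfc gap
  set Xi := cfc (fun z : ℝ => c + (1 - c) * z⁻¹ - (c + (1 - c) * z)⁻¹) Z with hXidef
  have hXi_decomp : Xi = c • (1 : Matrix (Fin n) (Fin n) ℂ) + (1 - c) • ZI
      - cfc (fun z : ℝ => (c + (1 - c) * z)⁻¹) Z := by
    have h1 : cfc (fun z : ℝ => c + (1 - c) * z⁻¹ - (c + (1 - c) * z)⁻¹) Z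
        = cfc (fun z : ℝ => c + (1 - c) * z⁻¹) Z
          - cfc (fun z : ℝ => (c + (1 - c) * z)⁻¹) Z :=
      cfc_sub (fun z : ℝ => c + (1 - c) * z⁻¹) (fun z : ℝ => (c + (1 - c) * z)⁻¹) Z
        (ctsOn _ Z) (ctsOn _ Z)
    have h2 : cfc (fun z : ℝ => c + (1 - c) * z⁻¹) Z
        = algebraMap ℝ _ c + cfc (fun z : ℝ => (1 - c) * z⁻¹) Z :=
      cfc_const_add c (fun z : ℝ => (1 - c) * z⁻¹) Z (ctsOn _ Z) hZ.1
    have h3 : cfc (fun z : ℝ => (1 - c) * z⁻¹) Z = (1 - c) • ZI :=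
      cfc_const_mul (1 - c) (fun z : ℝ => z⁻¹) Z (ctsOn _ Z)
    rw [hXidef, h1, h2, h3, Algebra.algebraMap_eq_smul_one]
  have hXi_psd : Xi.PosSemidef := by
    refine cfc_posSemidef hZ.1 fun z hz => ?_
    exact scalar_ineq hc0 hc1 (hspZ z hz)
  have hconj : (X * Xi * X).PosSemidef := by
    have := hXi_psd.mul_mul_conjTranspose_same X
    rwa [hX.eq] at this
  have hXiX : X * Xi * X
      = c • (X * X) + (1 - c) • (X * ZI * X)
        - X * cfc (fun z : ℝ => (c + (1 - c) * z)⁻¹) Z * X := by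
    rw [hXi_decomp]
    simp only [mul_sub, sub_mul, mul_add, add_mul, mul_smul_comm, smul_mul_assoc, mul_one,
      one_mul, mul_assoc]
  have hSinv : (S + l • 1)⁻¹ = X * X := by
    have h1 : S + l • 1 = Y * Y := by
      have := sandwich (S + l • 1)
      rw [hXSX, mul_one] at this
      exact this.symm
    rw [h1, Matrix.mul_inv_rev, hYinv]
  have key : cfc (fun t : ℝ => t / (t + l)) M
      - (c • cfc (fun t : ℝ => t / (t + l)) S
        + (1 - c) • cfc (fun t : ℝ => t / (t + l)) T)
      = l • (X * Xi * X) := by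
    rw [glA M hM, glA S hS, glA T hT, hMlinv, hTlinv, hSinv, hXiX]
    module
  rw [key]
  exact posSemidef_smul hconj hl.le

end BC


section Spectral

lemma re_dotProduct_cfc {A : Matrix (Fin n) (Fin n) ℂ} (hA : A.IsHermitian) (g : ℝ → ℝ)
    (v : Fin n → ℂ) :
    (dotProduct (star v) (cfc g A *ᵥ v)).re
      = ∑ j, g (hA.eigenvalues j) * Complex.normSq
          ((star (hA.eigenvectorUnitary : Matrix (Fin n) (Fin n) ℂ) *ᵥ v) j) := by
  rw [hA.cfc_eq, Matrix.IsHermitian.cfc, Unitary.conjStarAlgAut_apply]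
  set U := (hA.eigenvectorUnitary : Matrix (Fin n) (Fin n) ℂ) with hU
  set u := star U *ᵥ v with hu
  set d : Fin n → ℂ := RCLike.ofReal ∘ g ∘ hA.eigenvalues with hd
  have h0 : (U * Matrix.diagonal d * star U) *ᵥ v = U *ᵥ (Matrix.diagonal d *ᵥ u) := by
    rw [← Matrix.mulVec_mulVec, ← Matrix.mulVec_mulVec]
  rw [h0]
  have hstar : star u = star v ᵥ* U := by
    rw [hu, Matrix.star_mulVec, Matrix.star_eq_conjTranspose U,
      Matrix.conjTranspose_conjTranspose]
  have h1 : dotProduct (star v) (U *ᵥ (Matrix.diagonal d *ᵥ u))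
      = dotProduct (star u) (Matrix.diagonal d *ᵥ u) := by
    rw [Matrix.dotProduct_mulVec, ← hstar]
  rw [h1]
  have h2 : dotProduct (star u) (Matrix.diagonal d *ᵥ u)
      = ∑ j, star (u j) * (d j * u j) := by
    simp [dotProduct, Matrix.mulVec_diagonal]
  rw [h2, Complex.re_sum]
  refine Finset.sum_congr rfl fun j _ => ?_
  have hdj : d j = ((g (hA.eigenvalues j) : ℝ) : ℂ) := rfl
  rw [hdj]
  simp [Complex.mul_re, Complex.normSq_apply, Complex.conj_re, Complex.conj_im]
  ring

end Spectral



section ScalarIntegral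

open MeasureTheory Set

lemma integrableOn_F {s t : ℝ} (hs0 : 0 < s) (hs1 : s < 1) (ht : 0 ≤ t) :
    IntegrableOn (fun l : ℝ => l ^ (s - 1) * (t / (t + l))) (Ioi (0:ℝ)) := by
  rcases eq_or_lt_of_le ht with h | h
  · subst h
    simpa using (integrableOn_zero :
      IntegrableOn (fun _ : ℝ => (0:ℝ)) (Ioi (0:ℝ)) volume)
  have hcont : ContinuousOn (fun l : ℝ => l ^ (s - 1) * (t / (t + l))) (Ioi 0) := by
    refine ContinuousOn.mul (continuousOn_id.rpow_const fun x hx => Or.inl (ne_of_gt hx)) ?_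
    refine ContinuousOn.div continuousOn_const ((continuous_const.add continuous_id).continuousOn)
      fun x hx => ?_
    have : (0:ℝ) < x := hx
    positivity
  have h1 : IntegrableOn (fun l : ℝ => l ^ (s - 1) * (t / (t + l))) (Ioc (0:ℝ) 1) := by
    have hg : IntegrableOn (fun l : ℝ => l ^ (s - 1)) (Ioc (0:ℝ) 1) := by
      have := intervalIntegral.intervalIntegrable_rpow' (a := 0) (b := 1) (r := s - 1) (by linarith)
      rwa [intervalIntegrable_iff_integrableOn_Ioc_of_le zero_le_one] at this
    refine Integrable.mono' hg
      ((hcont.mono Ioc_subset_Ioi_self).aestronglyMeasurable measurableSet_Ioc) ?_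
    filter_upwards [ae_restrict_mem measurableSet_Ioc] with l hl
    obtain ⟨hl0, _⟩ := hl
    have hb1 : (0:ℝ) < t + l := by linarith
    have h3 : t / (t + l) ≤ 1 := by rw [div_le_one hb1]; linarith
    rw [Real.norm_eq_abs, abs_of_nonneg (by positivity)]
    calc l ^ (s - 1) * (t / (t + l)) ≤ l ^ (s - 1) * 1 := by
          exact mul_le_mul_of_nonneg_left h3 (Real.rpow_nonneg hl0.le _)
    _ = l ^ (s - 1) := mul_one _
  have h2 : IntegrableOn (fun l : ℝ => l ^ (s - 1) * (t / (t + l))) (Ioi (1:ℝ)) := by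
    have hg : IntegrableOn (fun l : ℝ => t * l ^ (s - 2)) (Ioi (1:ℝ)) :=
      (integrableOn_Ioi_rpow_of_lt (by linarith) one_pos).const_mul t
    refine Integrable.mono' hg
      ((hcont.mono (Ioi_subset_Ioi zero_le_one)).aestronglyMeasurable measurableSet_Ioi) ?_
    filter_upwards [ae_restrict_mem measurableSet_Ioi] with l hl
    have hl0 : (0:ℝ) < l := lt_trans one_pos hl
    have hb1 : (0:ℝ) < t + l := by linarith
    have hdiv : t / (t + l) ≤ t / l := by
      rw [div_le_div_iff₀ hb1 hl0]
      nlinarith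
    have heq : l ^ (s - 1) * (t / l) = t * l ^ (s - 2) := by
      have hstep : l ^ (s - 1) = l ^ (s - 2) * l := by
        rw [← Real.rpow_add_one hl0.ne' (s - 2)]
        congr 1
        ring
      rw [hstep]
      field_simp
    rw [Real.norm_eq_abs, abs_of_nonneg (by positivity)]
    calc l ^ (s - 1) * (t / (t + l)) ≤ l ^ (s - 1) * (t / l) := by
          exact mul_le_mul_of_nonneg_left hdiv (Real.rpow_nonneg hl0.le _)
    _ = t * l ^ (s - 2) := heq
  have := h1.union h2
  rwa [Ioc_union_Ioi_eq_Ioi zero_le_one] at this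

lemma integral_F {s t : ℝ} (ht : 0 < t) :
    ∫ l in Ioi (0:ℝ), l ^ (s - 1) * (t / (t + l))
      = t ^ s * ∫ l in Ioi (0:ℝ), l ^ (s - 1) * (1 / (1 + l)) := by
  have h := integral_comp_mul_left_Ioi (g := fun l : ℝ => l ^ (s - 1) * (t / (t + l))) 0 ht
  rw [mul_zero] at h
  have h2 : ∫ x in Ioi (0:ℝ), (t * x) ^ (s - 1) * (t / (t + t * x))
      = ∫ x in Ioi (0:ℝ), t ^ (s - 1) * (x ^ (s - 1) * (1 / (1 + x))) := by
    refine setIntegral_congr_fun measurableSet_Ioi fun x hx => ?_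
    have hx0 : (0:ℝ) < x := hx
    have h1x : (0:ℝ) < 1 + x := by linarith
    rw [Real.mul_rpow ht.le hx0.le, show t + t * x = t * (1 + x) by ring,
      show t / (t * (1 + x)) = 1 / (1 + x) by
        rw [eq_div_iff h1x.ne']; field_simp]
    ring
  rw [h2, MeasureTheory.integral_const_mul, smul_eq_mul] at h
  have h4 : t * (t ^ (s - 1) * ∫ l in Ioi (0:ℝ), l ^ (s - 1) * (1 / (1 + l)))
      = ∫ l in Ioi (0:ℝ), l ^ (s - 1) * (t / (t + l)) := by
    rw [h, ← mul_assoc, mul_inv_cancel₀ ht.ne', one_mul]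
  have htt : t * t ^ (s - 1) = t ^ s := by
    calc t * t ^ (s - 1) = t ^ (1:ℝ) * t ^ (s - 1) := by rw [Real.rpow_one]
    _ = t ^ (1 + (s - 1)) := (Real.rpow_add ht 1 (s - 1)).symm
    _ = t ^ s := by congr 1; ring
  rw [← h4, ← mul_assoc, htt]

lemma C_pos {s : ℝ} (hs0 : 0 < s) (hs1 : s < 1) :
    0 < ∫ l in Ioi (0:ℝ), l ^ (s - 1) * (1 / (1 + l)) := by
  rw [setIntegral_pos_iff_support_of_nonneg_ae ?pos ?int]
  case pos =>
    filter_upwards [ae_restrict_mem measurableSet_Ioi] with l hl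
    have : (0:ℝ) < l := hl
    positivity
  case int => exact integrableOn_F hs0 hs1 zero_le_one
  have hsub : Ioi (0:ℝ) ⊆ Function.support (fun l : ℝ => l ^ (s - 1) * (1 / (1 + l))) ∩ Ioi 0 := by
    intro l hl
    have hl0 : (0:ℝ) < l := hl
    refine ⟨?_, hl⟩
    simp only [Function.mem_support]
    positivity
  calc (0:ENNReal) < volume (Ioi (0:ℝ)) := by rw [Real.volume_Ioi]; exact ENNReal.zero_lt_top
  _ ≤ volume _ := measure_mono hsub

end ScalarIntegral


section Assembly

open MeasureTheory Set

lemma isHermitian_smul_real {A : Matrix (Fin n) (Fin n) ℂ} (hA : A.IsHermitian) (r : ℝ) :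
    (r • A).IsHermitian := by
  show _ = _
  rw [Matrix.conjTranspose_smul, hA.eq]
  simp

lemma posSemidef_of_re_nonneg {D : Matrix (Fin n) (Fin n) ℂ} (hD : D.IsHermitian)
    (h : ∀ v : Fin n → ℂ, 0 ≤ (dotProduct (star v) (D *ᵥ v)).re) : D.PosSemidef := by
  refine PosSemidef.of_dotProduct_mulVec_nonneg hD fun v => ?_
  have hself : star (dotProduct (star v) (D *ᵥ v))
      = dotProduct (star v) (D *ᵥ v) := by
    calc star (dotProduct (star v) (D *ᵥ v))
        = dotProduct (star (D *ᵥ v)) v := by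
          rw [← Matrix.star_dotProduct_star, star_star]
    _ = dotProduct (star v ᵥ* Dᴴ) v := by rw [Matrix.star_mulVec]
    _ = dotProduct (star v) (D *ᵥ v) := by
          rw [hD.eq, ← Matrix.dotProduct_mulVec]
  rw [RCLike.nonneg_iff]
  constructor
  · exact h v
  · have := congrArg Complex.im hself
    simp only [Complex.star_def, Complex.conj_im] at this
    have him : (dotProduct (star v) (D *ᵥ v)).im = 0 := by linarith
    simpa using him

lemma re_expand (A B E : Matrix (Fin n) (Fin n) ℂ) (a b : ℝ) (v : Fin n → ℂ) :
    (dotProduct (star v) ((A - (a • B + b • E)) *ᵥ v)).re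
      = (dotProduct (star v) (A *ᵥ v)).re
        - (a * (dotProduct (star v) (B *ᵥ v)).re
          + b * (dotProduct (star v) (E *ᵥ v)).re) := by
  simp [Matrix.sub_mulVec, Matrix.add_mulVec, Matrix.smul_mulVec,
    dotProduct_sub, dotProduct_add, dotProduct_smul,
    Complex.real_smul]

lemma integrable_re_cfc {s : ℝ} (hs0 : 0 < s) (hs1 : s < 1)
    {A : Matrix (Fin n) (Fin n) ℂ} (hA : A.PosSemidef) (v : Fin n → ℂ) :
    IntegrableOn (fun l : ℝ =>
      (dotProduct (star v)
        (cfc (fun t : ℝ => l ^ (s - 1) * (t / (t + l))) A *ᵥ v)).re) (Ioi (0:ℝ)) := by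
  have hfun : (fun l : ℝ =>
      (dotProduct (star v)
        (cfc (fun t : ℝ => l ^ (s - 1) * (t / (t + l))) A *ᵥ v)).re)
      = fun l : ℝ => ∑ j, (l ^ (s - 1) * (hA.1.eigenvalues j / (hA.1.eigenvalues j + l)))
          * Complex.normSq
            ((star (hA.1.eigenvectorUnitary : Matrix (Fin n) (Fin n) ℂ) *ᵥ v) j) :=
    funext fun l => re_dotProduct_cfc hA.1 _ v
  rw [hfun]
  exact integrable_finset_sum _ fun j _ =>
    (integrableOn_F hs0 hs1 (hA.eigenvalues_nonneg j)).mul_const _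

lemma integral_re_cfc {s : ℝ} (hs0 : 0 < s) (hs1 : s < 1)
    {A : Matrix (Fin n) (Fin n) ℂ} (hA : A.PosSemidef) (v : Fin n → ℂ) :
    ∫ l in Ioi (0:ℝ), (dotProduct (star v)
        (cfc (fun t : ℝ => l ^ (s - 1) * (t / (t + l))) A *ᵥ v)).re
      = (∫ l in Ioi (0:ℝ), l ^ (s - 1) * (1 / (1 + l)))
        * (dotProduct (star v) (cfc (fun t : ℝ => t ^ s) A *ᵥ v)).re := by
  have hfun : (fun l : ℝ =>
      (dotProduct (star v)
        (cfc (fun t : ℝ => l ^ (s - 1) * (t / (t + l))) A *ᵥ v)).re)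
      = fun l : ℝ => ∑ j, (l ^ (s - 1) * (hA.1.eigenvalues j / (hA.1.eigenvalues j + l)))
          * Complex.normSq
            ((star (hA.1.eigenvectorUnitary : Matrix (Fin n) (Fin n) ℂ) *ᵥ v) j) :=
    funext fun l => re_dotProduct_cfc hA.1 _ v
  rw [hfun, integral_finset_sum _ (fun j _ =>
    (integrableOn_F hs0 hs1 (hA.eigenvalues_nonneg j)).mul_const _),
    re_dotProduct_cfc hA.1 (fun t : ℝ => t ^ s) v, Finset.mul_sum]
  refine Finset.sum_congr rfl fun j _ => ?_
  rw [MeasureTheory.integral_mul_const]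
  have hev : ∫ l in Ioi (0:ℝ), l ^ (s - 1) * (hA.1.eigenvalues j / (hA.1.eigenvalues j + l))
      = (hA.1.eigenvalues j) ^ s * ∫ l in Ioi (0:ℝ), l ^ (s - 1) * (1 / (1 + l)) := by
    rcases eq_or_lt_of_le (hA.eigenvalues_nonneg j) with h | h
    · rw [← h]
      simp [Real.zero_rpow hs0.ne']
    · exact integral_F h
  rw [hev]
  ring

end Assembly

end OpConcAux


open OpConcAux MeasureTheory Set in
/-- For `0 < s < 1`, the function `f t = -tˢ` is operator convex on `[0, ∞)`
(equivalently, `t ↦ tˢ` is operator concave): for positive semidefinite `S`, `T` and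
`0 ≤ c ≤ 1`, `(c • S + (1 - c) • T)ˢ ≥ c • Sˢ + (1 - c) • Tˢ` in the Loewner order. -/
theorem neg_rpow_operator_convex (n : ℕ) (s : ℝ) (hs0 : 0 < s) (hs1 : s < 1)
    (S T : Matrix (Fin n) (Fin n) ℂ)
    (hS : S.PosSemidef) (hT : T.PosSemidef) (c : ℝ) (hc0 : 0 ≤ c) (hc1 : c ≤ 1) :
    (cfc (fun x : ℝ => x ^ s) (c • S + (1 - c) • T)
      - (c • cfc (fun x : ℝ => x ^ s) S + (1 - c) • cfc (fun x : ℝ => x ^ s) T)).PosSemidef := by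
  have hc1' : 0 ≤ 1 - c := by linarith
  have hM : (c • S + (1 - c) • T).PosSemidef :=
    (posSemidef_smul hS hc0).add (posSemidef_smul hT hc1')
  have hCpos := C_pos hs0 hs1
  refine posSemidef_of_re_nonneg ?_ ?_
  · exact (cfc_predicate _ _ :
        (cfc (fun x : ℝ => x ^ s) (c • S + (1 - c) • T)).IsHermitian).sub
      ((isHermitian_smul_real (cfc_predicate _ _) c).add
        (isHermitian_smul_real (cfc_predicate _ _) (1 - c)))
  intro v
  rw [re_expand]
  -- notation for the three integrands
  set fM : ℝ → ℝ := fun l =>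
    (dotProduct (star v)
      (cfc (fun t : ℝ => l ^ (s - 1) * (t / (t + l))) (c • S + (1 - c) • T) *ᵥ v)).re with hfM
  set fS : ℝ → ℝ := fun l =>
    (dotProduct (star v)
      (cfc (fun t : ℝ => l ^ (s - 1) * (t / (t + l))) S *ᵥ v)).re with hfS
  set fT : ℝ → ℝ := fun l =>
    (dotProduct (star v)
      (cfc (fun t : ℝ => l ^ (s - 1) * (t / (t + l))) T *ᵥ v)).re with hfT
  have hintM : IntegrableOn fM (Ioi (0:ℝ)) := integrable_re_cfc hs0 hs1 hM v
  have hintS : IntegrableOn fS (Ioi (0:ℝ)) := integrable_re_cfc hs0 hs1 hS v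
  have hintT : IntegrableOn fT (Ioi (0:ℝ)) := integrable_re_cfc hs0 hs1 hT v
  have hIM := integral_re_cfc hs0 hs1 hM v
  have hIS := integral_re_cfc hs0 hs1 hS v
  have hIT := integral_re_cfc hs0 hs1 hT v
  -- pointwise positivity of the integrand
  have hEpsd : ∀ l ∈ Ioi (0:ℝ), 0 ≤ fM l - (c * fS l + (1 - c) * fT l) := by
    intro l hl
    have hl0 : (0:ℝ) < l := hl
    have hgap := gl_gap_posSemidef hS hT hc0 hc1 hl0
    have hsm : ∀ (A : Matrix (Fin n) (Fin n) ℂ),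
        cfc (fun t : ℝ => l ^ (s - 1) * (t / (t + l))) A
          = l ^ (s - 1) • cfc (fun t : ℝ => t / (t + l)) A :=
      fun A => cfc_const_mul _ _ A (ctsOn _ A)
    have hEeq : cfc (fun t : ℝ => l ^ (s - 1) * (t / (t + l))) (c • S + (1 - c) • T)
        - (c • cfc (fun t : ℝ => l ^ (s - 1) * (t / (t + l))) S
          + (1 - c) • cfc (fun t : ℝ => l ^ (s - 1) * (t / (t + l))) T)
        = l ^ (s - 1) • (cfc (fun t : ℝ => t / (t + l)) (c • S + (1 - c) • T)
          - (c • cfc (fun t : ℝ => t / (t + l)) S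
            + (1 - c) • cfc (fun t : ℝ => t / (t + l)) T)) := by
      rw [hsm, hsm, hsm]; module
    have hpsd := posSemidef_smul hgap (Real.rpow_nonneg hl0.le (s - 1))
    rw [← hEeq] at hpsd
    have h2 := hpsd.dotProduct_mulVec_nonneg v
    have h3 := (Complex.le_def.mp h2).1
    simp only [Complex.zero_re] at h3
    have h4 := re_expand (cfc (fun t : ℝ => l ^ (s - 1) * (t / (t + l))) (c • S + (1 - c) • T))
      (cfc (fun t : ℝ => l ^ (s - 1) * (t / (t + l))) S)
      (cfc (fun t : ℝ => l ^ (s - 1) * (t / (t + l))) T) c (1 - c) v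
    rw [h4] at h3
    exact h3
  have hcomb : 0 ≤ ∫ l in Ioi (0:ℝ), (fM l - (c * fS l + (1 - c) * fT l)) :=
    setIntegral_nonneg measurableSet_Ioi hEpsd
  have hint1 : IntegrableOn (fun l => c * fS l + (1 - c) * fT l) (Ioi (0:ℝ)) :=
    (hintS.const_mul c).add (hintT.const_mul (1 - c))
  have heval : ∫ l in Ioi (0:ℝ), (fM l - (c * fS l + (1 - c) * fT l))
      = (∫ l in Ioi (0:ℝ), l ^ (s - 1) * (1 / (1 + l)))
        * ((dotProduct (star v)
            (cfc (fun t : ℝ => t ^ s) (c • S + (1 - c) • T) *ᵥ v)).re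
          - (c * (dotProduct (star v) (cfc (fun t : ℝ => t ^ s) S *ᵥ v)).re
            + (1 - c) * (dotProduct (star v) (cfc (fun t : ℝ => t ^ s) T *ᵥ v)).re)) := by
    rw [integral_sub hintM hint1, integral_add (hintS.const_mul c) (hintT.const_mul (1 - c)),
      MeasureTheory.integral_const_mul, MeasureTheory.integral_const_mul, hIM, hIS, hIT]
    ring
  rw [heval] at hcomb
  nlinarith [hcomb, hCpos]
end
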